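/- arXiv:2007.11521 — 7 statements merged into one kernel-verified Lean document; each statement's English description precedes it below -/
import Mathlib

section
/- Let P and Q be probability measures on the real line with its Borel σ-field. The following four properties are equivalent: (i) there exist a σ-finite measure μ on ℝ and densities f = dP/dμ, g = dQ/dμ such that the ratio g/f is isotonic (non-decreasing) on the set {f + g > 0}; (ii) there exist a σ-finite measure μ and densities f = dP/dμ, g = dQ/dμ such that f(y)·g(x) ≤ f(x)·g(y) whenever x < y; (iii) for arbitrary Borel sets A, B ⊆ ℝ with A ≤ B element-wise (i.e. a ≤ b for all a ∈ A, b ∈ B), P(B)·Q(A) ≤ P(A)·Q(B); (iv) for all intervals A = (x,y] and B = (y,z] with x < y < z, P(B)·Q(A) ≤ P(A)·Q(B). -/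
open MeasureTheory Set Filter Metric
open scoped ENNReal Topology

namespace LRProof

lemma div_le_div_of_cross {a b c d : ℝ≥0∞} (hb : b ≠ ∞) (hd0 : d ≠ 0) (hd : d ≠ ∞)
    (hab : a ≤ b) (h : a * d ≤ b * c) : a / b ≤ c / d := by
  rcases eq_or_ne b 0 with rfl | hb0
  · have : a = 0 := le_antisymm hab zero_le
    simp [this]
  · rw [ENNReal.div_le_iff hb0 hb]
    have h1 : a ≤ c * b / d := by
      rw [ENNReal.le_div_iff_mul_le (Or.inl hd0) (Or.inl hd)]
      calc a * d ≤ b * c := h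
        _ = c * b := mul_comm _ _
    calc a ≤ c * b / d := h1
      _ = c / d * b := by rw [div_eq_mul_inv, div_eq_mul_inv, mul_right_comm]

lemma Ioc_comp {P Q : Measure ℝ} [IsFiniteMeasure P] [IsFiniteMeasure Q]
    (h4 : ∀ x y z : ℝ, x < y → y < z →
      P (Ioc y z) * Q (Ioc x y) ≤ P (Ioc x y) * Q (Ioc y z))
    {u1 v1 u2 v2 : ℝ} (h1 : u1 < v1) (h12 : v1 ≤ u2) (h2 : u2 < v2) :
    P (Ioc u2 v2) * Q (Ioc u1 v1) ≤ P (Ioc u1 v1) * Q (Ioc u2 v2) := by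
  rcases eq_or_lt_of_le h12 with rfl | hlt
  · exact h4 _ _ _ h1 h2
  · set pa := P (Ioc u1 v1); set pm := P (Ioc v1 u2); set pb := P (Ioc u2 v2)
    set qa := Q (Ioc u1 v1); set qm := Q (Ioc v1 u2); set qb := Q (Ioc u2 v2)
    have hPm : P (Ioc v1 v2) = pm + pb := by
      rw [← Ioc_union_Ioc_eq_Ioc hlt.le h2.le,
        measure_union (Ioc_disjoint_Ioc_of_le le_rfl) measurableSet_Ioc]
    have hQm : Q (Ioc v1 v2) = qm + qb := by
      rw [← Ioc_union_Ioc_eq_Ioc hlt.le h2.le,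
        measure_union (Ioc_disjoint_Ioc_of_le le_rfl) measurableSet_Ioc]
    have h4a : (pm + pb) * qa ≤ pa * (qm + qb) := by
      rw [← hPm, ← hQm]; exact h4 u1 v1 v2 h1 (hlt.trans h2)
    have h4b : pb * qm ≤ pm * qb := h4 v1 u2 v2 hlt h2
    rcases eq_or_ne (pm + pb) 0 with hz | hz
    · have hpb : pb = 0 := (add_eq_zero.mp hz).2
      simp [hpb]
    · have hfin : pm + pb ≠ ∞ := by rw [← hPm]; exact measure_ne_top _ _
      rw [← ENNReal.mul_le_mul_iff_left hz hfin]
      calc pb * qa * (pm + pb) = pb * ((pm + pb) * qa) := by ring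
        _ ≤ pb * (pa * (qm + qb)) := mul_le_mul_right h4a _
        _ = pa * (pb * qm) + pa * pb * qb := by ring
        _ ≤ pa * (pm * qb) + pa * pb * qb := by gcongr
        _ = pa * qb * (pm + pb) := by ring

lemma Icc_comp {P Q : Measure ℝ} [IsFiniteMeasure P] [IsFiniteMeasure Q]
    (h4 : ∀ x y z : ℝ, x < y → y < z →
      P (Ioc y z) * Q (Ioc x y) ≤ P (Ioc x y) * Q (Ioc y z))
    {a1 b1 a2 b2 : ℝ} (h1 : a1 ≤ b1) (h12 : b1 < a2) (h2 : a2 ≤ b2) :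
    P (Icc a2 b2) * Q (Icc a1 b1) ≤ P (Icc a1 b1) * Q (Icc a2 b2) := by
  set δ := a2 - b1 with hδ
  have hδ0 : 0 < δ := sub_pos.mpr h12
  have hseq : ∀ n : ℕ, 0 < δ * (1 / ((n : ℝ) + 1)) := fun n => by positivity
  have hone : ∀ n : ℕ, (1 : ℝ) / ((n : ℝ) + 1) ≤ 1 := by
    intro n
    rw [div_le_one (by positivity)]
    have : (0:ℝ) ≤ (n:ℝ) := Nat.cast_nonneg n
    linarith
  have hInter : ∀ (a b : ℝ), a ≤ b →
      (⋂ n : ℕ, Ioc (a - δ * (1 / ((n : ℝ) + 1))) b) = Icc a b := by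
    intro a b hab
    ext x
    simp only [mem_iInter, mem_Ioc, mem_Icc]
    constructor
    · intro h
      refine ⟨?_, (h 0).2⟩
      have ht : Tendsto (fun n : ℕ => a - δ * (1 / ((n : ℝ) + 1))) atTop (𝓝 a) := by
        have h2' := tendsto_one_div_add_atTop_nhds_zero_nat.const_mul δ
        simpa using (tendsto_const_nhds (x := a) (f := atTop)).sub h2'
      exact le_of_tendsto ht (Eventually.of_forall fun n => (h n).1.le)
    · intro h n
      exact ⟨by have := hseq n; linarith [h.1], h.2⟩
  have hmono : ∀ (a b : ℝ), Antitone (fun n : ℕ => Ioc (a - δ * (1 / ((n : ℝ) + 1))) b) := by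
    intro a b m n hmn
    apply Ioc_subset_Ioc_left
    have hcast : (m : ℝ) + 1 ≤ (n : ℝ) + 1 := by exact_mod_cast Nat.succ_le_succ hmn
    have h1d : (1:ℝ) / ((n:ℝ) + 1) ≤ 1 / ((m:ℝ) + 1) :=
      one_div_le_one_div_of_le (by positivity) hcast
    nlinarith
  have htend : ∀ (R : Measure ℝ), IsFiniteMeasure R → ∀ (a b : ℝ), a ≤ b →
      Tendsto (fun n : ℕ => R (Ioc (a - δ * (1 / ((n : ℝ) + 1))) b)) atTop (𝓝 (R (Icc a b))) := by
    intro R hR a b hab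
    have ht := tendsto_measure_iInter_atTop (μ := R)
      (s := fun n : ℕ => Ioc (a - δ * (1 / ((n : ℝ) + 1))) b)
      (fun n => measurableSet_Ioc.nullMeasurableSet) (hmono a b) ⟨0, measure_ne_top _ _⟩
    rw [hInter a b hab] at ht
    exact ht
  have hn : ∀ n : ℕ, P (Ioc (a2 - δ * (1 / ((n:ℝ)+1))) b2) * Q (Ioc (a1 - δ * (1 / ((n:ℝ)+1))) b1)
      ≤ P (Ioc (a1 - δ * (1 / ((n:ℝ)+1))) b1) * Q (Ioc (a2 - δ * (1 / ((n:ℝ)+1))) b2) := by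
    intro n
    refine Ioc_comp h4 ?_ ?_ ?_
    · have := hseq n; linarith
    · have h1n := hone n
      have hp := hseq n
      have hle : δ * (1 / ((n:ℝ)+1)) ≤ δ := by nlinarith
      have : δ = a2 - b1 := hδ
      linarith
    · have := hseq n; linarith
  exact le_of_tendsto_of_tendsto'
    (ENNReal.Tendsto.mul (htend P inferInstance a2 b2 h2) (Or.inr (measure_ne_top Q _))
      (htend Q inferInstance a1 b1 h1) (Or.inr (measure_ne_top P _)))
    (ENNReal.Tendsto.mul (htend P inferInstance a1 b1 h1) (Or.inr (measure_ne_top Q _))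
      (htend Q inferInstance a2 b2 h2) (Or.inr (measure_ne_top P _)))
    hn


lemma measure_nullballs (μ : Measure ℝ) :
    μ {x : ℝ | ∃ r > (0:ℝ), μ (closedBall x r) = 0} = 0 := by
  have hsub : {x : ℝ | ∃ r > (0:ℝ), μ (closedBall x r) = 0} ⊆
      ⋃ p : ℚ × ℚ, if μ (Ioo (p.1 : ℝ) (p.2 : ℝ)) = 0 then Ioo (p.1 : ℝ) (p.2 : ℝ) else ∅ := by
    rintro x ⟨r, hr, hr0⟩
    obtain ⟨q1, hq1, hq1'⟩ := exists_rat_btwn (show x - r < x by linarith)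
    obtain ⟨q2, hq2, hq2'⟩ := exists_rat_btwn (show x < x + r by linarith)
    have hsub2 : Ioo (q1 : ℝ) (q2 : ℝ) ⊆ closedBall x r := by
      rw [Real.closedBall_eq_Icc]
      intro z hz
      exact ⟨by linarith [hz.1], by linarith [hz.2]⟩
    have h0 : μ (Ioo (q1 : ℝ) (q2 : ℝ)) = 0 :=
      le_antisymm (hr0 ▸ measure_mono hsub2) zero_le
    refine mem_iUnion.mpr ⟨(q1, q2), ?_⟩
    simp only []
    rw [if_pos h0]
    exact ⟨hq1', hq2⟩
  refine measure_mono_null hsub (measure_iUnion_null fun p => ?_)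
  split_ifs with h
  · exact h
  · exact measure_empty

lemma key (P Q : Measure ℝ) [IsProbabilityMeasure P] [IsProbabilityMeasure Q]
    (h4 : ∀ x y z : ℝ, x < y → y < z →
      P (Ioc y z) * Q (Ioc x y) ≤ P (Ioc x y) * Q (Ioc y z)) :
    ∃ g : ℝ → ℝ≥0∞, Monotone g ∧ (∀ x, g x ≤ 1) ∧
      Q = (P + Q).withDensity g ∧ P = (P + Q).withDensity (fun x => 1 - g x) := by
  set μ := P + Q with hμ
  have hQle : Q ≤ μ := Measure.le_add_left le_rfl
  have hac : Q ≪ μ := Measure.absolutelyContinuous_of_le hQle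
  set h := Q.rnDeriv μ with hh
  have hWD : μ.withDensity h = Q := Measure.withDensity_rnDeriv_eq Q μ hac
  set N := {x : ℝ | ∃ r > (0:ℝ), μ (closedBall x r) = 0} with hN
  set S := {x : ℝ |
    Tendsto (fun r => Q (closedBall x r) / μ (closedBall x r)) (𝓝[>] 0) (𝓝 (h x))
    ∧ h x ≤ 1 ∧ x ∉ N} with hSdef
  have hSae : ∀ᵐ x ∂μ, x ∈ S := by
    have h1 := Besicovitch.ae_tendsto_rnDeriv Q μ
    have h2 := Measure.rnDeriv_le_one_of_le hQle
    have h3 : ∀ᵐ x ∂μ, x ∉ N := by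
      rw [ae_iff]
      simpa [hN] using measure_nullballs μ
    filter_upwards [h1, h2, h3] with x hx1 hx2 hx3
    exact ⟨hx1, hx2, hx3⟩
  have hmono : ∀ x ∈ S, ∀ y ∈ S, x ≤ y → h x ≤ h y := by
    intro x hx y hy hxy
    rcases eq_or_lt_of_le hxy with rfl | hlt
    · exact le_rfl
    refine le_of_tendsto_of_tendsto hx.1 hy.1 ?_
    have hmem : Ioo (0:ℝ) ((y - x) / 2) ∈ 𝓝[>] (0:ℝ) :=
      Ioo_mem_nhdsGT_of_mem ⟨le_rfl, by linarith⟩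
    filter_upwards [hmem] with r hr
    have hr0 : 0 < r := hr.1
    have hrs : x + r < y - r := by have := hr.2; linarith
    have hIcc := Icc_comp h4 (show x - r ≤ x + r by linarith) hrs
      (show y - r ≤ y + r by linarith)
    rw [Real.closedBall_eq_Icc, Real.closedBall_eq_Icc]
    have hbval : μ (Icc (x - r) (x + r)) = P (Icc (x - r) (x + r)) + Q (Icc (x - r) (x + r)) := by
      rw [hμ, Measure.add_apply]
    have hdval : μ (Icc (y - r) (y + r)) = P (Icc (y - r) (y + r)) + Q (Icc (y - r) (y + r)) := by
      rw [hμ, Measure.add_apply]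
    refine div_le_div_of_cross (measure_ne_top _ _) ?_ (measure_ne_top _ _) ?_ ?_
    · intro h0
      exact hy.2.2 ⟨r, hr0, by rwa [Real.closedBall_eq_Icc]⟩
    · rw [hbval]; exact le_add_self
    · rw [hbval, hdval]
      calc Q (Icc (x - r) (x + r)) * (P (Icc (y - r) (y + r)) + Q (Icc (y - r) (y + r)))
          = P (Icc (y - r) (y + r)) * Q (Icc (x - r) (x + r))
            + Q (Icc (x - r) (x + r)) * Q (Icc (y - r) (y + r)) := by ring
        _ ≤ P (Icc (x - r) (x + r)) * Q (Icc (y - r) (y + r))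
            + Q (Icc (x - r) (x + r)) * Q (Icc (y - r) (y + r)) := by gcongr
        _ = (P (Icc (x - r) (x + r)) + Q (Icc (x - r) (x + r))) * Q (Icc (y - r) (y + r)) := by
            ring
  set g : ℝ → ℝ≥0∞ := fun x => ⨆ (y : ℝ) (_ : y ∈ S) (_ : y ≤ x), h y with hgdef
  have hgmono : Monotone g := by
    intro x1 x2 hx
    refine iSup_le fun y => iSup_le fun hyS => iSup_le fun hyx => ?_
    exact le_iSup_of_le y (le_iSup_of_le hyS (le_iSup_of_le (hyx.trans hx) le_rfl))
  have hgS : ∀ x ∈ S, g x = h x := by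
    intro x hx
    apply le_antisymm
    · exact iSup_le fun y => iSup_le fun hyS => iSup_le fun hyx => hmono y hyS x hx hyx
    · exact le_iSup_of_le x (le_iSup_of_le hx (le_iSup_of_le le_rfl le_rfl))
  have hg1 : ∀ x, g x ≤ 1 := fun x =>
    iSup_le fun y => iSup_le fun hyS => iSup_le fun _ => hyS.2.1
  have hgae : g =ᵐ[μ] h := by
    filter_upwards [hSae] with x hx using hgS x hx
  have hQg : Q = μ.withDensity g := by rw [withDensity_congr_ae hgae, hWD]
  have hfmeas : Measurable fun x => 1 - g x := measurable_const.sub hgmono.measurable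
  have hsum : μ.withDensity (fun x => 1 - g x) + μ.withDensity g = μ := by
    calc μ.withDensity (fun x => 1 - g x) + μ.withDensity g
        = μ.withDensity ((fun x => 1 - g x) + g) := (withDensity_add_left hfmeas g).symm
      _ = μ.withDensity 1 := by
          congr 1
          funext x
          simp only [Pi.add_apply, Pi.one_apply]
          exact tsub_add_cancel_of_le (hg1 x)
      _ = μ := withDensity_one
  refine ⟨g, hgmono, hg1, hQg, ?_⟩
  ext s hs
  have hms : μ.withDensity (fun x => 1 - g x) s + Q s = P s + Q s := by
    have h1 : μ.withDensity (fun x => 1 - g x) s + μ.withDensity g s = μ s := by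
      rw [← Measure.add_apply, hsum]
    rw [← hQg] at h1
    rw [h1, hμ, Measure.add_apply]
  exact (WithTop.add_right_cancel (measure_ne_top Q s) hms).symm


lemma ptwise {f g : ℝ → ℝ≥0∞}
    (hr : ∀ x y : ℝ, x ≤ y → 0 < f x + g x → 0 < f y + g y → g x / f x ≤ g y / f y)
    {a b : ℝ} (hab : a ≤ b) (hfa : f a ≠ ∞) (hfb : f b ≠ ∞) (hgb : g b ≠ ∞) :
    f b * g a ≤ f a * g b := by
  rcases eq_or_ne (f a + g a) 0 with ha0 | ha0
  · simp [(add_eq_zero.mp ha0).2]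
  rcases eq_or_ne (f b + g b) 0 with hb0 | hb0
  · simp [(add_eq_zero.mp hb0).1]
  have hr' := hr a b hab (pos_iff_ne_zero.mpr ha0) (pos_iff_ne_zero.mpr hb0)
  rcases eq_or_ne (f a) 0 with hfa0 | hfa0
  · have hga0 : g a ≠ 0 := fun h => ha0 (by rw [hfa0, h, add_zero])
    have htop : g a / f a = ∞ := by rw [hfa0]; exact ENNReal.div_zero hga0
    have htop2 : g b / f b = ∞ := top_le_iff.mp (htop ▸ hr')
    rcases ENNReal.div_eq_top.mp htop2 with ⟨-, hfb0⟩ | ⟨hgbt, -⟩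
    · simp [hfb0]
    · exact absurd hgbt hgb
  rcases eq_or_ne (f b) 0 with hfb0 | hfb0
  · simp [hfb0]
  · rw [ENNReal.div_le_iff hfa0 hfa] at hr'
    calc f b * g a ≤ f b * (g b / f b * f a) := mul_le_mul_right hr' _
      _ = g b / f b * f b * f a := by ring
      _ = g b * f a := by rw [ENNReal.div_mul_cancel hfb0 hfb]
      _ = f a * g b := mul_comm _ _

lemma int_lemma (P Q μ : Measure ℝ) {f g : ℝ → ℝ≥0∞} (hf : Measurable f) (hg : Measurable g)
    (hP : P = μ.withDensity f) (hQ : Q = μ.withDensity g)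
    (hae : ∀ᵐ a ∂μ, ∀ᵐ b ∂μ, a ≤ b → f b * g a ≤ f a * g b)
    {A B : Set ℝ} (hA : MeasurableSet A) (hB : MeasurableSet B)
    (hAB : ∀ a ∈ A, ∀ b ∈ B, a ≤ b) : P B * Q A ≤ P A * Q B := by
  rw [hP, hQ, withDensity_apply _ hB, withDensity_apply _ hA, withDensity_apply _ hA,
    withDensity_apply _ hB]
  calc (∫⁻ b in B, f b ∂μ) * ∫⁻ a in A, g a ∂μ
      = ∫⁻ a in A, (∫⁻ b in B, f b ∂μ) * g a ∂μ := (lintegral_const_mul _ hg).symm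
    _ = ∫⁻ a in A, ∫⁻ b in B, f b * g a ∂μ ∂μ :=
        lintegral_congr fun a => (lintegral_mul_const _ hf).symm
    _ ≤ ∫⁻ a in A, ∫⁻ b in B, f a * g b ∂μ ∂μ := by
        refine lintegral_mono_ae ?_
        filter_upwards [ae_restrict_of_ae hae, ae_restrict_mem hA] with a ha hmemA
        refine lintegral_mono_ae ?_
        filter_upwards [ae_restrict_of_ae ha, ae_restrict_mem hB] with b hb hmemB
        exact hb (hAB a hmemA b hmemB)
    _ = ∫⁻ a in A, f a * ∫⁻ b in B, g b ∂μ ∂μ :=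
        lintegral_congr fun a => lintegral_const_mul _ hg
    _ = (∫⁻ a in A, f a ∂μ) * ∫⁻ b in B, g b ∂μ := lintegral_mul_const _ hf

end LRProof

open LRProof

/-- **Proposition 1 (equivalent definitions of likelihood ratio order).**
For Borel probability measures `P`, `Q` on `ℝ`, the following are equivalent:
(i) there are a σ-finite dominating measure and densities whose ratio `g/f` is
isotonic on `{f + g > 0}`; (ii) there are densities with
`f y * g x ≤ f x * g y` for `x < y`; (iii) `P B * Q A ≤ P A * Q B` for all
Borel sets `A ≤ B` elementwise; (iv) the same for adjacent intervals
`A = (x,y]`, `B = (y,z]`. -/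
theorem stmt0 (P Q : Measure ℝ) [IsProbabilityMeasure P] [IsProbabilityMeasure Q] :
    List.TFAE
      [ ∃ μ : Measure ℝ, SigmaFinite μ ∧ ∃ f g : ℝ → ℝ≥0∞,
          Measurable f ∧ Measurable g ∧
          P = μ.withDensity f ∧ Q = μ.withDensity g ∧
          ∀ x y : ℝ, x ≤ y → 0 < f x + g x → 0 < f y + g y → g x / f x ≤ g y / f y,
        ∃ μ : Measure ℝ, SigmaFinite μ ∧ ∃ f g : ℝ → ℝ≥0∞,
          Measurable f ∧ Measurable g ∧
          P = μ.withDensity f ∧ Q = μ.withDensity g ∧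
          ∀ x y : ℝ, x < y → f y * g x ≤ f x * g y,
        ∀ A B : Set ℝ, MeasurableSet A → MeasurableSet B →
          (∀ a ∈ A, ∀ b ∈ B, a ≤ b) → P B * Q A ≤ P A * Q B,
        ∀ x y z : ℝ, x < y → y < z →
          P (Ioc y z) * Q (Ioc x y) ≤ P (Ioc x y) * Q (Ioc y z) ] := by
  tfae_have 3 → 4 := by
    intro h3 x y z hxy hyz
    exact h3 _ _ measurableSet_Ioc measurableSet_Ioc fun a ha b hb => ha.2.trans hb.1.le
  tfae_have 4 → 1 := by
    intro h4
    obtain ⟨g, hgmono, hg1, hQ, hP⟩ := key P Q h4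
    refine ⟨P + Q, inferInstance, (fun x => 1 - g x), g,
      measurable_const.sub hgmono.measurable, hgmono.measurable, hP, hQ, ?_⟩
    intro x y hxy _ _
    exact ENNReal.div_le_div (hgmono hxy) (tsub_le_tsub_left (hgmono hxy) 1)
  tfae_have 4 → 2 := by
    intro h4
    obtain ⟨g, hgmono, hg1, hQ, hP⟩ := key P Q h4
    refine ⟨P + Q, inferInstance, (fun x => 1 - g x), g,
      measurable_const.sub hgmono.measurable, hgmono.measurable, hP, hQ, ?_⟩
    intro x y hxy
    exact mul_le_mul' (tsub_le_tsub_left (hgmono hxy.le) 1) (hgmono hxy.le)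
  tfae_have 1 → 3 := by
    intro h1 A B hA hB hAB
    obtain ⟨μ, hσ, f, g, hf, hg, hP, hQ, hr⟩ := h1
    have hPfin : ∫⁻ x, f x ∂μ ≠ ∞ := by
      rw [← setLIntegral_univ, ← withDensity_apply _ MeasurableSet.univ, ← hP]
      exact measure_ne_top _ _
    have hQfin : ∫⁻ x, g x ∂μ ≠ ∞ := by
      rw [← setLIntegral_univ, ← withDensity_apply _ MeasurableSet.univ, ← hQ]
      exact measure_ne_top _ _
    have hffin : ∀ᵐ x ∂μ, f x < ∞ := ae_lt_top hf hPfin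
    have hgfin : ∀ᵐ x ∂μ, g x < ∞ := ae_lt_top hg hQfin
    refine int_lemma P Q μ hf hg hP hQ ?_ hA hB hAB
    filter_upwards [hffin] with a hfa
    filter_upwards [hffin, hgfin] with b hfb hgb
    intro hab
    exact ptwise hr hab hfa.ne hfb.ne hgb.ne
  tfae_have 2 → 3 := by
    intro h2 A B hA hB hAB
    obtain ⟨μ, hσ, f, g, hf, hg, hP, hQ, hr⟩ := h2
    refine int_lemma P Q μ hf hg hP hQ ?_ hA hB hAB
    refine Eventually.of_forall fun a => Eventually.of_forall fun b hab => ?_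
    rcases hab.lt_or_eq with hlt | rfl
    · exact hr a b hlt
    · exact le_rfl
  tfae_finish
end

section
/- Let (P_n)_n and (Q_n)_n be sequences of Borel probability measures on ℝ converging weakly to probability measures P and Q respectively. If P_n ≤lr Q_n for every n, then P ≤lr Q. -/
open MeasureTheory Set Filter
open scoped ENNReal

/-- `P` is smaller than `Q` in the likelihood ratio order. -/
def IsLR (P Q : Measure ℝ) : Prop :=
  ∀ A B : Set ℝ, MeasurableSet A → MeasurableSet B →
    (∀ a ∈ A, ∀ b ∈ B, a ≤ b) → P B * Q A ≤ P A * Q B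

open Metric

section Aux



-- Lemma 1 : functional inequality from IsLR
lemma lr_fun_ineq (μ ν : Measure ℝ) [IsProbabilityMeasure μ] [IsProbabilityMeasure ν]
    (h : IsLR μ ν) (m : ℝ) (f g : BoundedContinuousFunction ℝ ℝ)
    (hf0 : ∀ x, 0 ≤ f x) (hg0 : ∀ x, 0 ≤ g x)
    (hf : ∀ x, m < x → f x = 0) (hg : ∀ x, x < m → g x = 0) :
    (∫ x, g x ∂μ) * (∫ x, f x ∂ν) ≤ (∫ x, f x ∂μ) * (∫ x, g x ∂ν) := by
  -- layer cake quantities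
  set Ff : ℝ → ℝ≥0∞ := fun t => μ {x | t < f x} with hFf
  set Fg : ℝ → ℝ≥0∞ := fun t => μ {x | t < g x} with hFg
  set Gf : ℝ → ℝ≥0∞ := fun t => ν {x | t < f x} with hGf
  set Gg : ℝ → ℝ≥0∞ := fun t => ν {x | t < g x} with hGg
  have measf : Measurable (f : ℝ → ℝ) := f.continuous.measurable
  have measg : Measurable (g : ℝ → ℝ) := g.continuous.measurable
  have mFf : Measurable Ff := Antitone.measurable (fun s t hst => measure_mono (fun x hx => lt_of_le_of_lt hst hx))
  have mFg : Measurable Fg := Antitone.measurable (fun s t hst => measure_mono (fun x hx => lt_of_le_of_lt hst hx))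
  have mGf : Measurable Gf := Antitone.measurable (fun s t hst => measure_mono (fun x hx => lt_of_le_of_lt hst hx))
  have mGg : Measurable Gg := Antitone.measurable (fun s t hst => measure_mono (fun x hx => lt_of_le_of_lt hst hx))
  have key : ∀ s ∈ Ioi (0:ℝ), ∀ t ∈ Ioi (0:ℝ), Fg s * Gf t ≤ Ff t * Gg s := by
    intro s hs t ht
    refine h {x | t < f x} {x | s < g x} (measurableSet_lt measurable_const measf)
      (measurableSet_lt measurable_const measg) ?_
    intro a ha b hb
    have ha' : a ≤ m := by
      by_contra hc
      push_neg at hc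
      rw [Set.mem_setOf_eq, hf a hc] at ha
      exact absurd ha (not_lt.2 (le_of_lt ht))
    have hb' : m ≤ b := by
      by_contra hc
      push_neg at hc
      rw [Set.mem_setOf_eq, hg b hc] at hb
      exact absurd hb (not_lt.2 (le_of_lt hs))
    linarith
  have main : (∫⁻ s in Ioi (0:ℝ), Fg s) * (∫⁻ t in Ioi (0:ℝ), Gf t)
      ≤ (∫⁻ t in Ioi (0:ℝ), Ff t) * (∫⁻ s in Ioi (0:ℝ), Gg s) := by
    rw [← lintegral_mul_const _ mFg, ← lintegral_const_mul _ mGg]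
    refine setLIntegral_mono (by fun_prop) fun s hs => ?_
    rw [← lintegral_const_mul _ mGf, ← lintegral_mul_const _ mFf]
    exact setLIntegral_mono (by fun_prop) fun t ht => key s hs t ht
  -- identify integrals
  have repf : ∀ (ρ : Measure ℝ) , IsProbabilityMeasure ρ → ∀ (φ : BoundedContinuousFunction ℝ ℝ), (∀ x, 0 ≤ φ x) →
      ∫ x, φ x ∂ρ = (∫⁻ t in Ioi (0:ℝ), ρ {x | t < φ x}).toReal := by
    intro ρ _ φ hφ
    rw [integral_eq_lintegral_of_nonneg_ae (ae_of_all _ hφ)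
      φ.continuous.measurable.aestronglyMeasurable,
      lintegral_eq_lintegral_meas_lt ρ (ae_of_all _ hφ) φ.continuous.measurable.aemeasurable]
  have fin : ∀ (ρ : Measure ℝ), IsProbabilityMeasure ρ → ∀ (φ : BoundedContinuousFunction ℝ ℝ), (∀ x, 0 ≤ φ x) →
      (∫⁻ t in Ioi (0:ℝ), ρ {x | t < φ x}) ≠ ∞ := by
    intro ρ hρ φ hφ
    rw [← lintegral_eq_lintegral_meas_lt ρ (ae_of_all _ hφ) φ.continuous.measurable.aemeasurable]
    exact (BoundedContinuousFunction.lintegral_of_real_lt_top ρ φ).ne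
  rw [repf μ inferInstance f hf0, repf μ inferInstance g hg0, repf ν inferInstance f hf0,
    repf ν inferInstance g hg0, ← ENNReal.toReal_mul, ← ENNReal.toReal_mul]
  exact ENNReal.toReal_mono (ENNReal.mul_ne_top (fin μ inferInstance f hf0) (fin ν inferInstance g hg0)) main



noncomputable def bumpBCF (K : Set ℝ) (r : ℝ) : BoundedContinuousFunction ℝ ℝ := by
  refine ⟨⟨fun x => min 1 (max 0 (1 - r * infDist x K)),
    (continuous_const.min (continuous_const.max (by
      exact continuous_const.sub (continuous_const.mul (continuous_infDist_pt K))))) ⟩,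
    1, fun x y => ?_⟩
  have h : ∀ z : ℝ, min 1 (max 0 (1 - r * infDist z K)) ∈ Icc (0:ℝ) 1 := by
    intro z
    constructor
    · exact le_min (by norm_num) (le_max_left _ _)
    · exact min_le_left _ _
  have := Real.dist_le_of_mem_Icc (h x) (h y)
  simpa using this

lemma bumpBCF_apply (K : Set ℝ) {r : ℝ} (hr : 0 ≤ r) (x : ℝ) :
    bumpBCF K r x = max 0 (1 - r * infDist x K) := by
  have : max 0 (1 - r * infDist x K) ≤ 1 := by
    refine max_le (by norm_num) (by nlinarith [infDist_nonneg (x := x) (s := K)])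
  exact min_eq_right this

lemma bumpBCF_nonneg (K : Set ℝ) (r x : ℝ) : 0 ≤ bumpBCF K r x :=
  le_min (by norm_num) (le_max_left _ _)

lemma bumpBCF_le_one (K : Set ℝ) (r x : ℝ) : bumpBCF K r x ≤ 1 := min_le_left _ _

lemma bumpBCF_one (K : Set ℝ) {r : ℝ} (hr : 0 ≤ r) {x : ℝ} (hx : x ∈ K) : bumpBCF K r x = 1 := by
  rw [bumpBCF_apply K hr, infDist_zero_of_mem hx]
  norm_num

lemma bumpBCF_zero (K : Set ℝ) {r x : ℝ} (hr : 0 ≤ r) (hx : 1 ≤ r * infDist x K) :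
    bumpBCF K r x = 0 := by
  rw [bumpBCF_apply K hr, max_eq_left (by linarith)]

-- Lemma 3: from functional domination to set domination on (-∞, c], c < m
lemma approx_left (ν1 ν2 : Measure ℝ) [IsFiniteMeasure ν1] [IsFiniteMeasure ν2]
    (m c : ℝ) (hcm : c < m)
    (H : ∀ f : BoundedContinuousFunction ℝ ℝ, (∀ x, 0 ≤ f x) → (∀ x, f x ≤ 1) →
      (∀ x, m < x → f x = 0) → ∫ x, f x ∂ν2 ≤ ∫ x, f x ∂ν1)
    (A : Set ℝ) (hA : MeasurableSet A) (hAc : A ⊆ Iic c) : ν2 A ≤ ν1 A := by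
  have keyK : ∀ K : Set ℝ, IsCompact K → K ⊆ Iic c → ν2 K ≤ ν1 K := by
    intro K hK hKc
    rcases K.eq_empty_or_nonempty with rfl | hne
    · simp
    have hKcl : IsClosed K := hK.isClosed
    have hKm : MeasurableSet K := hKcl.measurableSet
    set δ : ℝ := m - c with hδ
    have hδ0 : 0 < δ := by simp [hδ]; linarith
    -- rates
    set r : ℕ → ℝ := fun n => (n + 1) / δ with hr
    have hr0 : ∀ n, 0 ≤ r n := fun n => div_nonneg (by positivity) hδ0.le
    -- the bump functions vanish above m
    have hvanish : ∀ n : ℕ, ∀ x : ℝ, m < x → bumpBCF K (r n) x = 0 := by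
      intro n x hx
      refine bumpBCF_zero K (hr0 n) ?_
      have hd : δ ≤ infDist x K := by
        rw [infDist_eq_iInf]
        have : Nonempty K := hne.to_subtype
        refine le_ciInf fun y => ?_
        have hy : (y : ℝ) ≤ c := hKc y.2
        rw [Real.dist_eq, abs_of_pos (by linarith)]
        linarith
      have hrge : 1 / δ ≤ r n := by
        rw [hr, div_le_div_iff₀ hδ0 hδ0]
        nlinarith [Nat.cast_nonneg (α := ℝ) n]
      calc (1:ℝ) = 1 / δ * δ := by field_simp
      _ ≤ r n * infDist x K := mul_le_mul hrge hd hδ0.le (hr0 n)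
    -- per-n inequality
    have hn : ∀ n : ℕ, ∫ x, bumpBCF K (r n) x ∂ν2 ≤ ∫ x, bumpBCF K (r n) x ∂ν1 :=
      fun n => H _ (bumpBCF_nonneg K (r n)) (bumpBCF_le_one K (r n)) (hvanish n)
    -- lower bound for ν2
    have hlow : ∀ n : ℕ, (ν2 K).toReal ≤ ∫ x, bumpBCF K (r n) x ∂ν2 := by
      intro n
      rw [← measureReal_def, ← MeasureTheory.integral_indicator_one hKm]
      refine integral_mono ((integrable_const (1:ℝ)).indicator hKm)
        ((bumpBCF K (r n)).integrable ν2) fun x => ?_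
      by_cases hx : x ∈ K
      · simp [Set.indicator_of_mem hx, bumpBCF_one K (hr0 n) hx]
      · rw [Set.indicator_of_notMem hx]
        exact bumpBCF_nonneg K (r n) x
    -- dominated convergence for ν1
    have hlim : Tendsto (fun n => ∫ x, bumpBCF K (r n) x ∂ν1) atTop (nhds ((ν1 K).toReal)) := by
      rw [← measureReal_def, ← MeasureTheory.integral_indicator_one hKm]
      refine tendsto_integral_of_dominated_convergence (fun _ => (1:ℝ))
        (fun n => (bumpBCF K (r n)).continuous.measurable.aestronglyMeasurable)
        (integrable_const 1) (fun n => ae_of_all _ fun x => ?_) (ae_of_all _ fun x => ?_)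
      · rw [Real.norm_eq_abs, abs_of_nonneg (bumpBCF_nonneg K (r n) x)]
        exact bumpBCF_le_one K (r n) x
      · by_cases hx : x ∈ K
        · simp only [Set.indicator_of_mem hx, Pi.one_apply]
          have : ∀ n, bumpBCF K (r n) x = 1 := fun n => bumpBCF_one K (hr0 n) hx
          simp [this]
        · rw [Set.indicator_of_notMem hx]
          have hd : 0 < infDist x K := (hKcl.notMem_iff_infDist_pos hne).1 hx
          refine tendsto_atTop_of_eventually_const (i₀ := Nat.ceil (δ / infDist x K)) fun n hni => ?_
          refine bumpBCF_zero K (hr0 n) ?_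
          have h1 : δ / infDist x K ≤ (n:ℝ) := le_trans (Nat.le_ceil _) (by exact_mod_cast hni)
          rw [hr, div_mul_eq_mul_div, le_div_iff₀ hδ0, one_mul]
          rw [div_le_iff₀ hd] at h1
          nlinarith [hd, Nat.cast_nonneg (α := ℝ) n]
    have : (ν2 K).toReal ≤ (ν1 K).toReal :=
      ge_of_tendsto hlim (Eventually.of_forall fun n => (hlow n).trans (hn n))
    exact (ENNReal.toReal_le_toReal (measure_ne_top _ _) (measure_ne_top _ _)).1 this
  -- regularity step
  refine ENNReal.le_of_forall_pos_le_add fun ε hε _ => ?_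
  obtain ⟨K, hKA, hK, hlt⟩ := hA.exists_isCompact_lt_add (measure_ne_top ν2 A)
    (ε := ε) (by exact_mod_cast hε.ne')
  calc ν2 A ≤ ν2 K + ε := hlt.le
  _ ≤ ν1 K + ε := add_le_add_left (keyK K hK (hKA.trans hAc)) _
  _ ≤ ν1 A + ε := add_le_add_left (measure_mono hKA) _

lemma approx_right (ν1 ν2 : Measure ℝ) [IsFiniteMeasure ν1] [IsFiniteMeasure ν2]
    (m c' : ℝ) (hmc : m < c')
    (H : ∀ g : BoundedContinuousFunction ℝ ℝ, (∀ x, 0 ≤ g x) → (∀ x, g x ≤ 1) →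
      (∀ x, x < m → g x = 0) → ∫ x, g x ∂ν2 ≤ ∫ x, g x ∂ν1)
    (B : Set ℝ) (hB : MeasurableSet B) (hBc : B ⊆ Ici c') : ν2 B ≤ ν1 B := by
  set ρ1 := ν1.map Neg.neg with hρ1
  set ρ2 := ν2.map Neg.neg with hρ2
  have hmeasneg : Measurable (Neg.neg : ℝ → ℝ) := measurable_neg
  haveI : IsFiniteMeasure ρ1 := by
    constructor
    rw [hρ1, Measure.map_apply hmeasneg MeasurableSet.univ]
    exact measure_lt_top _ _
  haveI : IsFiniteMeasure ρ2 := by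
    constructor
    rw [hρ2, Measure.map_apply hmeasneg MeasurableSet.univ]
    exact measure_lt_top _ _
  set N : Set ℝ := Neg.neg ⁻¹' B with hN
  have hNm : MeasurableSet N := hmeasneg hB
  have key := approx_left ρ1 ρ2 (-m) (-c') (by linarith)
    (fun f hf0 hf1 hfv => ?_) N hNm (fun x hx => ?_)
  · have e1 : ρ2 N = ν2 B := by
      rw [hρ2, Measure.map_apply hmeasneg hNm, hN]
      congr 1
      ext x; simp
    have e2 : ρ1 N = ν1 B := by
      rw [hρ1, Measure.map_apply hmeasneg hNm, hN]
      congr 1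
      ext x; simp
    rw [e1, e2] at key
    exact key
  · -- transfer the functional hypothesis
    set g : BoundedContinuousFunction ℝ ℝ :=
      f.compContinuous ⟨Neg.neg, continuous_neg⟩ with hg
    have hgapp : ∀ x, g x = f (-x) := fun x => rfl
    have hint2 : ∫ x, f x ∂ρ2 = ∫ x, g x ∂ν2 := by
      rw [hρ2, integral_map hmeasneg.aemeasurable f.continuous.measurable.aestronglyMeasurable]
      rfl
    have hint1 : ∫ x, f x ∂ρ1 = ∫ x, g x ∂ν1 := by
      rw [hρ1, integral_map hmeasneg.aemeasurable f.continuous.measurable.aestronglyMeasurable]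
      rfl
    rw [hint1, hint2]
    refine H g (fun x => hf0 _) (fun x => hf1 _) fun x hx => ?_
    rw [hgapp]
    exact hfv (-x) (by linarith)
  · -- N ⊆ Iic (-c')
    have : -x ∈ B := hx
    have := hBc this
    simp only [Set.mem_Ici] at this
    simp only [Set.mem_Iic]
    linarith



lemma core_ineq (P Q : ℕ → Measure ℝ) (Plim Qlim : Measure ℝ)
    [∀ n, IsProbabilityMeasure (P n)] [∀ n, IsProbabilityMeasure (Q n)]
    [IsProbabilityMeasure Plim] [IsProbabilityMeasure Qlim]
    (hPw : ∀ f : BoundedContinuousFunction ℝ ℝ,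
      Tendsto (fun n => ∫ x, f x ∂(P n)) atTop (nhds (∫ x, f x ∂Plim)))
    (hQw : ∀ f : BoundedContinuousFunction ℝ ℝ,
      Tendsto (fun n => ∫ x, f x ∂(Q n)) atTop (nhds (∫ x, f x ∂Qlim)))
    (hlr : ∀ n, IsLR (P n) (Q n))
    (c c' : ℝ) (hcc : c < c') (A B : Set ℝ) (hA : MeasurableSet A) (hB : MeasurableSet B)
    (hAc : A ⊆ Iic c) (hBc : B ⊆ Ici c') :
    Plim B * Qlim A ≤ Plim A * Qlim B := by
  set m : ℝ := (c + c') / 2 with hm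
  have hcm : c < m := by rw [hm]; linarith
  have hmc : m < c' := by rw [hm]; linarith
  have limitIneq : ∀ f g : BoundedContinuousFunction ℝ ℝ, (∀ x, 0 ≤ f x) → (∀ x, 0 ≤ g x) →
      (∀ x, m < x → f x = 0) → (∀ x, x < m → g x = 0) →
      (∫ x, g x ∂Plim) * (∫ x, f x ∂Qlim) ≤ (∫ x, f x ∂Plim) * (∫ x, g x ∂Qlim) := by
    intro f g hf0 hg0 hfv hgv
    exact le_of_tendsto_of_tendsto' ((hPw g).mul (hQw f)) ((hPw f).mul (hQw g))
      (fun n => lr_fun_ineq (P n) (Q n) (hlr n) m f g hf0 hg0 hfv hgv)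
  -- Step 1
  have step1 : ∀ g : BoundedContinuousFunction ℝ ℝ, (∀ x, 0 ≤ g x) → (∀ x, g x ≤ 1) →
      (∀ x, x < m → g x = 0) →
      ENNReal.ofReal (∫ x, g x ∂Plim) * Qlim A ≤ ENNReal.ofReal (∫ x, g x ∂Qlim) * Plim A := by
    intro g hg0 hg1 hgv
    set ν2 := ENNReal.ofReal (∫ x, g x ∂Plim) • Qlim with hν2
    set ν1 := ENNReal.ofReal (∫ x, g x ∂Qlim) • Plim with hν1
    haveI : IsFiniteMeasure ν2 := by
      constructor
      rw [hν2, Measure.smul_apply, smul_eq_mul]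
      exact ENNReal.mul_lt_top ENNReal.ofReal_lt_top (measure_lt_top _ _)
    haveI : IsFiniteMeasure ν1 := by
      constructor
      rw [hν1, Measure.smul_apply, smul_eq_mul]
      exact ENNReal.mul_lt_top ENNReal.ofReal_lt_top (measure_lt_top _ _)
    have key := approx_left ν1 ν2 m c hcm (fun f hf0 hf1 hfv => ?_) A hA hAc
    · rw [hν2, hν1, Measure.smul_apply, Measure.smul_apply, smul_eq_mul, smul_eq_mul] at key
      exact key
    · rw [hν1, hν2, integral_smul_measure, integral_smul_measure,
        ENNReal.toReal_ofReal (integral_nonneg hg0), ENNReal.toReal_ofReal (integral_nonneg hg0),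
        smul_eq_mul, smul_eq_mul, mul_comm (∫ x, g x ∂Qlim)]
      exact limitIneq f g hf0 hg0 hfv hgv
  -- Step 2
  set ν2 := Qlim A • Plim with hν2
  set ν1 := Plim A • Qlim with hν1
  haveI : IsFiniteMeasure ν2 := by
    constructor
    rw [hν2, Measure.smul_apply, smul_eq_mul]
    exact ENNReal.mul_lt_top (measure_lt_top _ _) (measure_lt_top _ _)
  haveI : IsFiniteMeasure ν1 := by
    constructor
    rw [hν1, Measure.smul_apply, smul_eq_mul]
    exact ENNReal.mul_lt_top (measure_lt_top _ _) (measure_lt_top _ _)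
  have key := approx_right ν1 ν2 m c' hmc (fun g hg0 hg1 hgv => ?_) B hB hBc
  · rw [hν2, hν1, Measure.smul_apply, Measure.smul_apply, smul_eq_mul, smul_eq_mul] at key
    calc Plim B * Qlim A = Qlim A * Plim B := mul_comm _ _
    _ ≤ Plim A * Qlim B := key
  · rw [hν1, hν2, integral_smul_measure, integral_smul_measure, smul_eq_mul, smul_eq_mul]
    have h1 := step1 g hg0 hg1 hgv
    have h2 := ENNReal.toReal_mono
      (ENNReal.mul_ne_top ENNReal.ofReal_ne_top (measure_ne_top _ _)) h1
    rw [ENNReal.toReal_mul, ENNReal.toReal_mul, ENNReal.toReal_ofReal (integral_nonneg hg0),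
      ENNReal.toReal_ofReal (integral_nonneg hg0)] at h2
    calc (Qlim A).toReal * ∫ x, g x ∂Plim = (∫ x, g x ∂Plim) * (Qlim A).toReal := mul_comm _ _
    _ ≤ (∫ x, g x ∂Qlim) * (Plim A).toReal := h2
    _ = (Plim A).toReal * ∫ x, g x ∂Qlim := mul_comm _ _

theorem stmt1' (P Q : ℕ → Measure ℝ) (Plim Qlim : Measure ℝ)
    [∀ n, IsProbabilityMeasure (P n)] [∀ n, IsProbabilityMeasure (Q n)]
    [IsProbabilityMeasure Plim] [IsProbabilityMeasure Qlim]
    (hPw : ∀ f : BoundedContinuousFunction ℝ ℝ,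
      Tendsto (fun n => ∫ x, f x ∂(P n)) atTop (nhds (∫ x, f x ∂Plim)))
    (hQw : ∀ f : BoundedContinuousFunction ℝ ℝ,
      Tendsto (fun n => ∫ x, f x ∂(Q n)) atTop (nhds (∫ x, f x ∂Qlim)))
    (hlr : ∀ n, IsLR (P n) (Q n)) :
    ∀ A B : Set ℝ, MeasurableSet A → MeasurableSet B →
    (∀ a ∈ A, ∀ b ∈ B, a ≤ b) → Plim B * Qlim A ≤ Plim A * Qlim B := by
  intro A B hA hB hab
  have core := core_ineq P Q Plim Qlim hPw hQw hlr
  rcases A.eq_empty_or_nonempty with rfl | ⟨a0, ha0⟩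
  · simp
  rcases B.eq_empty_or_nonempty with rfl | ⟨b0, hb0⟩
  · simp
  set c : ℝ := sSup A with hc
  have hbdd : BddAbove A := ⟨b0, fun a ha => hab a ha b0 hb0⟩
  have hAc : A ⊆ Iic c := fun a ha => le_csSup hbdd ha
  have hcB : ∀ b ∈ B, c ≤ b := fun b hb => csSup_le ⟨a0, ha0⟩ (fun a ha => hab a ha b hb)
  set B0 : Set ℝ := B ∩ {c} with hB0
  set B' : Set ℝ := B ∩ Ioi c with hB'
  set A0 : Set ℝ := A ∩ {c} with hA0
  set A' : Set ℝ := A ∩ Iio c with hA'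
  have mB0 : MeasurableSet B0 := hB.inter (measurableSet_singleton c)
  have mB' : MeasurableSet B' := hB.inter measurableSet_Ioi
  have mA0 : MeasurableSet A0 := hA.inter (measurableSet_singleton c)
  have mA' : MeasurableSet A' := hA.inter measurableSet_Iio
  have hBeq : B = B0 ∪ B' := by
    ext x
    constructor
    · intro hx
      rcases eq_or_lt_of_le (hcB x hx) with h | h
      · exact Or.inl ⟨hx, Set.mem_singleton_iff.2 h.symm⟩
      · exact Or.inr ⟨hx, h⟩
    · rintro (⟨hx, _⟩ | ⟨hx, _⟩) <;> exact hx
  have hAeq : A = A' ∪ A0 := by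
    ext x
    constructor
    · intro hx
      rcases lt_or_eq_of_le (Set.mem_Iic.1 (hAc hx)) with h | h
      · exact Or.inl ⟨hx, h⟩
      · exact Or.inr ⟨hx, Set.mem_singleton_iff.2 h⟩
    · rintro (⟨hx, _⟩ | ⟨hx, _⟩) <;> exact hx
  have hBdisj : Disjoint B0 B' := by
    rw [Set.disjoint_left]
    rintro x ⟨_, hx1⟩ ⟨_, hx2⟩
    rw [Set.mem_singleton_iff] at hx1
    rw [Set.mem_Ioi] at hx2
    exact absurd hx2 (by rw [hx1]; exact lt_irrefl c)
  have hAdisj : Disjoint A' A0 := by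
    rw [Set.disjoint_left]
    rintro x ⟨_, hx1⟩ ⟨_, hx2⟩
    rw [Set.mem_Iio] at hx1
    rw [Set.mem_singleton_iff] at hx2
    exact absurd hx1 (by rw [hx2]; exact lt_irrefl c)
  -- positivity of 1/(n+1)
  have hpos : ∀ n : ℕ, (0:ℝ) < 1 / (n + 1) := fun n => by positivity
  -- inequality 1 : Plim B' * Qlim A ≤ Plim A * Qlim B'
  have ineq1 : Plim B' * Qlim A ≤ Plim A * Qlim B' := by
    have hU : B' = ⋃ n : ℕ, B ∩ Ici (c + 1 / (n + 1)) := by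
      ext x
      simp only [Set.mem_iUnion, hB', Set.mem_inter_iff, Set.mem_Ioi, Set.mem_Ici]
      constructor
      · rintro ⟨hxB, hxc⟩
        obtain ⟨n, hn⟩ := exists_nat_one_div_lt (sub_pos.2 hxc)
        exact ⟨n, hxB, by push_cast at hn ⊢; linarith⟩
      · rintro ⟨n, hxB, hxc⟩
        exact ⟨hxB, by linarith [hpos n]⟩
    have hmono : Monotone (fun n : ℕ => B ∩ Ici (c + 1 / (n + 1 : ℝ))) := by
      intro n k hnk
      apply Set.inter_subset_inter_right
      apply Set.Ici_subset_Ici.2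
      have : (1 : ℝ) / (k + 1) ≤ 1 / (n + 1) := by
        apply one_div_le_one_div_of_le (by positivity)
        exact_mod_cast by omega
      linarith
    have : Plim B' = ⨆ n : ℕ, Plim (B ∩ Ici (c + 1 / (n + 1))) := by
      rw [hU, hmono.directed_le.measure_iUnion]
    rw [this, ENNReal.iSup_mul]
    refine iSup_le fun n => ?_
    calc Plim (B ∩ Ici (c + 1 / (n + 1))) * Qlim A
        ≤ Plim A * Qlim (B ∩ Ici (c + 1 / (n + 1))) :=
          core c (c + 1 / (n + 1)) (by linarith [hpos n]) A _ hA
            (hB.inter measurableSet_Ici) hAc Set.inter_subset_right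
    _ ≤ Plim A * Qlim B' := by
        apply mul_le_mul_right
        apply measure_mono
        rintro x ⟨hxB, hx⟩
        exact ⟨hxB, by rw [Set.mem_Ioi]; rw [Set.mem_Ici] at hx; linarith [hpos n]⟩
  -- inequality 2 : Plim B0 * Qlim A' ≤ Plim A' * Qlim B0
  have ineq2 : Plim B0 * Qlim A' ≤ Plim A' * Qlim B0 := by
    have hU : A' = ⋃ n : ℕ, A ∩ Iic (c - 1 / (n + 1)) := by
      ext x
      simp only [Set.mem_iUnion, hA', Set.mem_inter_iff, Set.mem_Iio, Set.mem_Iic]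
      constructor
      · rintro ⟨hxA, hxc⟩
        obtain ⟨n, hn⟩ := exists_nat_one_div_lt (sub_pos.2 hxc)
        exact ⟨n, hxA, by push_cast at hn ⊢; linarith⟩
      · rintro ⟨n, hxA, hxc⟩
        exact ⟨hxA, by linarith [hpos n]⟩
    have hmono : Monotone (fun n : ℕ => A ∩ Iic (c - 1 / (n + 1 : ℝ))) := by
      intro n k hnk
      apply Set.inter_subset_inter_right
      apply Set.Iic_subset_Iic.2
      have : (1 : ℝ) / (k + 1) ≤ 1 / (n + 1) := by
        apply one_div_le_one_div_of_le (by positivity)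
        exact_mod_cast by omega
      linarith
    have : Qlim A' = ⨆ n : ℕ, Qlim (A ∩ Iic (c - 1 / (n + 1))) := by
      rw [hU, hmono.directed_le.measure_iUnion]
    rw [this, ENNReal.mul_iSup]
    refine iSup_le fun n => ?_
    calc Plim B0 * Qlim (A ∩ Iic (c - 1 / (n + 1)))
        ≤ Plim (A ∩ Iic (c - 1 / (n + 1))) * Qlim B0 :=
          core (c - 1 / (n + 1)) c (by linarith [hpos n]) _ B0
            (hA.inter measurableSet_Iic) mB0 Set.inter_subset_right
            (fun x hx => by
              rw [Set.mem_singleton_iff.1 hx.2]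
              exact Set.self_mem_Ici)
    _ ≤ Plim A' * Qlim B0 := by
        apply mul_le_mul_left
        apply measure_mono
        rintro x ⟨hxA, hx⟩
        exact ⟨hxA, by rw [Set.mem_Iio]; rw [Set.mem_Iic] at hx; linarith [hpos n]⟩
  -- inequality 3 : Plim B0 * Qlim A0 ≤ Plim A0 * Qlim B0
  have ineq3 : Plim B0 * Qlim A0 ≤ Plim A0 * Qlim B0 := by
    rcases Set.subset_singleton_iff_eq.1 (Set.inter_subset_right : A0 ⊆ {c}) with h | h
    · rw [hA0, h]; simp
    rcases Set.subset_singleton_iff_eq.1 (Set.inter_subset_right : B0 ⊆ {c}) with h' | h'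
    · rw [hB0, h']; simp
    rw [hA0, hB0, h, h']
  -- assembly
  have hPB : Plim B = Plim B0 + Plim B' := by
    conv_lhs => rw [hBeq]
    exact measure_union hBdisj mB'
  have hQB : Qlim B = Qlim B0 + Qlim B' := by
    conv_lhs => rw [hBeq]
    exact measure_union hBdisj mB'
  have hPA : Plim A = Plim A' + Plim A0 := by
    conv_lhs => rw [hAeq]
    exact measure_union hAdisj mA0
  have hQA : Qlim A = Qlim A' + Qlim A0 := by
    conv_lhs => rw [hAeq]
    exact measure_union hAdisj mA0
  calc Plim B * Qlim A
      = Plim B0 * Qlim A' + Plim B0 * Qlim A0 + Plim B' * Qlim A := by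
        rw [hPB, hQA]; ring
  _ ≤ Plim A' * Qlim B0 + Plim A0 * Qlim B0 + Plim A * Qlim B' :=
        add_le_add (add_le_add ineq2 ineq3) ineq1
  _ = Plim A * Qlim B0 + Plim A * Qlim B' := by rw [hPA]; ring
  _ = Plim A * Qlim B := by rw [hQB]; ring

end Aux

/-- **Likelihood ratio order is preserved under weak convergence.**
If `P n → Plim` and `Q n → Qlim` weakly and `P n ≤lr Q n` for all `n`,
then `Plim ≤lr Qlim`. -/
theorem stmt1 (P Q : ℕ → Measure ℝ) (Plim Qlim : Measure ℝ)
    [∀ n, IsProbabilityMeasure (P n)] [∀ n, IsProbabilityMeasure (Q n)]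
    [IsProbabilityMeasure Plim] [IsProbabilityMeasure Qlim]
    (hPw : ∀ f : BoundedContinuousFunction ℝ ℝ,
      Tendsto (fun n => ∫ x, f x ∂(P n)) atTop (nhds (∫ x, f x ∂Plim)))
    (hQw : ∀ f : BoundedContinuousFunction ℝ ℝ,
      Tendsto (fun n => ∫ x, f x ∂(Q n)) atTop (nhds (∫ x, f x ∂Qlim)))
    (hlr : ∀ n, IsLR (P n) (Q n)) :
    IsLR Plim Qlim :=
  stmt1' P Q Plim Qlim hPw hQw hlr
end

section
/- The relation ≤lr is a partial order on the set of all Borel probability measures on ℝ: for arbitrary probability measures P, Q, R on ℝ, (a) P ≤lr P; (b) if P ≤lr Q and Q ≤lr P then P = Q; (c) if P ≤lr Q and Q ≤lr R then P ≤lr R. -/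
open MeasureTheory Set
open scoped ENNReal

lemma iic_add_ioi (μ : Measure ℝ) [IsProbabilityMeasure μ] (x : ℝ) :
    μ (Iic x) + μ (Ioi x) = 1 := by
  rw [← measure_union (Iic_disjoint_Ioi le_rfl) measurableSet_Ioi, Iic_union_Ioi, measure_univ]

lemma cdf_le {μ ν : Measure ℝ} [IsProbabilityMeasure μ] [IsProbabilityMeasure ν]
    (h : IsLR μ ν) (x : ℝ) : ν (Iic x) ≤ μ (Iic x) := by
  have key := h (Iic x) (Ioi x) measurableSet_Iic measurableSet_Ioi
    (fun a ha b hb => le_of_lt (lt_of_le_of_lt ha hb))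
  calc ν (Iic x) = (μ (Ioi x) + μ (Iic x)) * ν (Iic x) := by
        rw [add_comm, iic_add_ioi, one_mul]
    _ = μ (Ioi x) * ν (Iic x) + μ (Iic x) * ν (Iic x) := by ring
    _ ≤ μ (Iic x) * ν (Ioi x) + μ (Iic x) * ν (Iic x) := add_le_add_left key _
    _ = μ (Iic x) * (ν (Iic x) + ν (Ioi x)) := by ring
    _ = μ (Iic x) := by rw [iic_add_ioi, mul_one]

/-- **The likelihood ratio order is a partial order** on Borel probability
measures on `ℝ`: it is reflexive, antisymmetric and transitive. -/
theorem stmt4 :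
    (∀ P : Measure ℝ, IsProbabilityMeasure P → IsLR P P) ∧
    (∀ P Q : Measure ℝ, IsProbabilityMeasure P → IsProbabilityMeasure Q →
      IsLR P Q → IsLR Q P → P = Q) ∧
    (∀ P Q R : Measure ℝ, IsProbabilityMeasure P → IsProbabilityMeasure Q →
      IsProbabilityMeasure R → IsLR P Q → IsLR Q R → IsLR P R) := by
  refine ⟨?_, ?_, ?_⟩
  · intro P _ A B _ _ _
    rw [mul_comm]
  · intro P Q hP hQ hPQ hQP
    exact Measure.ext_of_Iic P Q fun x => le_antisymm (cdf_le hQP x) (cdf_le hPQ x)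
  · intro P Q R hP hQ hR hPQ hQR A B hA hB hAB
    rcases A.eq_empty_or_nonempty with rfl | hAne
    · simp
    rcases B.eq_empty_or_nonempty with rfl | hBne
    · simp
    obtain ⟨b₀, hb₀⟩ := hBne
    have hbdd : BddAbove A := ⟨b₀, fun a ha => hAB a ha b₀ hb₀⟩
    set t := sSup A with ht
    have hAt : ∀ a ∈ A, a ≤ t := fun a ha => le_csSup hbdd ha
    have htB : ∀ b ∈ B, t ≤ b := fun b hb => csSup_le hAne (fun a ha => hAB a ha b hb)
    have hAIic : A ⊆ Iic t := fun a ha => hAt a ha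
    have hBIci : B ⊆ Ici t := fun b hb => htB b hb
    -- helper facts
    have hQAB := hPQ A B hA hB hAB
    have hQRAB := hQR A B hA hB hAB
    -- Case split on whether Q A = 0 or Q B = 0
    by_cases hQA : Q A = 0
    · -- then R A = 0 or P B = 0
      by_cases hQIci : Q (Ici t) = 0
      · -- Q B = 0 and Q (Iic t) > 0, so P B = 0
        have hQB : Q B = 0 := measure_mono_null hBIci hQIci
        have hQIic : Q (Iic t) ≠ 0 := by
          intro h0
          have : Q univ = 0 := by
            rw [← Iic_union_Ici (a := t)]
            exact measure_union_null h0 hQIci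
          simp [measure_univ] at this
        have key := hPQ (Iic t) B measurableSet_Iic hB
          (fun a ha b hb => le_trans ha (htB b hb))
        rw [hQB, mul_zero] at key
        have hPB : P B = 0 := by
          rcases mul_eq_zero.1 (le_antisymm key (zero_le)) with h | h
          · exact h
          · exact absurd h hQIic
        simp [hPB]
      · -- Q (Ici t) ≠ 0, use Q ≤lr R on (A, Ici t) to get R A = 0
        have key := hQR A (Ici t) hA measurableSet_Ici
          (fun a ha b hb => le_trans (hAt a ha) hb)
        rw [hQA, zero_mul] at key
        have hRA : R A = 0 := by
          rcases mul_eq_zero.1 (le_antisymm key (zero_le)) with h | h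
          · exact absurd h hQIci
          · exact h
        simp [hRA]
    · by_cases hQB : Q B = 0
      · -- Q (Iic t) ≥ Q A > 0, use P ≤lr Q on (Iic t, B) to get P B = 0
        have hQIic : Q (Iic t) ≠ 0 := fun h0 => hQA (measure_mono_null hAIic h0)
        have key := hPQ (Iic t) B measurableSet_Iic hB
          (fun a ha b hb => le_trans ha (htB b hb))
        rw [hQB, mul_zero] at key
        have hPB : P B = 0 := by
          rcases mul_eq_zero.1 (le_antisymm key (zero_le)) with h | h
          · exact h
          · exact absurd h hQIic
        simp [hPB]
      · -- main case: multiply and cancel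
        have hmul : (Q A * Q B) * (P B * R A) ≤ (Q A * Q B) * (P A * R B) := by
          calc (Q A * Q B) * (P B * R A) = (P B * Q A) * (Q B * R A) := by ring
            _ ≤ (P A * Q B) * (Q A * R B) := mul_le_mul' hQAB hQRAB
            _ = (Q A * Q B) * (P A * R B) := by ring
        have hne : Q A * Q B ≠ 0 := mul_ne_zero hQA hQB
        have htop : Q A * Q B ≠ ∞ :=
          ENNReal.mul_ne_top (measure_ne_top Q A) (measure_ne_top Q B)
        exact (ENNReal.mul_le_mul_iff_right hne htop).1 hmul
end

section
/- Two Borel probability measures P and Q on ℝ satisfy P ≤lr Q if and only if ROC(P,Q) is concave in the following sense: whenever (a₀,b₀), (a₁,b₁), (a₂,b₂) are three different points in ROC(P,Q) with a₀ ≤ a₁ ≤ a₂ and b₀ ≤ b₁ ≤ b₂, then (b₁−b₀)·(a₂−a₁) ≥ (b₂−b₁)·(a₁−a₀) (equivalently, (b₁−b₀)/(a₁−a₀) ≥ (b₂−b₁)/(a₂−a₁)). -/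
open MeasureTheory Set
open scoped ENNReal

/-- The ROC curve of `(P, Q)`: all points `(P H, Q H)` where `H` ranges over
left-bounded half-lines, `∅` and `ℝ`. -/
noncomputable def ROC (P Q : Measure ℝ) : Set (ℝ × ℝ) :=
  {p | ∃ H : Set ℝ,
    (H = ∅ ∨ H = univ ∨ (∃ x : ℝ, H = Ioi x) ∨ (∃ x : ℝ, H = Ici x)) ∧
    p = ((P H).toReal, (Q H).toReal)}

namespace StmtAux

def memH (H : Set ℝ) : Prop :=
  H = ∅ ∨ H = univ ∨ (∃ x : ℝ, H = Ioi x) ∨ (∃ x : ℝ, H = Ici x)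

lemma memH.meas {H : Set ℝ} (h : memH H) : MeasurableSet H := by
  rcases h with rfl | rfl | ⟨x, rfl⟩ | ⟨x, rfl⟩
  exacts [MeasurableSet.empty, MeasurableSet.univ, measurableSet_Ioi, measurableSet_Ici]

lemma memH.sep {H : Set ℝ} (h : memH H) {a b : ℝ} (ha : a ∉ H) (hb : b ∈ H) : a ≤ b := by
  rcases h with rfl | rfl | ⟨x, rfl⟩ | ⟨x, rfl⟩
  · exact absurd hb (notMem_empty b)
  · exact absurd (mem_univ a) ha
  · exact le_of_lt (lt_of_le_of_lt (not_lt.mp ha) hb)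
  · exact le_of_lt (lt_of_lt_of_le (not_le.mp ha) hb)

lemma memH.total {H K : Set ℝ} (h : memH H) (k : memH K) : H ⊆ K ∨ K ⊆ H := by
  rcases h with rfl | rfl | ⟨x, rfl⟩ | ⟨x, rfl⟩
  · exact Or.inl (empty_subset K)
  · exact Or.inr (subset_univ K)
  all_goals rcases k with rfl | rfl | ⟨y, rfl⟩ | ⟨y, rfl⟩
  · exact Or.inr (empty_subset _)
  · exact Or.inl (subset_univ _)
  · rcases le_total x y with hxy | hxy
    · exact Or.inr (Ioi_subset_Ioi hxy)
    · exact Or.inl (Ioi_subset_Ioi hxy)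
  · rcases le_or_gt y x with hxy | hxy
    · exact Or.inl (fun z hz => le_trans hxy (le_of_lt hz))
    · exact Or.inr (fun z hz => lt_of_lt_of_le hxy hz)
  · exact Or.inr (empty_subset _)
  · exact Or.inl (subset_univ _)
  · rcases le_or_gt x y with hxy | hxy
    · exact Or.inr (fun z hz => le_trans hxy (le_of_lt hz))
    · exact Or.inl (fun z hz => lt_of_lt_of_le hxy hz)
  · rcases le_total x y with hxy | hxy
    · exact Or.inr (Ici_subset_Ici.mpr hxy)
    · exact Or.inl (Ici_subset_Ici.mpr hxy)

lemma roc_mem (P Q : Measure ℝ) {H : Set ℝ} (h : memH H) :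
    ((P H).toReal, (Q H).toReal) ∈ ROC P Q := ⟨H, h, rfl⟩

def Hyp (P Q : Measure ℝ) : Prop :=
  ∀ p₀ p₁ p₂ : ℝ × ℝ, p₀ ∈ ROC P Q → p₁ ∈ ROC P Q → p₂ ∈ ROC P Q →
    p₀ ≠ p₁ → p₀ ≠ p₂ → p₁ ≠ p₂ →
    p₀.1 ≤ p₁.1 → p₁.1 ≤ p₂.1 → p₀.2 ≤ p₁.2 → p₁.2 ≤ p₂.2 →
    (p₂.2 - p₁.2) * (p₁.1 - p₀.1) ≤ (p₁.2 - p₀.2) * (p₂.1 - p₁.1)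

variable {P Q : Measure ℝ} [IsProbabilityMeasure P] [IsProbabilityMeasure Q]

lemma toReal_diff {μ : Measure ℝ} [IsProbabilityMeasure μ] {H K : Set ℝ} (hK : memH K)
    (hKH : K ⊆ H) : (μ (H \ K)).toReal = (μ H).toReal - (μ K).toReal := by
  rw [measure_diff hKH hK.meas.nullMeasurableSet (measure_ne_top μ K),
    ENNReal.toReal_sub_of_le (measure_mono hKH) (measure_ne_top μ H)]

lemma adj (h : Hyp P Q) {H₀ H₁ H₂ : Set ℝ} (m₀ : memH H₀) (m₁ : memH H₁) (m₂ : memH H₂)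
    (s₀₁ : H₀ ⊆ H₁) (s₁₂ : H₁ ⊆ H₂) :
    Q (H₂ \ H₁) * P (H₁ \ H₀) ≤ P (H₂ \ H₁) * Q (H₁ \ H₀) := by
  set a₀ := (P H₀).toReal
  set a₁ := (P H₁).toReal
  set a₂ := (P H₂).toReal
  set b₀ := (Q H₀).toReal
  set b₁ := (Q H₁).toReal
  set b₂ := (Q H₂).toReal
  have ha01 : a₀ ≤ a₁ := ENNReal.toReal_mono (measure_ne_top P H₁) (measure_mono s₀₁)
  have ha12 : a₁ ≤ a₂ := ENNReal.toReal_mono (measure_ne_top P H₂) (measure_mono s₁₂)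
  have hb01 : b₀ ≤ b₁ := ENNReal.toReal_mono (measure_ne_top Q H₁) (measure_mono s₀₁)
  have hb12 : b₁ ≤ b₂ := ENNReal.toReal_mono (measure_ne_top Q H₂) (measure_mono s₁₂)
  have key : (b₂ - b₁) * (a₁ - a₀) ≤ (b₁ - b₀) * (a₂ - a₁) := by
    by_cases e01 : ((a₀, b₀) : ℝ × ℝ) = (a₁, b₁)
    · obtain ⟨e1, e2⟩ := Prod.mk.injEq .. ▸ e01
      rw [e1, e2]; simp
    by_cases e12 : ((a₁, b₁) : ℝ × ℝ) = (a₂, b₂)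
    · obtain ⟨e1, e2⟩ := Prod.mk.injEq .. ▸ e12
      rw [e1, e2]; simp
    by_cases e02 : ((a₀, b₀) : ℝ × ℝ) = (a₂, b₂)
    · obtain ⟨e1, e2⟩ := Prod.mk.injEq .. ▸ e02
      have h1 : a₁ = a₀ := le_antisymm (e1 ▸ ha12) ha01
      have h2 : b₁ = b₀ := le_antisymm (e2 ▸ hb12) hb01
      rw [h1, h2]; simp
    · exact h (a₀, b₀) (a₁, b₁) (a₂, b₂) (roc_mem P Q m₀) (roc_mem P Q m₁) (roc_mem P Q m₂)
        e01 e02 e12 ha01 ha12 hb01 hb12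
  have fin1 : Q (H₂ \ H₁) * P (H₁ \ H₀) ≠ ∞ :=
    ENNReal.mul_ne_top (measure_ne_top _ _) (measure_ne_top _ _)
  have fin2 : P (H₂ \ H₁) * Q (H₁ \ H₀) ≠ ∞ :=
    ENNReal.mul_ne_top (measure_ne_top _ _) (measure_ne_top _ _)
  rw [← ENNReal.toReal_le_toReal fin1 fin2, ENNReal.toReal_mul, ENNReal.toReal_mul,
    toReal_diff m₁ s₁₂, toReal_diff m₀ s₀₁, toReal_diff m₁ s₁₂, toReal_diff m₀ s₀₁]
  exact key.trans_eq (mul_comm _ _)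

lemma pair (h : Hyp P Q) {H₀ H₁ H₂ H₃ : Set ℝ} (m₀ : memH H₀) (m₁ : memH H₁) (m₂ : memH H₂)
    (m₃ : memH H₃) (s₀₁ : H₀ ⊆ H₁) (s₁₂ : H₁ ⊆ H₂) (s₂₃ : H₂ ⊆ H₃) :
    Q (H₃ \ H₂) * P (H₁ \ H₀) ≤ P (H₃ \ H₂) * Q (H₁ \ H₀) := by
  by_cases hPG : P (H₂ \ H₁) = 0
  · have h1 : Q (H₃ \ H₂) ≤ Q (H₃ \ H₁) := measure_mono (diff_subset_diff_right s₁₂)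
    have h2 : P (H₃ \ H₁) ≤ P (H₃ \ H₂) := by
      have : H₃ \ H₁ ⊆ (H₃ \ H₂) ∪ (H₂ \ H₁) := by
        intro x hx
        by_cases hx2 : x ∈ H₂
        · exact Or.inr ⟨hx2, hx.2⟩
        · exact Or.inl ⟨hx.1, hx2⟩
      calc P (H₃ \ H₁) ≤ P ((H₃ \ H₂) ∪ (H₂ \ H₁)) := measure_mono this
        _ ≤ P (H₃ \ H₂) + P (H₂ \ H₁) := measure_union_le _ _
        _ = P (H₃ \ H₂) := by rw [hPG, add_zero]
    calc Q (H₃ \ H₂) * P (H₁ \ H₀) ≤ Q (H₃ \ H₁) * P (H₁ \ H₀) := mul_le_mul_left h1 _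
      _ ≤ P (H₃ \ H₁) * Q (H₁ \ H₀) := adj h m₀ m₁ m₃ s₀₁ (s₁₂.trans s₂₃)
      _ ≤ P (H₃ \ H₂) * Q (H₁ \ H₀) := mul_le_mul_left h2 _
  by_cases hQG : Q (H₂ \ H₁) = 0
  · have h1 : P (H₁ \ H₀) ≤ P (H₂ \ H₀) := measure_mono (diff_subset_diff_left s₁₂)
    have h2 : Q (H₂ \ H₀) ≤ Q (H₁ \ H₀) := by
      have : H₂ \ H₀ ⊆ (H₂ \ H₁) ∪ (H₁ \ H₀) := by
        intro x hx
        by_cases hx1 : x ∈ H₁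
        · exact Or.inr ⟨hx1, hx.2⟩
        · exact Or.inl ⟨hx.1, hx1⟩
      calc Q (H₂ \ H₀) ≤ Q ((H₂ \ H₁) ∪ (H₁ \ H₀)) := measure_mono this
        _ ≤ Q (H₂ \ H₁) + Q (H₁ \ H₀) := measure_union_le _ _
        _ = Q (H₁ \ H₀) := by rw [hQG, zero_add]
    calc Q (H₃ \ H₂) * P (H₁ \ H₀) ≤ Q (H₃ \ H₂) * P (H₂ \ H₀) := mul_le_mul_right h1 _
      _ ≤ P (H₃ \ H₂) * Q (H₂ \ H₀) := adj h m₀ m₂ m₃ (s₀₁.trans s₁₂) s₂₃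
      _ ≤ P (H₃ \ H₂) * Q (H₁ \ H₀) := mul_le_mul_right h2 _
  · have k1 : Q (H₃ \ H₂) * P (H₂ \ H₁) ≤ P (H₃ \ H₂) * Q (H₂ \ H₁) := adj h m₁ m₂ m₃ s₁₂ s₂₃
    have k2 : Q (H₂ \ H₁) * P (H₁ \ H₀) ≤ P (H₂ \ H₁) * Q (H₁ \ H₀) := adj h m₀ m₁ m₂ s₀₁ s₁₂
    have hG0 : P (H₂ \ H₁) * Q (H₂ \ H₁) ≠ 0 := by
      simp [hPG, hQG]
    have hGt : P (H₂ \ H₁) * Q (H₂ \ H₁) ≠ ∞ :=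
      ENNReal.mul_ne_top (measure_ne_top _ _) (measure_ne_top _ _)
    rw [← ENNReal.mul_le_mul_iff_right hG0 hGt]
    calc P (H₂ \ H₁) * Q (H₂ \ H₁) * (Q (H₃ \ H₂) * P (H₁ \ H₀))
        = (Q (H₃ \ H₂) * P (H₂ \ H₁)) * (Q (H₂ \ H₁) * P (H₁ \ H₀)) := by ring
      _ ≤ (P (H₃ \ H₂) * Q (H₂ \ H₁)) * (P (H₂ \ H₁) * Q (H₁ \ H₀)) := mul_le_mul' k1 k2
      _ = P (H₂ \ H₁) * Q (H₂ \ H₁) * (P (H₃ \ H₂) * Q (H₁ \ H₀)) := by ring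
lemma exists_diff (C : Set ℝ) (hC : IsPreconnected C) (hne : C.Nonempty) :
    ∃ H K : Set ℝ, memH H ∧ memH K ∧ K ⊆ H ∧ C = H \ K ∧
      ({y : ℝ | ∀ x ∈ C, x < y} ⊆ K) ∧ (∀ y ∈ H, ∀ z : ℝ, (∀ x ∈ C, z < x) → z < y) := by
  have hmem := hC.mem_intervals
  simp only [mem_insert_iff, mem_singleton_iff] at hmem
  set a := sInf C with ha
  set b := sSup C with hb
  rcases hmem with hC' | hC' | hC' | hC' | hC' | hC' | hC' | hC' | hC' | hC'
  · -- Icc a b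
    have hab : a ≤ b := nonempty_Icc.mp (hC' ▸ hne)
    refine ⟨Ici a, Ioi b, Or.inr (Or.inr (Or.inr ⟨a, rfl⟩)), Or.inr (Or.inr (Or.inl ⟨b, rfl⟩)),
      fun z hz => le_trans hab (le_of_lt hz), by rw [hC', Ici_diff_Ioi], ?_, ?_⟩
    · intro y hy
      exact hy b (by rw [hC']; exact right_mem_Icc.mpr hab)
    · intro y hy z hz
      exact lt_of_lt_of_le (hz a (by rw [hC']; exact left_mem_Icc.mpr hab)) hy
  · -- Ico a b
    have hab : a < b := nonempty_Ico.mp (hC' ▸ hne)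
    refine ⟨Ici a, Ici b, Or.inr (Or.inr (Or.inr ⟨a, rfl⟩)), Or.inr (Or.inr (Or.inr ⟨b, rfl⟩)),
      Ici_subset_Ici.mpr hab.le, by rw [hC', Ici_diff_Ici], ?_, ?_⟩
    · intro y hy
      by_contra hby
      rw [mem_Ici, not_le] at hby
      exact absurd (hy (max a y) (by rw [hC']; exact mem_Ico.mpr ⟨le_max_left _ _, max_lt hab hby⟩))
        (not_lt.mpr (le_max_right a y))
    · intro y hy z hz
      exact lt_of_lt_of_le (hz a (by rw [hC']; exact left_mem_Ico.mpr hab)) hy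
  · -- Ioc a b
    have hab : a < b := nonempty_Ioc.mp (hC' ▸ hne)
    refine ⟨Ioi a, Ioi b, Or.inr (Or.inr (Or.inl ⟨a, rfl⟩)), Or.inr (Or.inr (Or.inl ⟨b, rfl⟩)),
      fun z hz => lt_trans hab hz, by rw [hC', Ioi_diff_Ioi], ?_, ?_⟩
    · intro y hy
      exact hy b (by rw [hC']; exact right_mem_Ioc.mpr hab)
    · intro y hy z hz
      have hza : z ≤ a := by
        by_contra hza
        push_neg at hza
        exact absurd (hz (min z b) (by rw [hC']; exact mem_Ioc.mpr ⟨lt_min hza hab, min_le_right _ _⟩))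
          (not_lt.mpr (min_le_left _ _))
      exact lt_of_le_of_lt hza hy
  · -- Ioo a b
    have hab : a < b := nonempty_Ioo.mp (hC' ▸ hne)
    refine ⟨Ioi a, Ici b, Or.inr (Or.inr (Or.inl ⟨a, rfl⟩)), Or.inr (Or.inr (Or.inr ⟨b, rfl⟩)),
      fun z hz => lt_of_lt_of_le hab hz, by rw [hC', Ioi_diff_Ici], ?_, ?_⟩
    · intro y hy
      by_contra hby
      rw [mem_Ici, not_le] at hby
      have h1 : a < max y ((a + b) / 2) := lt_of_lt_of_le (by linarith) (le_max_right _ _)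
      have h2 : max y ((a + b) / 2) < b := max_lt hby (by linarith)
      exact absurd (hy _ (by rw [hC']; exact mem_Ioo.mpr ⟨h1, h2⟩)) (not_lt.mpr (le_max_left _ _))
    · intro y hy z hz
      have hza : z ≤ a := by
        by_contra hza
        push_neg at hza
        have h1 : a < min z b := lt_min hza hab
        have h2 : a < (a + min z b) / 2 := by linarith
        have h35 : (a + min z b) / 2 < min z b := by linarith
        have h3 : (a + min z b) / 2 < b := lt_of_lt_of_le h35 (min_le_right z b)
        have h4 : (a + min z b) / 2 < z := lt_of_lt_of_le h35 (min_le_left z b)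
        exact absurd (hz _ (by rw [hC']; exact mem_Ioo.mpr ⟨h2, h3⟩)) (not_lt.mpr h4.le)
      exact lt_of_le_of_lt hza hy
  · -- Ici a
    refine ⟨Ici a, ∅, Or.inr (Or.inr (Or.inr ⟨a, rfl⟩)), Or.inl rfl, empty_subset _,
      by rw [hC', diff_empty], ?_, ?_⟩
    · intro y hy
      exact absurd (hy (max a y) (by rw [hC']; exact mem_Ici.mpr (le_max_left _ _)))
        (not_lt.mpr (le_max_right a y))
    · intro y hy z hz
      exact lt_of_lt_of_le (hz a (by rw [hC']; exact mem_Ici.mpr le_rfl)) hy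
  · -- Ioi a
    refine ⟨Ioi a, ∅, Or.inr (Or.inr (Or.inl ⟨a, rfl⟩)), Or.inl rfl, empty_subset _,
      by rw [hC', diff_empty], ?_, ?_⟩
    · intro y hy
      exact absurd (hy (max (a + 1) y)
        (by rw [hC']; exact mem_Ioi.mpr (lt_of_lt_of_le (lt_add_one a) (le_max_left _ _))))
        (not_lt.mpr (le_max_right _ y))
    · intro y hy z hz
      have hza : z ≤ a := by
        by_contra hza
        push_neg at hza
        have := hz ((a + z) / 2) (by rw [hC']; exact mem_Ioi.mpr (by linarith))
        linarith
      exact lt_of_le_of_lt hza hy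
  · -- Iic b
    refine ⟨univ, Ioi b, Or.inr (Or.inl rfl), Or.inr (Or.inr (Or.inl ⟨b, rfl⟩)),
      subset_univ _, by rw [hC', ← compl_Ioi, compl_eq_univ_diff], ?_, ?_⟩
    · intro y hy
      exact hy b (by rw [hC']; exact mem_Iic.mpr le_rfl)
    · intro y _ z hz
      have h1 : min z b - 1 ≤ b := by linarith [min_le_right z b]
      have := hz (min z b - 1) (by rw [hC']; exact mem_Iic.mpr h1)
      linarith [min_le_left z b]
  · -- Iio b
    refine ⟨univ, Ici b, Or.inr (Or.inl rfl), Or.inr (Or.inr (Or.inr ⟨b, rfl⟩)),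
      subset_univ _, by rw [hC', ← compl_Ici, compl_eq_univ_diff], ?_, ?_⟩
    · intro y hy
      by_contra hby
      rw [mem_Ici, not_le] at hby
      exact absurd (hy (max y (b - 1)) (by rw [hC']; exact mem_Iio.mpr (max_lt hby (by linarith))))
        (not_lt.mpr (le_max_left _ _))
    · intro y _ z hz
      have h1 : min z b - 1 < b := by linarith [min_le_right z b]
      have := hz (min z b - 1) (by rw [hC']; exact mem_Iio.mpr h1)
      linarith [min_le_left z b]
  · -- univ
    refine ⟨univ, ∅, Or.inr (Or.inl rfl), Or.inl rfl, empty_subset _,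
      by rw [hC', diff_empty], ?_, ?_⟩
    · intro y hy
      exact absurd (hy y (by rw [hC']; trivial)) (lt_irrefl y)
    · intro y _ z hz
      exact absurd (hz z (by rw [hC']; trivial)) (lt_irrefl z)
  · exact absurd hC' (Nonempty.ne_empty hne)

lemma open_decomp (μ ν : Measure ℝ) {c d : ℝ≥0∞} {T : Set ℝ}
    (h : ∀ C : Set ℝ, IsOpen C → IsPreconnected C → C ⊆ T → c * μ C ≤ d * ν C)
    {W : Set ℝ} (hW : IsOpen W) (hWT : W ⊆ T) : c * μ W ≤ d * ν W := by
  classical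
  set f : ℚ → Set ℝ := fun q => if (q : ℝ) ∈ W then connectedComponentIn W (q : ℝ) else ∅ with hf
  have hfW : ∀ q, f q ⊆ W := by
    intro q
    by_cases hq : (q : ℝ) ∈ W <;> simp [hf, hq, connectedComponentIn_subset]
  have hfopen : ∀ q, IsOpen (f q) := by
    intro q
    by_cases hq : (q : ℝ) ∈ W <;> simp [hf, hq, hW.connectedComponentIn, isOpen_empty]
  have hfconn : ∀ q, IsPreconnected (f q) := by
    intro q
    by_cases hq : (q : ℝ) ∈ W <;>
      simp [hf, hq, isPreconnected_connectedComponentIn, isPreconnected_empty]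
  have hcover : W = ⋃₀ (range f) := by
    apply Subset.antisymm
    · intro x hx
      have hCopen : IsOpen (connectedComponentIn W x) := hW.connectedComponentIn
      have hxC : x ∈ connectedComponentIn W x := mem_connectedComponentIn hx
      obtain ⟨ε, hε, hball⟩ := Metric.isOpen_iff.mp hCopen x hxC
      obtain ⟨q, hq1, hq2⟩ := exists_rat_btwn (show x - ε < x + ε by linarith)
      have hqC : (q : ℝ) ∈ connectedComponentIn W x := by
        apply hball
        rw [Real.ball_eq_Ioo]
        exact ⟨hq1, hq2⟩
      have hqW : (q : ℝ) ∈ W := connectedComponentIn_subset _ _ hqC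
      have : connectedComponentIn W x = connectedComponentIn W (q : ℝ) :=
        connectedComponentIn_eq hqC
      exact ⟨f q, mem_range_self q, by rw [hf]; simp only [hqW, if_true]; rw [← this]; exact hxC⟩
    · exact sUnion_subset fun s ⟨q, hq⟩ => hq ▸ hfW q
  have hdisj : (range f).Pairwise Disjoint := by
    rintro s ⟨q, rfl⟩ t ⟨r, rfl⟩ hst
    by_cases hq : (q : ℝ) ∈ W
    · by_cases hr : (r : ℝ) ∈ W
      · simp only [hf, hq, hr, if_true]
        by_contra hnd
        obtain ⟨z, hz1, hz2⟩ := not_disjoint_iff.mp hnd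
        have e1 : connectedComponentIn W (q : ℝ) = connectedComponentIn W z :=
          connectedComponentIn_eq hz1
        have e2 : connectedComponentIn W (r : ℝ) = connectedComponentIn W z :=
          connectedComponentIn_eq hz2
        exact hst (by simp only [hf, hq, hr, if_true]; rw [e1, e2])
      · simp [hf, hr]
    · simp [hf, hq]
  have hmeas : ∀ s ∈ range f, MeasurableSet s := by
    rintro s ⟨q, rfl⟩
    exact (hfopen q).measurableSet
  have hcount : (range f).Countable := countable_range f
  have hμ : μ W = ∑' s : (range f), μ s := by
    rw [hcover]; exact measure_sUnion hcount hdisj hmeas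
  have hν : ν W = ∑' s : (range f), ν s := by
    rw [hcover]; exact measure_sUnion hcount hdisj hmeas
  rw [hμ, hν, ← ENNReal.tsum_mul_left, ← ENNReal.tsum_mul_left]
  apply ENNReal.tsum_le_tsum
  rintro ⟨s, q, rfl⟩
  exact h (f q) (hfopen q) (hfconn q) ((hfW q).trans hWT)

lemma meas_le (μ ν : Measure ℝ) [IsFiniteMeasure μ] [IsFiniteMeasure ν] {c d : ℝ≥0∞}
    (hd : d ≠ ∞) {T : Set ℝ} (hT : IsOpen T)
    (h : ∀ C : Set ℝ, IsOpen C → IsPreconnected C → C ⊆ T → c * μ C ≤ d * ν C)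
    {A : Set ℝ} (hA : MeasurableSet A) (hAT : A ⊆ T) : c * μ A ≤ d * ν A := by
  apply ENNReal.le_of_forall_pos_le_add
  intro ε hε hlt
  have hd1 : d + 1 ≠ 0 := by simp
  have hd1t : d + 1 ≠ ∞ := by simp [hd]
  set ε₀ : ℝ≥0∞ := (ε : ℝ≥0∞) / (d + 1) with hε₀
  have hε₀0 : ε₀ ≠ 0 := by
    rw [hε₀]
    simp only [ne_eq, ENNReal.div_eq_zero_iff, not_or]
    exact ⟨by exact_mod_cast hε.ne', hd1t⟩
  have hdε : d * ε₀ ≤ (ε : ℝ≥0∞) := by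
    calc d * ε₀ ≤ (d + 1) * ε₀ := mul_le_mul_left (self_le_add_right d 1) ε₀
      _ = (ε : ℝ≥0∞) := ENNReal.mul_div_cancel hd1 hd1t
  have hνA : ν A ≠ ∞ := measure_ne_top ν A
  obtain ⟨U, hAU, hUopen, hUlt⟩ :=
    Set.exists_isOpen_lt_of_lt A _ (ENNReal.lt_add_right hνA hε₀0)
  calc c * μ A ≤ c * μ (U ∩ T) := mul_le_mul_right (measure_mono (subset_inter hAU hAT)) c
    _ ≤ d * ν (U ∩ T) := open_decomp μ ν h (hUopen.inter hT) inter_subset_right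
    _ ≤ d * ν U := mul_le_mul_right (measure_mono inter_subset_left) d
    _ ≤ d * (ν A + ε₀) := mul_le_mul_right hUlt.le d
    _ = d * ν A + d * ε₀ := mul_add d _ _
    _ ≤ d * ν A + ε := add_le_add_right hdε _

lemma sep (h : Hyp P Q) {C C' : Set ℝ} (hC : IsPreconnected C) (hC' : IsPreconnected C')
    (hsep : ∀ x ∈ C, ∀ x' ∈ C', x < x') : Q C * P C' ≤ P C * Q C' := by
  rcases C.eq_empty_or_nonempty with rfl | hne
  · simp
  rcases C'.eq_empty_or_nonempty with rfl | hne'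
  · simp
  obtain ⟨H, K, mH, mK, hKH, hCd, hU, hH⟩ := exists_diff C hC hne
  obtain ⟨H', K', mH', mK', hKH', hCd', hU', hH'⟩ := exists_diff C' hC' hne'
  have hsub : H' ⊆ K := by
    intro y hy
    apply hU
    intro x hx
    exact hH' y hy x (fun x' hx' => hsep x hx x' hx')
  rw [hCd, hCd']
  exact pair h mK' mH' mK mH hKH' hsub hKH

lemma right_reg (h : Hyp P Q) {t : ℝ} {L B : Set ℝ} (hL : IsPreconnected L) (hLs : L ⊆ Iic t)
    (hB : MeasurableSet B) (hBs : B ⊆ Ioi t) : Q L * P B ≤ P L * Q B :=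
  meas_le P Q (measure_ne_top P L) isOpen_Ioi
    (fun C _ hCc hCT => sep h hL hCc (fun x hx x' hx' => lt_of_le_of_lt (hLs hx) (hCT hx')))
    hB hBs

lemma left_reg (h : Hyp P Q) {t : ℝ} {A R : Set ℝ} (hA : MeasurableSet A) (hAs : A ⊆ Iio t)
    (hR : ∀ C : Set ℝ, IsPreconnected C → C ⊆ Iio t → Q C * P R ≤ P C * Q R) :
    Q A * P R ≤ P A * Q R := by
  have := meas_le Q P (c := P R) (d := Q R) (measure_ne_top Q R) isOpen_Iio
    (fun C _ hCc hCT => by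
      rw [mul_comm (P R), mul_comm (Q R)]
      exact hR C hCc hCT) hA hAs
  rwa [mul_comm (P R), mul_comm (Q R)] at this

lemma main (h : Hyp P Q) : IsLR P Q := by
  intro A B hA hB hAB
  rcases A.eq_empty_or_nonempty with rfl | hAne
  · simp
  rcases B.eq_empty_or_nonempty with rfl | hBne
  · simp
  obtain ⟨b₀, hb₀⟩ := hBne
  have hbdd : BddAbove A := ⟨b₀, fun a ha => hAB a ha b₀ hb₀⟩
  set s := sSup A with hs
  have hAs : A ⊆ Iic s := fun a ha => le_csSup hbdd ha
  have hBs : B ⊆ Ici s := fun b hb => csSup_le hAne (fun a ha => hAB a ha b hb)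
  set A' := A \ {s} with hA'def
  set B' := B \ {s} with hB'def
  set As := A ∩ {s} with hAsdef
  set Bs := B ∩ {s} with hBsdef
  have hA' : MeasurableSet A' := hA.diff (measurableSet_singleton s)
  have hB' : MeasurableSet B' := hB.diff (measurableSet_singleton s)
  have hA's : A' ⊆ Iio s := fun x hx => lt_of_le_of_ne (hAs hx.1) (by simpa using hx.2)
  have hB's : B' ⊆ Ioi s := fun x hx => lt_of_le_of_ne' (hBs hx.1) (by simpa using hx.2)
  have hAss : As ⊆ {s} := inter_subset_right
  have hBss : Bs ⊆ {s} := inter_subset_right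
  have hAsc : IsPreconnected As := (subsingleton_singleton.anti hAss).isPreconnected
  have hBsc : IsPreconnected Bs := (subsingleton_singleton.anti hBss).isPreconnected
  have T1 : Q A' * P B' ≤ P A' * Q B' :=
    left_reg h hA' hA's (fun C hC hCs => right_reg h hC (fun x hx => mem_Iic.mpr (le_of_lt (hCs hx))) hB' hB's)
  have T2 : Q A' * P Bs ≤ P A' * Q Bs :=
    left_reg h hA' hA's (fun C hC hCs =>
      sep h hC hBsc (fun x hx x' hx' => lt_of_lt_of_le (hCs hx) (le_of_eq (hBss hx').symm)))
  have T3 : Q As * P B' ≤ P As * Q B' :=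
    right_reg h hAsc (fun x hx => mem_Iic.mpr (le_of_eq (hAss hx))) hB' hB's
  have T4 : Q As * P Bs ≤ P As * Q Bs := by
    by_cases hsA : s ∈ A
    · by_cases hsB : s ∈ B
      · have e1 : As = {s} := inter_eq_right.mpr (singleton_subset_iff.mpr hsA)
        have e2 : Bs = {s} := inter_eq_right.mpr (singleton_subset_iff.mpr hsB)
        rw [e1, e2, mul_comm]
      · have e2 : Bs = ∅ := by
          rw [hBsdef, inter_singleton_eq_empty.mpr hsB]
        simp [e2]
    · have e1 : As = ∅ := by
        rw [hAsdef, inter_singleton_eq_empty.mpr hsA]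
      simp [e1]
  have hPA : P As + P A' = P A := measure_inter_add_diff A (measurableSet_singleton s)
  have hQA : Q As + Q A' = Q A := measure_inter_add_diff A (measurableSet_singleton s)
  have hPB : P Bs + P B' = P B := measure_inter_add_diff B (measurableSet_singleton s)
  have hQB : Q Bs + Q B' = Q B := measure_inter_add_diff B (measurableSet_singleton s)
  calc P B * Q A = (P Bs + P B') * (Q As + Q A') := by rw [hPB, hQA]
    _ = Q As * P Bs + Q A' * P Bs + (Q As * P B' + Q A' * P B') := by ring
    _ ≤ P As * Q Bs + P A' * Q Bs + (P As * Q B' + P A' * Q B') :=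
        add_le_add (add_le_add T4 T2) (add_le_add T3 T1)
    _ = (P As + P A') * (Q Bs + Q B') := by ring
    _ = P A * Q B := by rw [hPA, hQB]

end StmtAux

/-- **Corollary (lr-order ⇔ concavity of the ROC curve).** `P ≤lr Q` iff for
any three different points `(a₀,b₀), (a₁,b₁), (a₂,b₂)` of `ROC(P,Q)` with
`a₀ ≤ a₁ ≤ a₂` and `b₀ ≤ b₁ ≤ b₂` one has
`(b₂ - b₁)(a₁ - a₀) ≤ (b₁ - b₀)(a₂ - a₁)`. -/
theorem stmt5 (P Q : Measure ℝ) [IsProbabilityMeasure P] [IsProbabilityMeasure Q] :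
    IsLR P Q ↔
      ∀ p₀ p₁ p₂ : ℝ × ℝ, p₀ ∈ ROC P Q → p₁ ∈ ROC P Q → p₂ ∈ ROC P Q →
        p₀ ≠ p₁ → p₀ ≠ p₂ → p₁ ≠ p₂ →
        p₀.1 ≤ p₁.1 → p₁.1 ≤ p₂.1 → p₀.2 ≤ p₁.2 → p₁.2 ≤ p₂.2 →
        (p₂.2 - p₁.2) * (p₁.1 - p₀.1) ≤ (p₁.2 - p₀.2) * (p₂.1 - p₁.1) := by
  constructor
  · intro hLR p₀ p₁ p₂ h₀ h₁ h₂ ne01 ne02 ne12 a01 a12 b01 b12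
    obtain ⟨H₀, m₀, rfl⟩ := h₀
    obtain ⟨H₁, m₁, rfl⟩ := h₁
    obtain ⟨H₂, m₂, rfl⟩ := h₂
    have m₀ : StmtAux.memH H₀ := m₀
    have m₁ : StmtAux.memH H₁ := m₁
    have m₂ : StmtAux.memH H₂ := m₂
    dsimp only at a01 a12 b01 b12 ⊢
    rcases m₀.total m₁ with s01 | s10
    swap
    · exact absurd (Prod.ext
        (le_antisymm a01 (ENNReal.toReal_mono (measure_ne_top P H₀) (measure_mono s10)))
        (le_antisymm b01 (ENNReal.toReal_mono (measure_ne_top Q H₀) (measure_mono s10)))) ne01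
    rcases m₁.total m₂ with s12 | s21
    swap
    · exact absurd (Prod.ext
        (le_antisymm a12 (ENNReal.toReal_mono (measure_ne_top P H₁) (measure_mono s21)))
        (le_antisymm b12 (ENNReal.toReal_mono (measure_ne_top Q H₁) (measure_mono s21)))) ne12
    have hord : ∀ a ∈ H₂ \ H₁, ∀ b ∈ H₁ \ H₀, a ≤ b := fun a ha b hb => m₁.sep ha.2 hb.1
    have hlr := hLR (H₂ \ H₁) (H₁ \ H₀) (m₂.meas.diff m₁.meas) (m₁.meas.diff m₀.meas) hord
    have hreal := ENNReal.toReal_mono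
      (ENNReal.mul_ne_top (measure_ne_top _ _) (measure_ne_top _ _)) hlr
    rw [ENNReal.toReal_mul, ENNReal.toReal_mul, StmtAux.toReal_diff m₀ s01,
      StmtAux.toReal_diff m₁ s12, StmtAux.toReal_diff m₀ s01,
      StmtAux.toReal_diff m₁ s12] at hreal
    calc ((Q H₂).toReal - (Q H₁).toReal) * ((P H₁).toReal - (P H₀).toReal)
        = ((P H₁).toReal - (P H₀).toReal) * ((Q H₂).toReal - (Q H₁).toReal) := mul_comm _ _
      _ ≤ ((P H₂).toReal - (P H₁).toReal) * ((Q H₁).toReal - (Q H₀).toReal) := hreal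
      _ = ((Q H₁).toReal - (Q H₀).toReal) * ((P H₂).toReal - (P H₁).toReal) := mul_comm _ _
  · intro h
    exact StmtAux.main h
end

section
/- Let P and Q be Borel probability measures on ℝ with distribution functions F and G, and suppose Q is absolutely continuous with respect to P. Then P ≤lr Q if and only if the ordinal dominance curve H(α) := G(F⁻¹(α)) is convex on the image Im(F) := {F(x) : x ∈ [−∞,∞]}, i.e. for all r < s < t in Im(F), (H(s)−H(r))/(s−r) ≤ (H(t)−H(s))/(t−s). -/
open MeasureTheory Set
open scoped ENNReal

/-- The distribution function of `P`, extended to `[-∞,∞]`: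
`F(x) = P({t : ℝ | t ≤ x})`, so `F(-∞) = 0` and `F(∞) = 1`. -/
noncomputable def distFunE (P : Measure ℝ) : EReal → ℝ :=
  fun x => (P {t : ℝ | (t : EReal) ≤ x}).toReal

/-- The quantile function `F⁻¹(α) = min {x ∈ [-∞,∞] : F(x) ≥ α}`. -/
noncomputable def quantE (P : Measure ℝ) (α : ℝ) : EReal :=
  sInf {x : EReal | α ≤ distFunE P x}

open Filter Topology Function

section basics
variable (P : Measure ℝ) [IsProbabilityMeasure P]

lemma setE_coe (x : ℝ) : {t : ℝ | (t : EReal) ≤ (x:EReal)} = Iic x := by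
  ext t; simp [EReal.coe_le_coe_iff]

lemma setE_bot : {t : ℝ | (t : EReal) ≤ (⊥:EReal)} = ∅ := by
  ext t; simp

lemma setE_top : {t : ℝ | (t : EReal) ≤ (⊤:EReal)} = univ := by
  ext t; simp [le_top]

lemma distFunE_coe (x : ℝ) : distFunE P (x:EReal) = (P (Iic x)).toReal := by
  rw [distFunE, setE_coe]

lemma distFunE_bot : distFunE P ⊥ = 0 := by
  rw [distFunE, setE_bot]; simp

lemma distFunE_top : distFunE P ⊤ = 1 := by
  rw [distFunE, setE_top]; simp

lemma measurable_setE (b : EReal) : MeasurableSet {t : ℝ | (t : EReal) ≤ b} :=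
  measurable_coe_real_ereal measurableSet_Iic

lemma distFunE_mono : Monotone (distFunE P) := by
  intro x y hxy
  apply ENNReal.toReal_mono (measure_ne_top _ _)
  exact measure_mono (fun t ht => le_trans ht hxy)

lemma distFunE_le_one (x : EReal) : distFunE P x ≤ 1 := by
  rw [← distFunE_top P]; exact distFunE_mono P le_top
end basics

set_option linter.unusedSectionVars false

section limits
variable (μ : Measure ℝ) [IsFiniteMeasure μ]

lemma seq_lt (x y : ℝ) (h : x < y) : ∀ᶠ n : ℕ in atTop, x < y - 1/(n+1) := by
  obtain ⟨n₀, hn₀⟩ := exists_nat_one_div_lt (sub_pos.mpr h)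
  filter_upwards [eventually_ge_atTop n₀] with n hn
  have hc : (n₀:ℝ) ≤ n := Nat.cast_le.mpr hn
  have h1 : (1:ℝ)/(n+1) ≤ 1/(n₀+1) := by
    apply one_div_le_one_div_of_le
    · positivity
    · linarith
  linarith

lemma tendsto_Iic_add (x : ℝ) :
    Tendsto (fun n : ℕ => μ (Iic (x + 1/(n+1)))) atTop (𝓝 (μ (Iic x))) := by
  have h : ⋂ n : ℕ, Iic (x + 1/((n:ℝ)+1)) = Iic x := by
    ext y
    simp only [mem_iInter, mem_Iic]
    constructor
    · intro hy
      by_contra hxy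
      push_neg at hxy
      obtain ⟨n, hn⟩ := exists_nat_one_div_lt (sub_pos.mpr hxy)
      have := hy n
      push_cast at hn ⊢
      linarith
    · intro hy n
      have : (0:ℝ) < 1/((n:ℝ)+1) := by positivity
      linarith
  have := tendsto_measure_iInter_atTop (μ := μ)
    (s := fun n : ℕ => Iic (x + 1/((n:ℝ)+1)))
    (fun n => measurableSet_Iic.nullMeasurableSet)
    (fun m n hmn => by
      apply Iic_subset_Iic.mpr
      have : (1:ℝ)/((n:ℝ)+1) ≤ 1/((m:ℝ)+1) := by
        apply one_div_le_one_div_of_le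
        · positivity
        · exact_mod_cast Nat.succ_le_succ hmn
      linarith)
    ⟨0, measure_ne_top _ _⟩
  rwa [h] at this

lemma tendsto_Iic_bot :
    Tendsto (fun n : ℕ => μ (Iic (-(n:ℝ)-1))) atTop (𝓝 0) := by
  have h : ⋂ n : ℕ, Iic (-(n:ℝ)-1) = ∅ := by
    ext y
    simp only [mem_iInter, mem_Iic, mem_empty_iff_false, iff_false, not_forall]
    push_neg
    obtain ⟨n, hn⟩ := exists_nat_gt (-y-1)
    exact ⟨n, by linarith⟩
  have := tendsto_measure_iInter_atTop (μ := μ)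
    (s := fun n : ℕ => Iic (-(n:ℝ)-1))
    (fun n => measurableSet_Iic.nullMeasurableSet)
    (fun m n hmn => by
      apply Iic_subset_Iic.mpr
      have : (m:ℝ) ≤ n := Nat.cast_le.mpr hmn
      linarith)
    ⟨0, measure_ne_top _ _⟩
  rw [h] at this
  simpa [Function.comp_def] using this

lemma tendsto_Ioc_atom (c : ℝ) :
    Tendsto (fun n : ℕ => μ (Ioc (c - 1/(n+1)) c)) atTop (𝓝 (μ {c})) := by
  have h : ⋂ n : ℕ, Ioc (c - 1/((n:ℝ)+1)) c = {c} := by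
    ext y
    simp only [mem_iInter, mem_Ioc, mem_singleton_iff]
    constructor
    · intro hy
      have hyc : y ≤ c := (hy 0).2
      rcases eq_or_lt_of_le hyc with h | h
      · exact h
      · exfalso
        obtain ⟨n, hn⟩ := exists_nat_one_div_lt (sub_pos.mpr h)
        have := (hy n).1
        linarith
    · rintro rfl n
      have : (0:ℝ) < 1/((n:ℝ)+1) := by positivity
      constructor <;> linarith
  have := tendsto_measure_iInter_atTop (μ := μ)
    (s := fun n : ℕ => Ioc (c - 1/((n:ℝ)+1)) c)
    (fun n => measurableSet_Ioc.nullMeasurableSet)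
    (fun m n hmn => by
      apply Ioc_subset_Ioc_left
      have : (1:ℝ)/((n:ℝ)+1) ≤ 1/((m:ℝ)+1) := by
        apply one_div_le_one_div_of_le
        · positivity
        · exact_mod_cast Nat.succ_le_succ hmn
      linarith)
    ⟨0, measure_ne_top _ _⟩
  rwa [h] at this

lemma tendsto_Ioc_left (u c : ℝ) :
    Tendsto (fun n : ℕ => μ (Ioc u (c - 1/(n+1)))) atTop (𝓝 (μ (Ioo u c))) := by
  have h : ⋃ n : ℕ, Ioc u (c - 1/((n:ℝ)+1)) = Ioo u c := by
    ext y
    simp only [mem_iUnion, mem_Ioc, mem_Ioo]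
    constructor
    · rintro ⟨n, hn1, hn2⟩
      have : (0:ℝ) < 1/((n:ℝ)+1) := by positivity
      exact ⟨hn1, by linarith⟩
    · rintro ⟨h1, h2⟩
      obtain ⟨n, hn⟩ := exists_nat_one_div_lt (sub_pos.mpr h2)
      exact ⟨n, h1, by linarith⟩
  have := tendsto_measure_iUnion_atTop (μ := μ)
    (s := fun n : ℕ => Ioc u (c - 1/((n:ℝ)+1)))
    (fun m n hmn => by
      apply Ioc_subset_Ioc_right
      have : (1:ℝ)/((n:ℝ)+1) ≤ 1/((m:ℝ)+1) := by
        apply one_div_le_one_div_of_le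
        · positivity
        · exact_mod_cast Nat.succ_le_succ hmn
      linarith)
  rwa [h] at this

lemma tendsto_Ioc_bot (x : ℝ) :
    Tendsto (fun n : ℕ => μ (Ioc (x - (n:ℝ) - 1) x)) atTop (𝓝 (μ (Iic x))) := by
  have h : ⋃ n : ℕ, Ioc (x - (n:ℝ) - 1) x = Iic x := by
    ext y
    simp only [mem_iUnion, mem_Ioc, mem_Iic]
    constructor
    · rintro ⟨n, _, h2⟩; exact h2
    · intro hy
      obtain ⟨n, hn⟩ := exists_nat_gt (x - y - 1)
      exact ⟨n, by linarith, hy⟩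
  have := tendsto_measure_iUnion_atTop (μ := μ)
    (s := fun n : ℕ => Ioc (x - (n:ℝ) - 1) x)
    (fun m n hmn => by
      apply Ioc_subset_Ioc_left
      have : (m:ℝ) ≤ n := Nat.cast_le.mpr hmn
      linarith)
  rwa [h] at this

end limits

section quant
variable (P : Measure ℝ) [IsProbabilityMeasure P]

lemma quantE_le {α : ℝ} {x : EReal} (h : α ≤ distFunE P x) : quantE P α ≤ x := sInf_le h

lemma le_distFunE_quantE (α : ℝ) (hα : α ≤ 1) : α ≤ distFunE P (quantE P α) := by
  have hgt : ∀ x : EReal, quantE P α < x → α ≤ distFunE P x := by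
    intro x hx
    obtain ⟨y, hy, hyx⟩ := sInf_lt_iff.mp hx
    exact le_trans hy (distFunE_mono P hyx.le)
  suffices H : ∀ m : EReal, (∀ x : EReal, m < x → α ≤ distFunE P x) → α ≤ distFunE P m by
    exact H _ hgt
  intro m hm
  induction m using EReal.rec with
  | bot =>
    rw [distFunE_bot]
    have hev : ∀ n : ℕ, α ≤ (P (Iic (-(n:ℝ)-1))).toReal := by
      intro n
      have := hm ((-(n:ℝ)-1 : ℝ) : EReal) (EReal.bot_lt_coe _)
      rwa [distFunE_coe] at this
    have ht : Tendsto (fun n : ℕ => (P (Iic (-(n:ℝ)-1))).toReal) atTop (𝓝 (0:ℝ)) := by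
      have h0 : ((0:ℝ≥0∞)).toReal = 0 := by simp
      have := (ENNReal.tendsto_toReal (a := 0) (by simp)).comp (tendsto_Iic_bot P)
      rwa [h0] at this
    exact ge_of_tendsto' ht hev
  | coe m =>
    rw [distFunE_coe]
    have hev : ∀ n : ℕ, α ≤ (P (Iic (m + 1/(n+1)))).toReal := by
      intro n
      have hlt : ((m : EReal)) < ((m + 1/(n+1) : ℝ) : EReal) := by
        rw [EReal.coe_lt_coe_iff]
        have : (0:ℝ) < 1/((n:ℝ)+1) := by positivity
        linarith
      have := hm _ hlt
      rwa [distFunE_coe] at this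
    have ht : Tendsto (fun n : ℕ => (P (Iic (m + 1/(n+1)))).toReal) atTop
        (𝓝 ((P (Iic m)).toReal)) :=
      (ENNReal.tendsto_toReal (measure_ne_top _ _)).comp (tendsto_Iic_add P m)
    exact ge_of_tendsto' ht hev
  | top => rw [distFunE_top]; exact hα

lemma distFunE_quantE_eq {r : ℝ} (hr : r ∈ range (distFunE P)) :
    distFunE P (quantE P r) = r := by
  obtain ⟨x₀, hx₀⟩ := hr
  subst hx₀
  have h2 : quantE P (distFunE P x₀) ≤ x₀ := quantE_le P le_rfl
  exact le_antisymm (distFunE_mono P h2)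
    (le_distFunE_quantE P _ (distFunE_le_one P x₀))

lemma distFunE_quantE_ac (Q : Measure ℝ) [IsProbabilityMeasure Q] (hac : Q ≪ P) (x : EReal) :
    distFunE Q (quantE P (distFunE P x)) = distFunE Q x := by
  set m := quantE P (distFunE P x) with hm
  have hmx : m ≤ x := quantE_le P (le_refl _)
  have hF : distFunE P m = distFunE P x :=
    le_antisymm (distFunE_mono P hmx) (le_distFunE_quantE P _ (distFunE_le_one P x))
  have hPset : P {t:ℝ | (t:EReal) ≤ x} = P {t:ℝ | (t:EReal) ≤ m} :=
    ((ENNReal.toReal_eq_toReal_iff' (measure_ne_top _ _) (measure_ne_top _ _)).mp hF).symm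
  have hsub : {t:ℝ | (t:EReal) ≤ m} ⊆ {t:ℝ | (t:EReal) ≤ x} := fun t ht => le_trans ht hmx
  have hdiff : P ({t:ℝ | (t:EReal) ≤ x} \ {t:ℝ | (t:EReal) ≤ m}) = 0 := by
    rw [measure_diff hsub (measurable_setE m).nullMeasurableSet (measure_ne_top _ _),
      hPset, tsub_self]
  have hQdiff : Q ({t:ℝ | (t:EReal) ≤ x} \ {t:ℝ | (t:EReal) ≤ m}) = 0 := hac hdiff
  have hQ : Q {t:ℝ | (t:EReal) ≤ x} = Q {t:ℝ | (t:EReal) ≤ m} := by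
    apply le_antisymm
    · calc Q {t:ℝ | (t:EReal) ≤ x}
          ≤ Q ({t:ℝ | (t:EReal) ≤ m} ∪ ({t:ℝ | (t:EReal) ≤ x} \ {t:ℝ | (t:EReal) ≤ m})) :=
            measure_mono (by intro t ht; by_cases h : (t:EReal) ≤ m
                             · exact Or.inl h
                             · exact Or.inr ⟨ht, h⟩)
      _ ≤ Q {t:ℝ | (t:EReal) ≤ m} + Q ({t:ℝ | (t:EReal) ≤ x} \ {t:ℝ | (t:EReal) ≤ m}) :=
            measure_union_le _ _
      _ = Q {t:ℝ | (t:EReal) ≤ m} := by rw [hQdiff, add_zero]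
    · exact measure_mono hsub
  show (Q _).toReal = (Q _).toReal
  rw [hQ]

end quant

section compare
open Function

lemma measure_Iic_split (μ : Measure ℝ) (u v : ℝ) (h : u ≤ v) :
    μ (Iic v) = μ (Iic u) + μ (Ioc u v) := by
  rw [← measure_union (Iic_disjoint_Ioc le_rfl) measurableSet_Ioc, Iic_union_Ioc_eq_Iic h]

lemma tendsto_toReal_Iic_atBot (μ : Measure ℝ) [IsFiniteMeasure μ] :
    Tendsto (fun x : ℝ => (μ (Iic x)).toReal) atBot (𝓝 0) := by
  have hseq : Tendsto (fun n : ℕ => (μ (Iic (-(n:ℝ)-1))).toReal) atTop (𝓝 (0:ℝ)) := by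
    have h0 : ((0:ℝ≥0∞)).toReal = 0 := by simp
    have := (ENNReal.tendsto_toReal (a := 0) (by simp)).comp (tendsto_Iic_bot μ)
    rwa [h0] at this
  rw [Metric.tendsto_nhds]
  intro ε hε
  have := (hseq.eventually (gt_mem_nhds hε)).exists
  obtain ⟨n, hn⟩ := this
  rw [eventually_atBot]
  refine ⟨-(n:ℝ)-1, fun x hx => ?_⟩
  have hm : (μ (Iic x)).toReal ≤ (μ (Iic (-(n:ℝ)-1))).toReal :=
    ENNReal.toReal_mono (measure_ne_top _ _) (measure_mono (Iic_subset_Iic.mpr hx))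
  rw [Real.dist_eq, sub_zero, abs_of_nonneg ENNReal.toReal_nonneg]
  exact lt_of_le_of_lt hm hn

lemma measure_le_of_Ioc_le (μ ν : Measure ℝ) [IsFiniteMeasure μ] [IsFiniteMeasure ν]
    (h : ∀ u v : ℝ, u < v → μ (Ioc u v) ≤ ν (Ioc u v)) : μ ≤ ν := by
  -- CDF inequality
  have hle : ∀ x : ℝ, μ (Iic x) ≤ ν (Iic x) := by
    intro x
    refine le_of_tendsto_of_tendsto' (tendsto_Ioc_bot μ x) (tendsto_Ioc_bot ν x) ?_
    intro n
    have : (0:ℝ) ≤ (n:ℝ) := Nat.cast_nonneg n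
    exact h _ _ (by linarith)
  set f : ℝ → ℝ := fun x => (ν (Iic x)).toReal - (μ (Iic x)).toReal with hf
  have hf0 : ∀ x, 0 ≤ f x := by
    intro x
    simp only [hf, sub_nonneg]
    exact ENNReal.toReal_mono (measure_ne_top _ _) (hle x)
  have hdiff : ∀ u v : ℝ, u ≤ v →
      f v - f u = (ν (Ioc u v)).toReal - (μ (Ioc u v)).toReal := by
    intro u v huv
    simp only [hf]
    rw [measure_Iic_split μ u v huv, measure_Iic_split ν u v huv,
      ENNReal.toReal_add (measure_ne_top _ _) (measure_ne_top _ _),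
      ENNReal.toReal_add (measure_ne_top _ _) (measure_ne_top _ _)]
    ring
  have hmono : Monotone f := by
    intro u v huv
    have := hdiff u v huv
    rcases eq_or_lt_of_le huv with rfl | hlt
    · exact le_refl _
    · have h2 : (μ (Ioc u v)).toReal ≤ (ν (Ioc u v)).toReal :=
        ENNReal.toReal_mono (measure_ne_top _ _) (h u v hlt)
      linarith
  -- right continuity
  have hrc : ∀ x : ℝ, rightLim f x = f x := by
    intro x
    rw [Monotone.rightLim_eq_sInf hmono]
    apply le_antisymm
    · have ht : Tendsto (fun n : ℕ => f (x + 1/(n+1))) atTop (𝓝 (f x)) := by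
        apply Tendsto.sub
        · exact (ENNReal.tendsto_toReal (measure_ne_top _ _)).comp (tendsto_Iic_add ν x)
        · exact (ENNReal.tendsto_toReal (measure_ne_top _ _)).comp (tendsto_Iic_add μ x)
      apply ge_of_tendsto' ht
      intro n
      apply csInf_le
      · exact ⟨f x, fun y ⟨z, hz, hzy⟩ => hzy ▸ hmono (le_of_lt hz)⟩
      · exact ⟨x + 1/(n+1), by simp; positivity, rfl⟩
    · apply le_csInf ((nonempty_Ioi (a := x)).image f)
      rintro y ⟨z, hz, rfl⟩
      exact hmono (le_of_lt hz)
  -- f tends to 0 at -infty along ℕ sequence; we need atBot filter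
  have htbot : Tendsto f atBot (𝓝 0) := by
    rw [hf]
    simpa using (tendsto_toReal_Iic_atBot ν).sub (tendsto_toReal_Iic_atBot μ)
  set S := hmono.stieltjesFunction with hS
  have hSx : ∀ x, S x = f x := fun x => (hmono.stieltjesFunction_eq x).trans (hrc x)
  have hSbot : Tendsto S atBot (𝓝 0) := by
    have : S = f := funext hSx
    rw [this]; exact htbot
  have key : ν = μ + S.measure := by
    apply Measure.ext_of_Iic
    intro x
    rw [Measure.add_apply, S.measure_Iic hSbot x, sub_zero, hSx x]
    simp only [hf]
    rw [ENNReal.ofReal_sub _ ENNReal.toReal_nonneg,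
      ENNReal.ofReal_toReal (measure_ne_top _ _), ENNReal.ofReal_toReal (measure_ne_top _ _)]
    rw [add_tsub_cancel_of_le (hle x)]
  rw [key]
  exact Measure.le_add_right (le_refl _)

end compare

section forward
variable (P Q : Measure ℝ) [IsProbabilityMeasure P] [IsProbabilityMeasure Q]

lemma isLR_forward (hlr : IsLR P Q) :
    ∀ r s t : ℝ, r ∈ Set.range (distFunE P) → s ∈ Set.range (distFunE P) →
      t ∈ Set.range (distFunE P) → r < s → s < t →
      (distFunE Q (quantE P s) - distFunE Q (quantE P r)) / (s - r) ≤
        (distFunE Q (quantE P t) - distFunE Q (quantE P s)) / (t - s) := by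
  intro r s t hr hs ht hrs hst
  set a := quantE P r with ha
  set b := quantE P s with hb
  set c := quantE P t with hc
  have hFa : distFunE P a = r := distFunE_quantE_eq P hr
  have hFb : distFunE P b = s := distFunE_quantE_eq P hs
  have hFc : distFunE P c = t := distFunE_quantE_eq P ht
  have hab : a ≤ b := by
    by_contra h
    push_neg at h
    have := distFunE_mono P h.le
    rw [hFa, hFb] at this
    linarith
  have hbc : b ≤ c := by
    by_contra h
    push_neg at h
    have := distFunE_mono P h.le
    rw [hFb, hFc] at this
    linarith
  set A : Set ℝ := {x : ℝ | (x:EReal) ≤ b} \ {x : ℝ | (x:EReal) ≤ a} with hA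
  set B : Set ℝ := {x : ℝ | (x:EReal) ≤ c} \ {x : ℝ | (x:EReal) ≤ b} with hB
  have hmA : MeasurableSet A := (measurable_setE b).diff (measurable_setE a)
  have hmB : MeasurableSet B := (measurable_setE c).diff (measurable_setE b)
  have helem : ∀ x ∈ A, ∀ y ∈ B, x ≤ y := by
    rintro x ⟨hx1, _⟩ y ⟨_, hy2⟩
    have : (x:EReal) ≤ (y:EReal) := le_of_lt (lt_of_le_of_lt hx1 (lt_of_not_ge hy2))
    exact_mod_cast this
  have key0 := hlr A B hmA hmB helem
  have hsubA : {x : ℝ | (x:EReal) ≤ a} ⊆ {x : ℝ | (x:EReal) ≤ b} := fun x hx => le_trans hx hab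
  have hsubB : {x : ℝ | (x:EReal) ≤ b} ⊆ {x : ℝ | (x:EReal) ≤ c} := fun x hx => le_trans hx hbc
  have hPA : (P A).toReal = s - r := by
    rw [hA, measure_diff hsubA (measurable_setE a).nullMeasurableSet (measure_ne_top _ _),
      ENNReal.toReal_sub_of_le (measure_mono hsubA) (measure_ne_top _ _)]
    rw [show (P {x:ℝ | (x:EReal) ≤ b}).toReal = distFunE P b from rfl,
      show (P {x:ℝ | (x:EReal) ≤ a}).toReal = distFunE P a from rfl, hFa, hFb]
  have hPB : (P B).toReal = t - s := by
    rw [hB, measure_diff hsubB (measurable_setE b).nullMeasurableSet (measure_ne_top _ _),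
      ENNReal.toReal_sub_of_le (measure_mono hsubB) (measure_ne_top _ _)]
    rw [show (P {x:ℝ | (x:EReal) ≤ c}).toReal = distFunE P c from rfl,
      show (P {x:ℝ | (x:EReal) ≤ b}).toReal = distFunE P b from rfl, hFb, hFc]
  have hQA : (Q A).toReal = distFunE Q b - distFunE Q a := by
    rw [hA, measure_diff hsubA (measurable_setE a).nullMeasurableSet (measure_ne_top _ _),
      ENNReal.toReal_sub_of_le (measure_mono hsubA) (measure_ne_top _ _)]
    rfl
  have hQB : (Q B).toReal = distFunE Q c - distFunE Q b := by
    rw [hB, measure_diff hsubB (measurable_setE b).nullMeasurableSet (measure_ne_top _ _),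
      ENNReal.toReal_sub_of_le (measure_mono hsubB) (measure_ne_top _ _)]
    rfl
  have key : (P B).toReal * (Q A).toReal ≤ (P A).toReal * (Q B).toReal := by
    rw [← ENNReal.toReal_mul, ← ENNReal.toReal_mul]
    exact ENNReal.toReal_mono (ENNReal.mul_ne_top (measure_ne_top _ _) (measure_ne_top _ _)) key0
  rw [hPA, hPB, hQA, hQB] at key
  rw [div_le_div_iff₀ (by linarith) (by linarith)]
  nlinarith [key]

end forward

section backward
variable (P Q : Measure ℝ) [IsProbabilityMeasure P] [IsProbabilityMeasure Q]

lemma measure_Ioc_toReal (μ : Measure ℝ) [IsFiniteMeasure μ] (u v : ℝ) (h : u ≤ v) :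
    (μ (Ioc u v)).toReal = (μ (Iic v)).toReal - (μ (Iic u)).toReal := by
  rw [measure_Iic_split μ u v h, ENNReal.toReal_add (measure_ne_top _ _) (measure_ne_top _ _)]
  ring

lemma chord_mono (hac : Q ≪ P)
    (hconv : ∀ r s t : ℝ, r ∈ Set.range (distFunE P) → s ∈ Set.range (distFunE P) →
      t ∈ Set.range (distFunE P) → r < s → s < t →
      (distFunE Q (quantE P s) - distFunE Q (quantE P r)) / (s - r) ≤
        (distFunE Q (quantE P t) - distFunE Q (quantE P s)) / (t - s))
    {a b a' b' : ℝ} (h1 : a < b) (h2 : b ≤ a') (h3 : a' < b') :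
    Q (Ioc a b) * P (Ioc a' b') ≤ Q (Ioc a' b') * P (Ioc a b) := by
  set F : ℝ → ℝ := fun x => (P (Iic x)).toReal with hF
  set G : ℝ → ℝ := fun x => (Q (Iic x)).toReal with hG
  have hFd : ∀ x : ℝ, distFunE P (x:EReal) = F x := fun x => distFunE_coe P x
  have hGd : ∀ x : ℝ, distFunE Q (x:EReal) = G x := fun x => distFunE_coe Q x
  have hkey : ∀ x y z : ℝ, F x < F y → F y < F z →
      (G y - G x)/(F y - F x) ≤ (G z - G y)/(F z - F y) := by
    intro x y z hxy hyz
    have := hconv (F x) (F y) (F z) ⟨(x:EReal), hFd x⟩ ⟨(y:EReal), hFd y⟩ ⟨(z:EReal), hFd z⟩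
      hxy hyz
    rw [show F x = distFunE P (x:EReal) from (hFd x).symm,
      show F y = distFunE P (y:EReal) from (hFd y).symm,
      show F z = distFunE P (z:EReal) from (hFd z).symm] at this
    rw [distFunE_quantE_ac P Q hac, distFunE_quantE_ac P Q hac,
      distFunE_quantE_ac P Q hac, hGd, hGd, hGd, hFd, hFd, hFd] at this
    exact this
  -- trivial cases
  rcases eq_or_ne (P (Ioc a b)) 0 with hab0 | hab0
  · rw [hac hab0, zero_mul]
    exact zero_le
  rcases eq_or_ne (P (Ioc a' b')) 0 with ha'b'0 | ha'b'0
  · rw [ha'b'0, mul_zero]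
    exact zero_le
  -- nondegenerate case
  have hFab : F a < F b := by
    have h := measure_Ioc_toReal P a b h1.le
    have hpos : 0 < (P (Ioc a b)).toReal := ENNReal.toReal_pos hab0 (measure_ne_top _ _)
    simp only [hF]; linarith
  have hFa'b' : F a' < F b' := by
    have h := measure_Ioc_toReal P a' b' h3.le
    have hpos : 0 < (P (Ioc a' b')).toReal := ENNReal.toReal_pos ha'b'0 (measure_ne_top _ _)
    simp only [hF]; linarith
  have hslope : (G b - G a)/(F b - F a) ≤ (G b' - G a')/(F b' - F a') := by
    rcases eq_or_lt_of_le h2 with rfl | hba'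
    · exact hkey a b b' hFab (lt_of_lt_of_le hFa'b' le_rfl)
    · have hFba' : F b ≤ F a' :=
        ENNReal.toReal_mono (measure_ne_top _ _) (measure_mono (Iic_subset_Iic.mpr hba'.le))
      rcases eq_or_lt_of_le hFba' with heq | hlt
      · -- F b = F a' ; then G b = G a'
        have hP0 : P (Ioc b a') = 0 := by
          have h' := measure_Ioc_toReal P b a' hba'.le
          have heq' : (P (Iic b)).toReal = (P (Iic a')).toReal := by
            simpa only [hF] using heq
          have hz : (P (Ioc b a')).toReal = 0 := by linarith
          exact ((ENNReal.toReal_eq_zero_iff _).mp hz).resolve_right (measure_ne_top _ _)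
        have hQ0 : Q (Ioc b a') = 0 := hac hP0
        have hGeq : G b = G a' := by
          have h' := measure_Ioc_toReal Q b a' hba'.le
          rw [hQ0] at h'
          simp only [ENNReal.toReal_zero] at h'
          simp only [hG]
          linarith
        have := hkey a b b' hFab (heq ▸ hFa'b')
        rwa [← hGeq, ← heq]
      · exact le_trans (hkey a b a' hFab hlt) (hkey b a' b' hlt hFa'b')
  -- convert slope inequality to products
  have hprod : (G b - G a) * (F b' - F a') ≤ (G b' - G a') * (F b - F a) :=
    (div_le_div_iff₀ (by linarith) (by linarith)).mp hslope
  have e1 : G b - G a = (Q (Ioc a b)).toReal := (measure_Ioc_toReal Q a b h1.le).symm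
  have e2 : F b - F a = (P (Ioc a b)).toReal := (measure_Ioc_toReal P a b h1.le).symm
  have e3 : G b' - G a' = (Q (Ioc a' b')).toReal := (measure_Ioc_toReal Q a' b' h3.le).symm
  have e4 : F b' - F a' = (P (Ioc a' b')).toReal := (measure_Ioc_toReal P a' b' h3.le).symm
  rw [e1, e2, e3, e4, ← ENNReal.toReal_mul, ← ENNReal.toReal_mul] at hprod
  exact (ENNReal.toReal_le_toReal
    (ENNReal.mul_ne_top (measure_ne_top _ _) (measure_ne_top _ _))
    (ENNReal.mul_ne_top (measure_ne_top _ _) (measure_ne_top _ _))).mp hprod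

end backward

section backward2
variable (P Q : Measure ℝ) [IsProbabilityMeasure P] [IsProbabilityMeasure Q]

lemma div_le_div_of_cross {q1 p1 q2 p2 : ℝ≥0∞} (hp1t : p1 ≠ ⊤) (hp20 : p2 ≠ 0)
    (hp2t : p2 ≠ ⊤) (hq2t : q2 ≠ ⊤) (h0 : p1 = 0 → q1 = 0)
    (h : q1 * p2 ≤ q2 * p1) : q1 / p1 ≤ q2 / p2 := by
  rcases eq_or_ne p1 0 with rfl | hp10
  · rw [h0 rfl, ENNReal.zero_div]
    exact zero_le
  rw [ENNReal.div_le_iff_le_mul (Or.inl hp10) (Or.inl hp1t), div_eq_mul_inv, mul_right_comm,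
    ← div_eq_mul_inv, ENNReal.le_div_iff_mul_le (Or.inl hp20) (Or.inl hp2t)]
  exact h

lemma isLR_backward (hac : Q ≪ P)
    (hconv : ∀ r s t : ℝ, r ∈ Set.range (distFunE P) → s ∈ Set.range (distFunE P) →
      t ∈ Set.range (distFunE P) → r < s → s < t →
      (distFunE Q (quantE P s) - distFunE Q (quantE P r)) / (s - r) ≤
        (distFunE Q (quantE P t) - distFunE Q (quantE P s)) / (t - s)) :
    IsLR P Q := by
  intro A B hmA hmB hAB
  rcases eq_empty_or_nonempty A with rfl | hAne
  · simp
  rcases eq_empty_or_nonempty B with rfl | hBne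
  · simp
  obtain ⟨a₀, ha₀⟩ := hAne
  obtain ⟨b₀, hb₀⟩ := hBne
  have hbddA : BddAbove A := ⟨b₀, fun a ha => hAB a ha b₀ hb₀⟩
  set c := sSup A with hc
  have hAc : A ⊆ Iic c := fun a ha => le_csSup hbddA ha
  have hBc : B ⊆ Ici c := fun b hb => csSup_le ⟨a₀, ha₀⟩ (fun a ha => hAB a ha b hb)
  set lam : ℝ≥0∞ := ⨆ u : {u : ℝ // u < c}, Q (Ioc (u:ℝ) c) / P (Ioc (u:ℝ) c) with hlam
  -- K1 : basic interval bound ending at c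
  have K1 : ∀ u : ℝ, u < c → Q (Ioc u c) ≤ lam * P (Ioc u c) := by
    intro u hu
    rcases eq_or_ne (P (Ioc u c)) 0 with h0 | h0
    · rw [hac h0]
      exact zero_le
    · have hle : Q (Ioc u c) / P (Ioc u c) ≤ lam :=
        le_iSup (fun u : {u : ℝ // u < c} => Q (Ioc (u:ℝ) c) / P (Ioc (u:ℝ) c)) ⟨u, hu⟩
      calc Q (Ioc u c) = Q (Ioc u c) / P (Ioc u c) * P (Ioc u c) :=
            (ENNReal.div_mul_cancel h0 (measure_ne_top _ _)).symm
        _ ≤ lam * P (Ioc u c) := mul_le_mul_left hle _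
  -- K1' : all intervals below c
  have K1' : ∀ u v : ℝ, u < v → v ≤ c → Q (Ioc u v) ≤ lam * P (Ioc u v) := by
    intro u v huv hvc
    rcases eq_or_lt_of_le hvc with rfl | hvc
    · exact K1 u huv
    rcases eq_or_ne (P (Ioc u v)) 0 with h0 | h0
    · rw [hac h0]
      exact zero_le
    rcases eq_or_ne (P (Ioc v c)) 0 with hvc0 | hvc0
    · have hQ0 : Q (Ioc v c) = 0 := hac hvc0
      have hPext : P (Ioc u c) = P (Ioc u v) := by
        rw [← Ioc_union_Ioc_eq_Ioc huv.le hvc.le,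
          measure_union (Ioc_disjoint_Ioc_of_le le_rfl) measurableSet_Ioc, hvc0, add_zero]
      have hQext : Q (Ioc u c) = Q (Ioc u v) := by
        rw [← Ioc_union_Ioc_eq_Ioc huv.le hvc.le,
          measure_union (Ioc_disjoint_Ioc_of_le le_rfl) measurableSet_Ioc, hQ0, add_zero]
      rw [← hQext, ← hPext]
      exact K1 u (huv.trans hvc)
    · have hcm := chord_mono P Q hac hconv huv (le_refl v) hvc
      have hle : Q (Ioc u v) / P (Ioc u v) ≤ lam :=
        le_trans (div_le_div_of_cross (measure_ne_top _ _) hvc0 (measure_ne_top _ _)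
            (measure_ne_top _ _) (fun h => hac h) hcm)
          (le_iSup (fun u : {u : ℝ // u < c} => Q (Ioc (u:ℝ) c) / P (Ioc (u:ℝ) c)) ⟨v, hvc⟩)
      calc Q (Ioc u v) = Q (Ioc u v) / P (Ioc u v) * P (Ioc u v) :=
            (ENNReal.div_mul_cancel h0 (measure_ne_top _ _)).symm
        _ ≤ lam * P (Ioc u v) := mul_le_mul_left hle _
  -- K3 : intervals above c
  have K3 : ∀ u v : ℝ, c ≤ u → u < v → lam * P (Ioc u v) ≤ Q (Ioc u v) := by
    intro u v hcu huv
    rw [hlam, ENNReal.iSup_mul]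
    apply iSup_le
    rintro ⟨u', hu'⟩
    rcases eq_or_ne (P (Ioc u' c)) 0 with h0 | h0
    · rw [hac h0, ENNReal.zero_div, zero_mul]
      exact zero_le
    · have hcm := chord_mono P Q hac hconv hu' hcu huv
      rw [div_eq_mul_inv, mul_right_comm, ← div_eq_mul_inv,
        ENNReal.div_le_iff_le_mul (Or.inl h0) (Or.inl (measure_ne_top _ _))]
      exact hcm
  -- K4 : the atom at c
  have K4 : lam * P {c} ≤ Q {c} := by
    rcases eq_or_ne (P {c}) 0 with h0 | h0
    · rw [h0, mul_zero]
      exact zero_le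
    rw [hlam, ENNReal.iSup_mul]
    apply iSup_le
    rintro ⟨u', hu'⟩
    have hsing : {c} ⊆ Ioc u' c := singleton_subset_iff.mpr ⟨hu', le_refl c⟩
    have hP0 : P (Ioc u' c) ≠ 0 := fun h => h0 (measure_mono_null hsing h)
    -- the cross inequality via limits
    have hcross : Q (Ioc u' c) * P {c} ≤ Q {c} * P (Ioc u' c) := by
      have hq1 := (ENNReal.tendsto_toReal (measure_ne_top Q _)).comp (tendsto_Ioc_left Q u' c)
      have hp1 := (ENNReal.tendsto_toReal (measure_ne_top P _)).comp (tendsto_Ioc_atom P c)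
      have hq2 := (ENNReal.tendsto_toReal (measure_ne_top Q _)).comp (tendsto_Ioc_atom Q c)
      have hp2 := (ENNReal.tendsto_toReal (measure_ne_top P _)).comp (tendsto_Ioc_left P u' c)
      have hev : ∀ᶠ n : ℕ in Filter.atTop,
          (Q (Ioc u' (c - 1/(n+1)))).toReal * (P (Ioc (c - 1/(n+1)) c)).toReal ≤
          (Q (Ioc (c - 1/(n+1)) c)).toReal * (P (Ioc u' (c - 1/(n+1)))).toReal := by
        filter_upwards [seq_lt u' c hu'] with n hn
        have hvnc : c - 1/((n:ℝ)+1) < c := by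
          have : (0:ℝ) < 1/((n:ℝ)+1) := by positivity
          linarith
        have hcm := chord_mono P Q hac hconv hn (le_refl (c - 1/((n:ℝ)+1))) hvnc
        rw [← ENNReal.toReal_mul, ← ENNReal.toReal_mul]
        exact ENNReal.toReal_mono
          (ENNReal.mul_ne_top (measure_ne_top _ _) (measure_ne_top _ _)) hcm
      have hlim : (Q (Ioo u' c)).toReal * (P {c}).toReal ≤
          (Q {c}).toReal * (P (Ioo u' c)).toReal :=
        le_of_tendsto_of_tendsto (hq1.mul hp1) (hq2.mul hp2) hev
      have hsplitQ : Q (Ioc u' c) = Q (Ioo u' c) + Q {c} := by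
        rw [← measure_union (by simp [disjoint_singleton_right]) (measurableSet_singleton c),
          Ioo_union_right hu']
      have hsplitP : P (Ioc u' c) = P (Ioo u' c) + P {c} := by
        rw [← measure_union (by simp [disjoint_singleton_right]) (measurableSet_singleton c),
          Ioo_union_right hu']
      have hEN : Q (Ioo u' c) * P {c} ≤ Q {c} * P (Ioo u' c) := by
        rw [← ENNReal.toReal_le_toReal
          (ENNReal.mul_ne_top (measure_ne_top _ _) (measure_ne_top _ _))
          (ENNReal.mul_ne_top (measure_ne_top _ _) (measure_ne_top _ _)),
          ENNReal.toReal_mul, ENNReal.toReal_mul]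
        exact hlim
      rw [hsplitQ, hsplitP, add_mul, mul_add]
      exact add_le_add_left hEN _
    rw [div_eq_mul_inv, mul_right_comm, ← div_eq_mul_inv,
      ENNReal.div_le_iff_le_mul (Or.inl hP0) (Or.inl (measure_ne_top _ _))]
    exact hcross
  -- dispatch the case lam = ∞
  rcases eq_or_ne lam ⊤ with htop | hlamt
  · -- then P (Ici c) = 0, so P B = 0
    have hPc : P {c} = 0 := by
      by_contra h0
      have hbd : lam ≤ 1 / P {c} := by
        rw [hlam]
        apply iSup_le
        rintro ⟨u', hu'⟩
        apply ENNReal.div_le_div prob_le_one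
        exact measure_mono (singleton_subset_iff.mpr ⟨hu', le_refl c⟩)
      have : lam < ⊤ := lt_of_le_of_lt hbd (ENNReal.div_lt_top ENNReal.one_ne_top h0)
      exact absurd htop this.ne
    have hPoi : P (Ioi c) = 0 := by
      by_contra h0
      have hex : ∃ n : ℕ, P (Ioc c (c + n + 1)) ≠ 0 := by
        by_contra hall
        push_neg at hall
        have hun : Ioi c = ⋃ n : ℕ, Ioc c (c + (n:ℝ) + 1) := by
          ext x
          simp only [mem_Ioi, mem_iUnion, mem_Ioc]
          constructor
          · intro hx
            obtain ⟨n, hn⟩ := exists_nat_gt (x - c - 1)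
            exact ⟨n, hx, by linarith⟩
          · rintro ⟨n, hn, _⟩
            exact hn
        rw [hun] at h0
        exact h0 (measure_iUnion_null hall)
      obtain ⟨n, hn⟩ := hex
      set w : ℝ := c + n + 1 with hw
      have hcw : c < w := by
        have : (0:ℝ) ≤ n := Nat.cast_nonneg n
        rw [hw]; linarith
      have hbd : lam ≤ Q (Ioc c w) / P (Ioc c w) := by
        rw [hlam]
        apply iSup_le
        rintro ⟨u', hu'⟩
        exact div_le_div_of_cross (measure_ne_top _ _) hn (measure_ne_top _ _)
          (measure_ne_top _ _) (fun h => hac h)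
          (chord_mono P Q hac hconv hu' (le_refl c) hcw)
      have : lam < ⊤ := lt_of_le_of_lt hbd (ENNReal.div_lt_top (measure_ne_top _ _) hn)
      exact absurd htop this.ne
    have hIci : P (Ici c) = 0 := by
      have : Ici c = {c} ∪ Ioi c := by
        ext x
        simp only [mem_Ici, mem_union, mem_singleton_iff, mem_Ioi]
        constructor
        · intro hx
          rcases eq_or_lt_of_le hx with h | h
          · exact Or.inl h.symm
          · exact Or.inr h
        · rintro (rfl | h)
          · exact le_refl _
          · exact h.le
      rw [this]
      exact measure_union_null hPc hPoi
    have hPB : P B = 0 := measure_mono_null hBc hIci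
    rw [hPB, zero_mul]
    exact zero_le
  -- lam finite : compare measures on both sides of c
  have hA : ∀ S : Set ℝ, MeasurableSet S → S ⊆ Iic c → Q S ≤ lam * P S := by
    intro S hS hSc
    haveI : IsFiniteMeasure ((lam • P).restrict (Iic c)) := by
      constructor
      rw [Measure.restrict_apply MeasurableSet.univ, Measure.smul_apply, smul_eq_mul]
      exact ENNReal.mul_lt_top hlamt.lt_top (measure_lt_top _ _)
    have hcomp := measure_le_of_Ioc_le (Q.restrict (Iic c)) ((lam • P).restrict (Iic c)) ?_
    · have h1 : Q S = Q.restrict (Iic c) S := by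
        rw [Measure.restrict_apply hS, inter_eq_self_of_subset_left hSc]
      have h2 : (lam • P).restrict (Iic c) S = lam * P S := by
        rw [Measure.restrict_apply hS, inter_eq_self_of_subset_left hSc,
          Measure.smul_apply, smul_eq_mul]
      rw [h1, ← h2]
      exact Measure.le_iff.mp hcomp S hS
    · intro u v huv
      rw [Measure.restrict_apply measurableSet_Ioc, Measure.restrict_apply measurableSet_Ioc,
        Ioc_inter_Iic]
      rcases le_or_gt (v ⊓ c) u with hle | hlt
      · rw [Ioc_eq_empty (not_lt.mpr hle)]
        simp
      · have := K1' u (v ⊓ c) hlt inf_le_right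
        rw [Measure.smul_apply, smul_eq_mul]
        exact this
  have hB : ∀ S : Set ℝ, MeasurableSet S → S ⊆ Ici c → lam * P S ≤ Q S := by
    intro S hS hSc
    haveI : IsFiniteMeasure ((lam • P).restrict (Ici c)) := by
      constructor
      rw [Measure.restrict_apply MeasurableSet.univ, Measure.smul_apply, smul_eq_mul]
      exact ENNReal.mul_lt_top hlamt.lt_top (measure_lt_top _ _)
    have hcomp := measure_le_of_Ioc_le ((lam • P).restrict (Ici c)) (Q.restrict (Ici c)) ?_
    · have h1 : Q S = Q.restrict (Ici c) S := by
        rw [Measure.restrict_apply hS, inter_eq_self_of_subset_left hSc]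
      have h2 : (lam • P).restrict (Ici c) S = lam * P S := by
        rw [Measure.restrict_apply hS, inter_eq_self_of_subset_left hSc,
          Measure.smul_apply, smul_eq_mul]
      rw [h1, ← h2]
      exact Measure.le_iff.mp hcomp S hS
    · intro u v huv
      rw [Measure.restrict_apply measurableSet_Ioc, Measure.restrict_apply measurableSet_Ioc]
      rcases le_or_gt c u with hcu | huc
      · have hsub : Ioc u v ∩ Ici c = Ioc u v := by
          apply inter_eq_self_of_subset_left
          exact fun x hx => le_trans hcu hx.1.le
        rw [hsub, Measure.smul_apply, smul_eq_mul]
        exact K3 u v hcu huv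
      · rcases lt_or_ge v c with hvc | hcv
        · have hsub : Ioc u v ∩ Ici c = ∅ := by
            ext x
            simp only [mem_inter_iff, mem_Ioc, mem_Ici, mem_empty_iff_false, iff_false]
            rintro ⟨⟨_, h2⟩, h3⟩
            linarith
          rw [hsub]
          simp
        · have hsub : Ioc u v ∩ Ici c = Icc c v := by
            ext x
            simp only [mem_inter_iff, mem_Ioc, mem_Ici, mem_Icc]
            constructor
            · rintro ⟨⟨_, h2⟩, h3⟩
              exact ⟨h3, h2⟩
            · rintro ⟨h1, h2⟩
              exact ⟨⟨lt_of_lt_of_le huc h1, h2⟩, h1⟩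
          rw [hsub, Measure.smul_apply, smul_eq_mul]
          have hsplit : Icc c v = {c} ∪ Ioc c v := by
            ext x
            simp only [mem_Icc, mem_union, mem_singleton_iff, mem_Ioc]
            constructor
            · rintro ⟨h1, h2⟩
              rcases eq_or_lt_of_le h1 with h | h
              · exact Or.inl h.symm
              · exact Or.inr ⟨h, h2⟩
            · rintro (rfl | ⟨h1, h2⟩)
              · exact ⟨le_refl _, hcv⟩
              · exact ⟨h1.le, h2⟩
          rw [hsplit, measure_union (by simp [disjoint_singleton_left]) measurableSet_Ioc,
            measure_union (by simp [disjoint_singleton_left]) measurableSet_Ioc,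
            mul_add]
          rcases eq_or_lt_of_le hcv with rfl | hcv'
          · rw [Ioc_eq_empty (lt_irrefl c), measure_empty, measure_empty, mul_zero]
            simpa using K4
          · exact add_le_add K4 (K3 c v (le_refl c) hcv')
  calc P B * Q A ≤ P B * (lam * P A) := mul_le_mul_right (hA A hmA hAc) _
    _ = (lam * P B) * P A := by ring
    _ ≤ Q B * P A := mul_le_mul_left (hB B hmB hBc) _
    _ = P A * Q B := mul_comm _ _

end backward2

/-- **Corollary (lr-order ⇔ convexity of the ordinal dominance curve).** If
`Q ≪ P`, then `P ≤lr Q` iff the ordinal dominance curve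
`H(α) = G(F⁻¹(α))` is convex on `Im(F) = {F(x) : x ∈ [-∞,∞]}`. -/
theorem stmt6 (P Q : Measure ℝ) [IsProbabilityMeasure P] [IsProbabilityMeasure Q]
    (hac : Q ≪ P) :
    IsLR P Q ↔
      ∀ r s t : ℝ, r ∈ Set.range (distFunE P) → s ∈ Set.range (distFunE P) →
        t ∈ Set.range (distFunE P) → r < s → s < t →
        (distFunE Q (quantE P s) - distFunE Q (quantE P r)) / (s - r) ≤
          (distFunE Q (quantE P t) - distFunE Q (quantE P s)) / (t - s) := by
  constructor
  · exact isLR_forward P Q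
  · exact isLR_backward P Q hac
end

section
/- Let (X,Y) be a pair of real-valued random variables and let 𝒳 := {x ∈ ℝ : P(X ≤ x) > 0 and P(X ≥ x) > 0} be the range of X. The following three conditions are equivalent: (i) for arbitrary Borel sets A₁, A₂ with A₁ < A₂ element-wise and all real y, P(X ∈ A₁, Y > y)·P(X ∈ A₂) ≤ P(X ∈ A₁)·P(X ∈ A₂, Y > y); (ii) the inequality in (i) holds for all A₁ = (x₀,x₁] and A₂ = (x₁,x₂] with x₀ < x₁ < x₂ and all real y; (iii) there exists a stochastic kernel K : ℝ × ℬ(ℝ) → [0,1] (each K(x,·) a probability measure, each K(·,B) measurable, and P(X ∈ A, Y ∈ B) = E[1_A(X)·K(X,B)] for all Borel A,B) such that K(x₁,·) ≤st K(x₂,·) for all x₁ < x₂ in 𝒳. -/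
open MeasureTheory Set
open scoped ENNReal

/-- `P` is smaller than `Q` in the usual stochastic order. -/
def IsST (P Q : Measure ℝ) : Prop :=
  ∀ x : ℝ, Q (Iic x) ≤ P (Iic x)

section Stmt7Aux

open Filter Topology Metric

set_option linter.unusedSectionVars false
set_option maxHeartbeats 1000000

namespace Stmt7

lemma crossdiv {a b c d : ℝ≥0∞} (h : a * d ≤ b * c) (hb0 : b ≠ 0) (hbt : b ≠ ∞)
    (hd0 : d ≠ 0) (hdt : d ≠ ∞) : a / b ≤ c / d := by
  rw [ENNReal.div_le_iff hb0 hbt]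
  have := ENNReal.div_le_div_right h d
  rwa [mul_div_assoc, ENNReal.div_self hd0 hdt, mul_one, mul_div_assoc,
    mul_comm b] at this

lemma one_div_nat_anti {n m : ℕ} (h : n ≤ m) : (1:ℝ)/(m+1) ≤ 1/(n+1) := by
  apply one_div_le_one_div_of_le (by positivity)
  have : (n:ℝ) ≤ m := Nat.cast_le.mpr h
  linarith

lemma iInter_Ioc_eq_Icc {a b : ℝ} : ⋂ n : ℕ, Ioc (a - 1/(n+1)) b = Icc a b := by
  ext x
  simp only [mem_iInter, mem_Ioc, mem_Icc]
  constructor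
  · intro h
    refine ⟨?_, (h 0).2⟩
    by_contra hx
    push_neg at hx
    obtain ⟨n, hn⟩ := exists_nat_one_div_lt (sub_pos.mpr hx)
    exact absurd ((h n).1) (by linarith)
  · intro ⟨ha, hb⟩ n
    have : (0:ℝ) < 1/(n+1) := by positivity
    exact ⟨by linarith, hb⟩

lemma tendsto_Ioc_Icc (ξ : Measure ℝ) [IsFiniteMeasure ξ] (a b : ℝ) :
    Tendsto (fun n : ℕ => ξ (Ioc (a - 1/(n+1)) b)) atTop (𝓝 (ξ (Icc a b))) := by
  rw [← iInter_Ioc_eq_Icc (a := a) (b := b)]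
  exact tendsto_measure_iInter_atTop
    (fun _ => measurableSet_Ioc.nullMeasurableSet)
    (fun n m hnm => Ioc_subset_Ioc_left (by
      have h1 := one_div_nat_anti hnm
      linarith))
    ⟨0, measure_ne_top _ _⟩

/-- The left-interval maximal ratio function. -/
noncomputable def Gr (β ν : Measure ℝ) (x : ℝ) : ℝ≥0∞ :=
  ⨆ a ∈ Iio x, β (Ioc a x) / ν (Ioc a x)

section basic

variable {β ν : Measure ℝ} [IsFiniteMeasure ν] [IsFiniteMeasure β]
  (hle : ∀ s, β s ≤ ν s)
  (hadj : ∀ ⦃a b c : ℝ⦄, a < b → b < c →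
    β (Ioc a b) * ν (Ioc b c) ≤ ν (Ioc a b) * β (Ioc b c))

include hle in
lemma beta_null {s : Set ℝ} (h : ν s = 0) : β s = 0 :=
  le_antisymm (h ▸ hle s) zero_le

include hle hadj in
/-- Extension of the adjacent-intervals inequality to separated intervals. -/
lemma adj_ext : ∀ ⦃a b c d : ℝ⦄, a < b → b ≤ c → c < d →
    β (Ioc a b) * ν (Ioc c d) ≤ ν (Ioc a b) * β (Ioc c d) := by
  intro a b c d hab hbc hcd
  rcases eq_or_lt_of_le hbc with rfl | hbc
  · exact hadj hab hcd
  by_cases hmid : ν (Ioc b c) = 0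
  · have hmidβ : β (Ioc b c) = 0 := beta_null hle hmid
    have h1 := hadj hab (hbc.trans hcd)
    have hν : ν (Ioc b d) = ν (Ioc b c) + ν (Ioc c d) := by
      rw [← measure_union ((Ioc_disjoint_Ioc_of_le le_rfl)) measurableSet_Ioc,
        Ioc_union_Ioc_eq_Ioc hbc.le hcd.le]
    have hβ : β (Ioc b d) = β (Ioc b c) + β (Ioc c d) := by
      rw [← measure_union ((Ioc_disjoint_Ioc_of_le le_rfl)) measurableSet_Ioc,
        Ioc_union_Ioc_eq_Ioc hbc.le hcd.le]
    rw [hν, hβ, hmid, hmidβ, zero_add, zero_add] at h1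
    exact h1
  · have h1 := hadj hab hbc
    have h2 := hadj hbc hcd
    have hfin : ν (Ioc b c) ≠ ∞ := measure_ne_top ν _
    have key : β (Ioc a b) * ν (Ioc c d) * ν (Ioc b c)
        ≤ ν (Ioc a b) * β (Ioc c d) * ν (Ioc b c) := by
      calc β (Ioc a b) * ν (Ioc c d) * ν (Ioc b c)
          = (β (Ioc a b) * ν (Ioc b c)) * ν (Ioc c d) := by ring
        _ ≤ (ν (Ioc a b) * β (Ioc b c)) * ν (Ioc c d) := mul_le_mul_left h1 _
        _ = ν (Ioc a b) * (β (Ioc b c) * ν (Ioc c d)) := by ring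
        _ ≤ ν (Ioc a b) * (ν (Ioc b c) * β (Ioc c d)) := mul_le_mul_right h2 _
        _ = ν (Ioc a b) * β (Ioc c d) * ν (Ioc b c) := by ring
    exact (ENNReal.mul_le_mul_iff_left hmid hfin).mp key

variable (hext : ∀ ⦃a b c d : ℝ⦄, a < b → b ≤ c → c < d →
    β (Ioc a b) * ν (Ioc c d) ≤ ν (Ioc a b) * β (Ioc c d))

include hext in
lemma adjIccIoc : ∀ ⦃a b c d : ℝ⦄, a ≤ b → b ≤ c → c < d →
    β (Icc a b) * ν (Ioc c d) ≤ ν (Icc a b) * β (Ioc c d) := by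
  intro a b c d hab hbc hcd
  have h1 : Tendsto (fun n : ℕ => β (Ioc (a - 1/(n+1)) b) * ν (Ioc c d)) atTop
      (𝓝 (β (Icc a b) * ν (Ioc c d))) :=
    ENNReal.Tendsto.mul_const (tendsto_Ioc_Icc β a b) (Or.inr (measure_ne_top _ _))
  have h2 : Tendsto (fun n : ℕ => ν (Ioc (a - 1/(n+1)) b) * β (Ioc c d)) atTop
      (𝓝 (ν (Icc a b) * β (Ioc c d))) :=
    ENNReal.Tendsto.mul_const (tendsto_Ioc_Icc ν a b) (Or.inr (measure_ne_top _ _))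
  refine le_of_tendsto_of_tendsto' h1 h2 (fun n => ?_)
  have hlt : a - 1/(n+1) < b := by
    have : (0:ℝ) < 1/(n+1) := by positivity
    linarith
  exact hext hlt hbc hcd

include hext in
lemma adjIccIcc : ∀ ⦃a b c d : ℝ⦄, a ≤ b → b < c → c ≤ d →
    β (Icc a b) * ν (Icc c d) ≤ ν (Icc a b) * β (Icc c d) := by
  intro a b c d hab hbc hcd
  have h1 : Tendsto (fun n : ℕ => β (Icc a b) * ν (Ioc (c - 1/(n+1)) d)) atTop
      (𝓝 (β (Icc a b) * ν (Icc c d))) :=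
    ENNReal.Tendsto.const_mul (tendsto_Ioc_Icc ν c d) (Or.inr (measure_ne_top _ _))
  have h2 : Tendsto (fun n : ℕ => ν (Icc a b) * β (Ioc (c - 1/(n+1)) d)) atTop
      (𝓝 (ν (Icc a b) * β (Icc c d))) :=
    ENNReal.Tendsto.const_mul (tendsto_Ioc_Icc β c d) (Or.inr (measure_ne_top _ _))
  refine le_of_tendsto_of_tendsto h1 h2 ?_
  have hev : ∀ᶠ n : ℕ in atTop, b < c - 1/(n+1) := by
    obtain ⟨n₀, hn₀⟩ := exists_nat_one_div_lt (sub_pos.mpr hbc)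
    filter_upwards [eventually_ge_atTop n₀] with n hn
    have h1 := one_div_nat_anti hn
    linarith
  filter_upwards [hev] with n hn
  exact adjIccIoc hext hab hn.le (by
    have : (0:ℝ) < 1/(n+1) := by positivity
    linarith)

lemma ratio_le_Gr {a x : ℝ} (hax : a < x) :
    β (Ioc a x) / ν (Ioc a x) ≤ Gr β ν x :=
  le_biSup (fun a => β (Ioc a x) / ν (Ioc a x)) hax

include hle in
lemma Gr_le_one (x : ℝ) : Gr β ν x ≤ 1 :=
  iSup₂_le fun _ _ => ENNReal.div_le_of_le_mul (by simpa using hle _)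

lemma split_Ioc_meas (ξ : Measure ℝ) {a b c : ℝ} (hab : a ≤ b) (hbc : b ≤ c) :
    ξ (Ioc a c) = ξ (Ioc a b) + ξ (Ioc b c) := by
  rw [← measure_union (Ioc_disjoint_Ioc_of_le le_rfl) measurableSet_Ioc, Ioc_union_Ioc_eq_Ioc hab hbc]

include hle hadj in
lemma Gr_mono : Monotone (Gr β ν) := by
  intro x₁ x₂ h12
  rcases eq_or_lt_of_le h12 with rfl | h12
  · exact le_rfl
  refine iSup₂_le fun a ha => ?_
  have ha' : a < x₁ := ha
  have hax2 : a < x₂ := ha'.trans h12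
  by_cases hmid : ν (Ioc x₁ x₂) = 0
  · have hν : ν (Ioc a x₂) = ν (Ioc a x₁) := by
      rw [split_Ioc_meas ν ha'.le h12.le, hmid, add_zero]
    have hβ : β (Ioc a x₂) = β (Ioc a x₁) := by
      rw [split_Ioc_meas β ha'.le h12.le, beta_null hle hmid, add_zero]
    calc β (Ioc a x₁) / ν (Ioc a x₁) = β (Ioc a x₂) / ν (Ioc a x₂) := by rw [hν, hβ]
      _ ≤ Gr β ν x₂ := ratio_le_Gr hax2
  · by_cases h0 : ν (Ioc a x₁) = 0
    · simp [beta_null hle h0]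
    · refine le_trans (crossdiv (hadj ha' h12) h0 (measure_ne_top _ _) hmid
        (measure_ne_top _ _)) (ratio_le_Gr h12)

include hle hadj in
lemma Gr_le_right {x t : ℝ} (hxt : x < t) (ht0 : ν (Ioc x t) ≠ 0) :
    Gr β ν x ≤ β (Ioc x t) / ν (Ioc x t) := by
  refine iSup₂_le fun a ha => ?_
  by_cases h0 : ν (Ioc a x) = 0
  · simp [beta_null hle h0]
  · exact crossdiv (hadj ha hxt) h0 (measure_ne_top _ _) ht0 (measure_ne_top _ _)

lemma div_iInf_seq (b : ℝ≥0∞) (c : ℕ → ℝ≥0∞) : b / ⨅ n, c n = ⨆ n, b / c n := by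
  simp_rw [div_eq_mul_inv, ENNReal.inv_iInf, ENNReal.mul_iSup]

include hle in
lemma atom_le_Gr {x : ℝ} (hx : ν {x} ≠ 0) : β {x} / ν {x} ≤ Gr β ν x := by
  have hI : ⋂ n : ℕ, Ioc (x - 1/(n+1)) x = {x} := by
    rw [iInter_Ioc_eq_Icc, Icc_self]
  have hanti : Antitone (fun n : ℕ => Ioc (x - 1/(n+1)) x) := by
    intro n m hnm
    exact Ioc_subset_Ioc_left (by have := one_div_nat_anti hnm; linarith)
  have hiInf : ⨅ n : ℕ, ν (Ioc (x - 1/(n+1)) x) = ν {x} := by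
    rw [← hI]
    exact (hanti.measure_iInter (fun _ => measurableSet_Ioc.nullMeasurableSet)
      ⟨0, measure_ne_top _ _⟩).symm
  calc β {x} / ν {x} = ⨆ n : ℕ, β {x} / ν (Ioc (x - 1/(n+1)) x) := by
        rw [← hiInf, div_iInf_seq]
    _ ≤ Gr β ν x := by
        refine iSup_le fun n => ?_
        have hax : x - 1/(n+1) < x := by
          have : (0:ℝ) < 1/(n+1) := by positivity
          linarith
        refine le_trans ?_ (ratio_le_Gr hax)
        exact ENNReal.div_le_div
          (measure_mono (by simp only [singleton_subset_iff, mem_Ioc]; exact ⟨hax, le_rfl⟩))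
          le_rfl

end basic

section ident

variable (ν : Measure ℝ) [IsFiniteMeasure ν]




lemma null_IicZero : ν {x : ℝ | ν (Iic x) = 0} = 0 := by
  set V := {x : ℝ | ν (Iic x) = 0} with hV
  have hlow : ∀ ⦃z x : ℝ⦄, z ≤ x → x ∈ V → z ∈ V := fun z x hzx hx =>
    le_antisymm (le_trans (measure_mono (Iic_subset_Iic.mpr hzx)) hx.le) zero_le
  by_cases hVne : V.Nonempty
  · by_cases hVtop : ∃ x₀, x₀ ∉ V
    · obtain ⟨x₀, hx₀⟩ := hVtop
      have hbdd : BddAbove V := ⟨x₀, fun z hz => by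
        by_contra hzx; push_neg at hzx
        exact hx₀ (hlow hzx.le hz)⟩
      set s := sSup V with hs
      by_cases hsV : ν (Iic s) = 0
      · exact le_antisymm (le_trans (measure_mono fun z hz => le_csSup hbdd hz) hsV.le)
          zero_le
      · have hVsub : V ⊆ Iio s := fun z hz =>
          lt_of_le_of_ne (le_csSup hbdd hz) (fun he => hsV (by rw [hs, ← he]; exact hz))
        have hIio : ν (Iio s) = 0 := by
          have : Iio s = ⋃ n : ℕ, Iic (s - 1/(n+1)) := by
            ext z
            simp only [mem_Iio, mem_iUnion, mem_Iic]
            constructor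
            · intro hz
              obtain ⟨n, hn⟩ := exists_nat_one_div_lt (sub_pos.mpr hz)
              exact ⟨n, by linarith⟩
            · intro ⟨n, hn⟩
              have : (0:ℝ) < 1/(n+1) := by positivity
              linarith
          rw [this]
          refine measure_iUnion_null fun n => ?_
          have : (0:ℝ) < 1/(n+1) := by positivity
          obtain ⟨z, hzV, hz⟩ := exists_lt_of_lt_csSup hVne (by linarith : s - 1/(n+1) < s)
          exact le_antisymm (le_trans (measure_mono (Iic_subset_Iic.mpr hz.le)) hzV.le)
            zero_le
        exact le_antisymm (le_trans (measure_mono hVsub) hIio.le) zero_le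
    · push_neg at hVtop
      have : ν (univ : Set ℝ) = 0 := by
        have : (univ : Set ℝ) = ⋃ n : ℕ, Iic (n:ℝ) := by
          ext z
          simp only [mem_univ, mem_iUnion, mem_Iic, true_iff]
          obtain ⟨n, hn⟩ := exists_nat_ge z
          exact ⟨n, hn⟩
        rw [this]
        exact measure_iUnion_null fun n => hVtop _
      exact le_antisymm (le_trans (measure_mono (subset_univ _)) this.le) zero_le
  · rw [Set.not_nonempty_iff_eq_empty] at hVne
    simp [hVne]

lemma null_ballZero : ν {x : ℝ | ∃ r > 0, ν (closedBall x r) = 0} = 0 := by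
  have hsub : {x : ℝ | ∃ r > 0, ν (closedBall x r) = 0} ⊆
      ⋃ (p : ℚ) (q : ℚ), (if ν (Ioo (p:ℝ) q) = 0 then Ioo (p:ℝ) q else ∅) := by
    rintro x ⟨r, hr, hx⟩
    obtain ⟨p, hp1, hp2⟩ := exists_rat_btwn (by linarith : x - r < x)
    obtain ⟨q, hq1, hq2⟩ := exists_rat_btwn (by linarith : x < x + r)
    have hsub2 : Ioo (p:ℝ) q ⊆ closedBall x r := by
      rw [Real.closedBall_eq_Icc]
      exact fun z hz => ⟨by linarith [hz.1], by linarith [hz.2]⟩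
    have h0 : ν (Ioo (p:ℝ) q) = 0 :=
      le_antisymm (le_trans (measure_mono hsub2) hx.le) zero_le
    refine mem_iUnion.mpr ⟨p, mem_iUnion.mpr ⟨q, ?_⟩⟩
    rw [if_pos h0]
    exact ⟨hp2, hq1⟩
  refine le_antisymm (le_trans (measure_mono hsub) ?_) zero_le
  refine (measure_iUnion_null fun p => measure_iUnion_null fun q => ?_).le
  split_ifs with h
  · exact h
  · exact measure_empty


lemma null_IciZero : ν {x : ℝ | ν (Ici x) = 0} = 0 := by
  set V := {x : ℝ | ν (Ici x) = 0} with hV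
  have hup : ∀ ⦃z x : ℝ⦄, x ≤ z → x ∈ V → z ∈ V := fun z x hxz hx =>
    le_antisymm (le_trans (measure_mono (Ici_subset_Ici.mpr hxz)) hx.le) zero_le
  by_cases hVne : V.Nonempty
  · by_cases hVtop : ∃ x₀, x₀ ∉ V
    · obtain ⟨x₀, hx₀⟩ := hVtop
      have hbdd : BddBelow V := ⟨x₀, fun z hz => by
        by_contra hzx; push_neg at hzx
        exact hx₀ (hup hzx.le hz)⟩
      set s := sInf V with hs
      by_cases hsV : ν (Ici s) = 0
      · exact le_antisymm (le_trans (measure_mono fun z hz => csInf_le hbdd hz) hsV.le)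
          zero_le
      · have hVsub : V ⊆ Ioi s := fun z hz =>
          lt_of_le_of_ne (csInf_le hbdd hz) (fun he => hsV (by rw [hs, he]; exact hz))
        have hIoi : ν (Ioi s) = 0 := by
          have : Ioi s = ⋃ n : ℕ, Ici (s + 1/(n+1)) := by
            ext z
            simp only [mem_Ioi, mem_iUnion, mem_Ici]
            constructor
            · intro hz
              obtain ⟨n, hn⟩ := exists_nat_one_div_lt (sub_pos.mpr hz)
              exact ⟨n, by linarith⟩
            · intro ⟨n, hn⟩
              have : (0:ℝ) < 1/(n+1) := by positivity
              linarith
          rw [this]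
          refine measure_iUnion_null fun n => ?_
          have : (0:ℝ) < 1/(n+1) := by positivity
          obtain ⟨z, hzV, hz⟩ := exists_lt_of_csInf_lt hVne (by linarith : s < s + 1/(n+1))
          exact le_antisymm (le_trans (measure_mono (Ici_subset_Ici.mpr hz.le)) hzV.le)
            zero_le
        exact le_antisymm (le_trans (measure_mono hVsub) hIoi.le) zero_le
    · push_neg at hVtop
      have : ν (univ : Set ℝ) = 0 := by
        have : (univ : Set ℝ) = ⋃ n : ℕ, Ici (-(n:ℝ)) := by
          ext z
          simp only [mem_univ, mem_iUnion, mem_Ici, true_iff]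
          obtain ⟨n, hn⟩ := exists_nat_ge (-z)
          exact ⟨n, by linarith⟩
        rw [this]
        exact measure_iUnion_null fun n => hVtop _
      exact le_antisymm (le_trans (measure_mono (subset_univ _)) this.le) zero_le
  · rw [Set.not_nonempty_iff_eq_empty] at hVne
    simp [hVne]


end ident

section identmain

variable {β ν : Measure ℝ} [IsFiniteMeasure ν] [IsFiniteMeasure β]
  (hle : ∀ s, β s ≤ ν s)
  (hadj : ∀ ⦃a b c : ℝ⦄, a < b → b < c →
    β (Ioc a b) * ν (Ioc b c) ≤ ν (Ioc a b) * β (Ioc b c))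

/-- Goodness predicate at a point. -/
def Gd (β ν : Measure ℝ) (h : ℝ → ℝ≥0∞) (x : ℝ) : Prop :=
  Tendsto (fun r => β (Metric.closedBall x r) / ν (Metric.closedBall x r)) (𝓝[>] 0) (𝓝 (h x))
    ∧ (∀ r : ℝ, 0 < r → ν (Metric.closedBall x r) ≠ 0) ∧ ν (Iic x) ≠ 0

include hle hadj in
lemma Gr_eq_ae (h : ℝ → ℝ≥0∞) (hmh : Measurable h) (hh1 : ∀ x, h x ≤ 1)
    (hβh : ∀ A, MeasurableSet A → β A = ∫⁻ x in A, h x ∂ν) :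
    ∀ᵐ x ∂ν, Gr β ν x = h x := by
  have hext := adj_ext hle hadj
  have hIccIcc := adjIccIcc hext
  have hwd : β = ν.withDensity h := by
    ext A hA
    rw [withDensity_apply _ hA, hβh A hA]
  -- the goodness predicate holds a.e.
  have hGd : ∀ᵐ x ∂ν, Gd β ν h x := by
    have h1 := Besicovitch.ae_tendsto_rnDeriv β ν
    have h2 : β.rnDeriv ν =ᵐ[ν] h := by
      rw [hwd]; exact Measure.rnDeriv_withDensity ν hmh
    have h3 : ∀ᵐ x ∂ν, ∀ r : ℝ, 0 < r → ν (Metric.closedBall x r) ≠ 0 := by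
      rw [ae_iff]
      refine measure_mono_null ?_ (null_ballZero ν)
      intro x hx
      simp only [mem_setOf_eq] at hx ⊢
      push_neg at hx
      obtain ⟨r, hr, hr0⟩ := hx
      exact ⟨r, hr, hr0⟩
    have h4 : ∀ᵐ x ∂ν, ν (Iic x) ≠ 0 := by
      rw [ae_iff]
      refine measure_mono_null ?_ (null_IicZero ν)
      intro x hx
      simpa using hx
    filter_upwards [h1, h2, h3, h4] with x hx he h3x h4x
    exact ⟨by rwa [he] at hx, h3x, h4x⟩
  -- pointwise monotonicity at good points
  have hmono : ∀ x z : ℝ, Gd β ν h x → Gd β ν h z → x < z → h x ≤ h z := by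
    intro x z hx hz hxz
    refine le_of_tendsto_of_tendsto hx.1 hz.1 ?_
    filter_upwards [Ioo_mem_nhdsGT (by linarith : (0:ℝ) < (z - x)/2)] with r hr
    have hr0 : 0 < r := hr.1
    have hrz : r < (z - x)/2 := hr.2
    simp only [Real.closedBall_eq_Icc]
    have hcross := hIccIcc (by linarith : x - r ≤ x + r) (by linarith : x + r < z - r)
      (by linarith : z - r ≤ z + r)
    have hb0 : ν (Icc (x-r) (x+r)) ≠ 0 := by
      rw [← Real.closedBall_eq_Icc]; exact hx.2.1 r hr0
    have hd0 : ν (Icc (z-r) (z+r)) ≠ 0 := by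
      rw [← Real.closedBall_eq_Icc]; exact hz.2.1 r hr0
    exact crossdiv hcross hb0 (measure_ne_top _ _) hd0 (measure_ne_top _ _)
  -- Gr ≤ h at good points
  have hGrle : ∀ x : ℝ, Gd β ν h x → Gr β ν x ≤ h x := by
    intro x hx
    refine iSup₂_le fun a ha => ?_
    by_cases h0 : ν (Ioc a x) = 0
    · simp [beta_null hle h0]
    · refine ENNReal.div_le_of_le_mul ?_
      rw [hβh _ measurableSet_Ioc, mul_comm]
      calc ∫⁻ z in Ioc a x, h z ∂ν ≤ ∫⁻ _ in Ioc a x, h x ∂ν := by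
            refine lintegral_mono_ae ?_
            rw [ae_restrict_iff' measurableSet_Ioc]
            filter_upwards [hGd] with z hzG hzm
            rcases eq_or_lt_of_le hzm.2 with rfl | hzx
            · exact le_rfl
            · exact hmono z x hzG hx hzx
        _ = ν (Ioc a x) * h x := by
            rw [setLIntegral_const]; ring
  -- at atoms h ≤ Gr
  have hAtom : ∀ x : ℝ, ν {x} ≠ 0 → h x ≤ Gr β ν x := by
    intro x hx
    have hsing : β {x} = h x * ν {x} := by
      rw [hβh _ (measurableSet_singleton x), Measure.restrict_singleton,
        lintegral_smul_measure, lintegral_dirac, smul_eq_mul, mul_comm]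
    have : h x = β {x} / ν {x} := by
      rw [hsing, mul_div_assoc, ENNReal.div_self hx (measure_ne_top _ _), mul_one]
    rw [this]
    exact atom_le_Gr hle hx
  -- the set of good points where Gr < h
  set D := {x : ℝ | Gd β ν h x ∧ Gr β ν x < h x} with hD
  have hD0 : ∀ x ∈ D, ν {x} = 0 := by
    intro x hxD
    by_contra hne
    exact absurd hxD.2 (not_lt.mpr (hAtom x hne))
  have hDgap : ∀ x ∈ D, ∀ z, x < z → ν (Ioc x z) ≠ 0 := by
    intro x hxD z hxz hnull
    have key : ∀ r : ℝ, 0 < r → r < z - x →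
        β (Metric.closedBall x r) / ν (Metric.closedBall x r) ≤ Gr β ν x := by
      intro r hr hrz
      have hIocnull : ν (Ioc x (x+r)) = 0 :=
        measure_mono_null (Ioc_subset_Ioc_right (by linarith)) hnull
      have hsplit : Icc (x-r) (x+r) = Icc (x-r) x ∪ Ioc x (x+r) :=
        (Icc_union_Ioc_eq_Icc (by linarith) (by linarith)).symm
      have hdisj : Disjoint (Icc (x-r) x) (Ioc x (x+r)) := by
        refine Set.disjoint_left.mpr fun w hw1 hw2 => ?_
        exact absurd hw1.2 (not_le.mpr hw2.1)
      have hreqν : ν (Metric.closedBall x r) = ν (Icc (x-r) x) := by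
        rw [Real.closedBall_eq_Icc, hsplit, measure_union hdisj measurableSet_Ioc,
          hIocnull, add_zero]
      have hreqβ : β (Metric.closedBall x r) = β (Icc (x-r) x) := by
        rw [Real.closedBall_eq_Icc, hsplit, measure_union hdisj measurableSet_Ioc,
          beta_null hle hIocnull, add_zero]
      have hIcc0 : ν (Icc (x-r) x) ≠ 0 := by
        rw [← hreqν]; exact hxD.1.2.1 r hr
      have happrox : Tendsto (fun n : ℕ =>
          β (Ioc (x - r - 1/(n+1)) x) / ν (Ioc (x - r - 1/(n+1)) x)) atTop
          (𝓝 (β (Icc (x-r) x) / ν (Icc (x-r) x))) := by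
        refine ENNReal.Tendsto.div (tendsto_Ioc_Icc β (x-r) x) (Or.inr hIcc0)
          (tendsto_Ioc_Icc ν (x-r) x) (Or.inl (measure_ne_top _ _))
      have hlim : β (Icc (x-r) x) / ν (Icc (x-r) x) ≤ Gr β ν x := by
        refine le_of_tendsto happrox (Eventually.of_forall fun n => ?_)
        refine ratio_le_Gr ?_
        have : (0:ℝ) < 1/(n+1) := by positivity
        linarith
      rw [hreqν, hreqβ]
      exact hlim
    have hhle : h x ≤ Gr β ν x := by
      refine le_of_tendsto hxD.1.1 ?_
      filter_upwards [Ioo_mem_nhdsGT (by linarith : (0:ℝ) < z - x)] with r hr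
      exact key r hr.1 hr.2
    exact absurd hxD.2 (not_lt.mpr hhle)
  have hDlow : ∀ x ∈ D, ∀ x', x < x' → h x ≤ Gr β ν x' := by
    intro x hxD x' hxx'
    have hνI : ν (Ioc x x') ≠ 0 := hDgap x hxD x' hxx'
    have hint : h x * ν (Ioc x x') ≤ β (Ioc x x') := by
      rw [hβh _ measurableSet_Ioc]
      calc h x * ν (Ioc x x') = ∫⁻ _ in Ioc x x', h x ∂ν := by
            rw [setLIntegral_const]
        _ ≤ ∫⁻ z in Ioc x x', h z ∂ν := by
            refine lintegral_mono_ae ?_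
            rw [ae_restrict_iff' measurableSet_Ioc]
            filter_upwards [hGd] with z hzG hzm
            exact hmono x z hxD.1 hzG hzm.1
    have : h x ≤ β (Ioc x x') / ν (Ioc x x') :=
      (ENNReal.le_div_iff_mul_le (Or.inl hνI) (Or.inl (measure_ne_top _ _))).mpr hint
    exact this.trans (ratio_le_Gr hxx')
  -- D is countable
  have hDc : D.Countable := by
    have hex : ∀ x ∈ D, ∃ q : ℚ, 0 ≤ q ∧ Gr β ν x < Real.toNNReal q ∧
        ((Real.toNNReal q : ℝ≥0∞)) < h x := fun x hx =>
      ENNReal.lt_iff_exists_rat_btwn.mp hx.2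
    classical
    choose! f hf0 hf1 hf2 using hex
    have hinj : ∀ x ∈ D, ∀ y ∈ D, f x = f y → x = y := by
      intro x hx y hy hfeq
      by_contra hne
      rcases lt_or_gt_of_ne hne with hlt | hlt
      · have h1 : ((Real.toNNReal (f x) : ℝ≥0∞)) < h x := hf2 x hx
        have h2 : h x ≤ Gr β ν y := hDlow x hx y hlt
        have h3 : Gr β ν y < Real.toNNReal (f y) := hf1 y hy
        rw [hfeq] at h1
        exact absurd (h1.trans_le h2) (not_lt.mpr h3.le)
      · have h1 : ((Real.toNNReal (f y) : ℝ≥0∞)) < h y := hf2 y hy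
        have h2 : h y ≤ Gr β ν x := hDlow y hy x hlt
        have h3 : Gr β ν x < Real.toNNReal (f x) := hf1 x hx
        rw [← hfeq] at h1
        exact absurd (h1.trans_le h2) (not_lt.mpr h3.le)
    exact Set.countable_iff_exists_injOn.mpr
      ⟨fun x => Encodable.encode (f x), fun x hx y hy hxy =>
        hinj x hx y hy (Encodable.encode_injective hxy)⟩
  have hDnull : ν D = 0 := by
    have : D = ⋃ x ∈ D, {x} := (Set.biUnion_of_singleton D).symm
    rw [this]
    exact (measure_biUnion_null_iff hDc).mpr fun x hx => hD0 x hx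
  -- conclusion
  have hsub : {x : ℝ | Gr β ν x ≠ h x} ⊆ {x : ℝ | ¬ Gd β ν h x} ∪ D := by
    intro x hx
    by_cases hg : Gd β ν h x
    · right
      exact ⟨hg, lt_of_le_of_ne (hGrle x hg) hx⟩
    · left
      exact hg
  rw [ae_iff]
  refine measure_mono_null hsub (measure_union_null ?_ hDnull)
  exact ae_iff.mp hGd

end identmain

section helpers

lemma Gr_mono_meas {β' β ν : Measure ℝ} [IsFiniteMeasure ν] [IsFiniteMeasure β] (h : ∀ s, β' s ≤ β s) (x : ℝ) :
    Gr β' ν x ≤ Gr β ν x :=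
  iSup₂_le fun a ha => le_trans (ENNReal.div_le_div (h _) le_rfl) (ratio_le_Gr ha)

lemma iInf_eq_zero_of_div {a : ℚ → ℝ≥0∞} {c : ℝ≥0∞} (h : ⨅ q, a q = 0) (hc0 : c ≠ 0)
    (hct : c ≠ ∞) {f : ℚ → ℝ≥0∞} (hf : ∀ q, f q ≤ a q / c) : ⨅ q, f q = 0 := by
  refine le_antisymm ?_ zero_le
  by_contra h'
  have hd : ⨅ q, f q ≠ 0 := fun he => h' he.le
  have : ∀ q, (⨅ q', f q') * c ≤ a q := fun q =>
    (ENNReal.le_div_iff_mul_le (Or.inl hc0) (Or.inl hct)).mp ((iInf_le f q).trans (hf q))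
  have h0 : (⨅ q', f q') * c ≤ 0 := h ▸ le_iInf this
  exact mul_ne_zero hd hc0 (le_antisymm h0 zero_le)

lemma real_iInf_one_sub {ι : Sort*} [Nonempty ι] (g : ι → ℝ) (h0 : ∀ i, 0 ≤ g i)
    (h1 : ∀ i, g i ≤ 1) : ⨅ i, (1 - g i) = 1 - ⨆ i, g i := by
  have hba : BddAbove (range g) := ⟨1, by rintro _ ⟨i, rfl⟩; exact h1 i⟩
  have hbb : BddBelow (range fun i => 1 - g i) := ⟨0, by rintro _ ⟨i, rfl⟩; simp; linarith [h1 i]⟩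
  apply le_antisymm
  · have h2 : ⨆ i, g i ≤ 1 - ⨅ i, (1 - g i) := ciSup_le fun i => by
      have := ciInf_le hbb i
      linarith
    linarith
  · exact le_ciInf fun i => by have := le_ciSup hba i; linarith

lemma iInter_Ioi_rat : ⋂ q : ℚ, Ioi (q : ℝ) = ∅ := by
  ext z
  simp only [mem_iInter, mem_Ioi, mem_empty_iff_false, iff_false, not_forall, not_lt]
  obtain ⟨q, hq⟩ := exists_rat_gt z
  exact ⟨q, hq.le⟩

lemma iUnion_Ioi_rat : ⋃ q : ℚ, Ioi (q : ℝ) = univ := by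
  ext z
  simp only [mem_iUnion, mem_Ioi, mem_univ, iff_true]
  obtain ⟨q, hq⟩ := exists_rat_lt z
  exact ⟨q, hq⟩

lemma directed_Ioi_rat : Directed (· ⊇ ·) (fun q : ℚ => Ioi (q : ℝ)) := fun q q' =>
  ⟨max q q', Ioi_subset_Ioi (by exact_mod_cast le_max_left q q'),
    Ioi_subset_Ioi (by exact_mod_cast le_max_right q q')⟩

lemma directed_Ioi_rat' : Directed (· ⊆ ·) (fun q : ℚ => Ioi (q : ℝ)) := fun q q' =>
  ⟨min q q', Ioi_subset_Ioi (by exact_mod_cast min_le_left q q'),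
    Ioi_subset_Ioi (by exact_mod_cast min_le_right q q')⟩

lemma measure_Iic_eq_iInf (ξ : Measure ℝ) [IsFiniteMeasure ξ] (t : ℝ) :
    ξ (Iic t) = ⨅ r : {r' : ℚ // t < (r' : ℝ)}, ξ (Iic (r : ℝ)) := by
  have hne : Nonempty {r' : ℚ // t < (r' : ℝ)} := by
    obtain ⟨r, hr⟩ := exists_rat_gt t
    exact ⟨⟨r, hr⟩⟩
  have hI : ⋂ r : {r' : ℚ // t < (r' : ℝ)}, Iic ((r : ℚ) : ℝ) = Iic t := by
    ext z
    simp only [mem_iInter, mem_Iic]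
    constructor
    · intro h
      by_contra hz
      push_neg at hz
      obtain ⟨r, hr1, hr2⟩ := exists_rat_btwn hz
      exact absurd (h ⟨r, hr1⟩) (not_le.mpr hr2)
    · intro h r
      exact h.trans (le_of_lt r.2)
  rw [← hI]
  refine Directed.measure_iInter (fun _ => measurableSet_Iic.nullMeasurableSet) ?_
    ⟨hne.some, measure_ne_top _ _⟩
  intro r r'
  refine ⟨⟨min r.1 r'.1, by rw [Rat.cast_min]; exact lt_min r.2 r'.2⟩, ?_, ?_⟩
  · exact Iic_subset_Iic.mpr (by rw [Rat.cast_min]; exact min_le_left _ _)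
  · exact Iic_subset_Iic.mpr (by rw [Rat.cast_min]; exact min_le_right _ _)

end helpers

section main2to3

open ProbabilityTheory

theorem construct_kernel (ν : Measure ℝ) [IsProbabilityMeasure ν] (κ : Kernel ℝ ℝ)
    [IsMarkovKernel κ] (βq : ℚ → Measure ℝ) [hfinβ : ∀ q, IsFiniteMeasure (βq q)]
    (hleβ : ∀ q s, βq q s ≤ ν s)
    (hadjβ : ∀ q : ℚ, ∀ ⦃a b c : ℝ⦄, a < b → b < c →
      βq q (Ioc a b) * ν (Ioc b c) ≤ ν (Ioc a b) * βq q (Ioc b c))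
    (hβh : ∀ (q : ℚ) (A : Set ℝ), MeasurableSet A →
      βq q A = ∫⁻ x in A, κ x (Ioi (q:ℝ)) ∂ν)
    (hβmono : ∀ ⦃q q' : ℚ⦄, q ≤ q' → ∀ s, βq q' s ≤ βq q s)
    (hβsup : ∀ (q : ℚ) (A : Set ℝ), MeasurableSet A →
      βq q A = ⨆ r : {r' : ℚ // q < r'}, βq r A)
    (hβiInf : ∀ A : Set ℝ, MeasurableSet A → ⨅ q : ℚ, βq q A = 0)
    (hβiSup : ∀ A : Set ℝ, MeasurableSet A → ⨆ q : ℚ, βq q A = ν A) :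
    ∃ K : Kernel ℝ ℝ, IsMarkovKernel K ∧ (∀ᵐ x ∂ν, K x = κ x) ∧
      ∀ x₁ x₂ : ℝ, ν (Iic x₁) ≠ 0 → ν (Ici x₁) ≠ 0 → ν (Iic x₂) ≠ 0 → ν (Ici x₂) ≠ 0 →
        x₁ < x₂ → IsST (K x₁) (K x₂) := by
  classical
  have hκ1 : ∀ (q : ℚ) (x : ℝ), κ x (Ioi (q:ℝ)) ≤ 1 := fun q x => prob_le_one
  have hκm : ∀ q : ℚ, Measurable (fun x => κ x (Ioi (q:ℝ))) := fun q =>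
    κ.measurable_coe measurableSet_Ioi
  have hae : ∀ᵐ x ∂ν, ∀ q : ℚ, Gr (βq q) ν x = κ x (Ioi (q:ℝ)) :=
    ae_all_iff.mpr fun q => Gr_eq_ae (hleβ q) (hadjβ q) _ (hκm q) (hκ1 q) (hβh q)
  set G : ℚ → ℝ → ℝ≥0∞ := fun q x => Gr (βq q) ν x with hGdef
  have hGx : ∀ q : ℚ, Monotone (G q) := fun q => Gr_mono (hleβ q) (hadjβ q)
  have hGq : ∀ (x : ℝ) ⦃q q' : ℚ⦄, q ≤ q' → G q' x ≤ G q x := fun x q q' hqq' =>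
    Gr_mono_meas (hβmono hqq') x
  have hG1 : ∀ (q : ℚ) (x : ℝ), G q x ≤ 1 := fun q x => Gr_le_one (hleβ q) x
  have hGtop : ∀ (q : ℚ) (x : ℝ), G q x ≠ ∞ := fun q x =>
    (lt_of_le_of_lt (hG1 q x) ENNReal.one_lt_top).ne
  -- right continuity in q
  have hGrc : ∀ (x : ℝ) (q : ℚ), G q x = ⨆ r : {r' : ℚ // q < r'}, G r x := by
    intro x q
    have hne : Nonempty {r' : ℚ // q < r'} := ⟨⟨q + 1, lt_add_one q⟩⟩
    refine le_antisymm ?_ (iSup_le fun r => hGq x r.2.le)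
    refine iSup₂_le fun a ha => ?_
    calc βq q (Ioc a x) / ν (Ioc a x)
        = ⨆ r : {r' : ℚ // q < r'}, βq r (Ioc a x) / ν (Ioc a x) := by
          rw [hβsup q _ measurableSet_Ioc, ENNReal.iSup_div]
      _ ≤ ⨆ r : {r' : ℚ // q < r'}, G r x := iSup_mono fun r => ratio_le_Gr ha
  -- the rational CDF candidate
  set frat : ℝ → ℚ → ℝ := fun x q => 1 - (G q x).toReal with hfratdef
  have hfrat0 : ∀ x q, 0 ≤ frat x q := fun x q => by
    simp only [hfratdef, sub_nonneg]
    exact ENNReal.toReal_le_of_le_ofReal zero_le_one (by simpa using hG1 q x)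
  have hfrat1 : ∀ x q, frat x q ≤ 1 := fun x q => by
    simp only [hfratdef]
    have := ENNReal.toReal_nonneg (a := G q x)
    linarith
  have hfmono : ∀ x, Monotone (frat x) := by
    intro x q q' hqq'
    simp only [hfratdef, sub_le_sub_iff_left]
    exact ENNReal.toReal_mono (hGtop q x) (hGq x hqq')
  have hfmeas : Measurable frat := by
    refine measurable_pi_lambda _ fun q => ?_
    exact Measurable.const_sub ((hGx q).measurable.ennreal_toReal) 1
  have hfiInf : ∀ (x : ℝ) (q : ℚ), ⨅ r : Ioi q, frat x r = frat x q := by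
    intro x q
    have hne : Nonempty (Ioi q) := ⟨⟨q + 1, lt_add_one q⟩⟩
    calc ⨅ r : Ioi q, frat x r = 1 - ⨆ r : Ioi q, (G (r : ℚ) x).toReal := by
          refine real_iInf_one_sub _ (fun r => ENNReal.toReal_nonneg) ?_
          intro r
          exact ENNReal.toReal_le_of_le_ofReal zero_le_one (by simpa using hG1 r x)
      _ = frat x q := by
          rw [hfratdef]
          congr 1
          rw [← ENNReal.toReal_iSup (fun (r : Ioi q) => hGtop r.1 x)]
          congr 1
          rw [hGrc x q]
          exact (iSup_congr fun r => rfl).symm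
  -- Stieltjes point criterion
  have hSP : ∀ x : ℝ, (⨅ q : ℚ, G q x) = 0 → (⨆ q : ℚ, G q x) = 1 →
      IsRatStieltjesPoint frat x := by
    intro x hinf hsup
    have h1 : Tendsto (fun q : ℚ => G q x) atTop (𝓝 0) := by
      rw [← hinf]
      exact tendsto_atTop_iInf fun q q' h => hGq x h
    have h2 : Tendsto (fun q : ℚ => G q x) atBot (𝓝 1) := by
      rw [← hsup]
      exact tendsto_atBot_iSup fun q q' h => hGq x h
    have h1' : Tendsto (fun q : ℚ => (G q x).toReal) atTop (𝓝 0) := by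
      have := (ENNReal.tendsto_toReal (by simp : (0:ℝ≥0∞) ≠ ∞)).comp h1
      simpa [Function.comp_def] using this
    have h2' : Tendsto (fun q : ℚ => (G q x).toReal) atBot (𝓝 1) := by
      have := (ENNReal.tendsto_toReal (by simp : (1:ℝ≥0∞) ≠ ∞)).comp h2
      simpa [Function.comp_def] using this
    refine ⟨hfmono x, ?_, ?_, hfiInf x⟩
    · have := tendsto_const_nhds (x := (1:ℝ)) (f := atTop (α := ℚ)) |>.sub h1'
      simpa using this
    · have := tendsto_const_nhds (x := (1:ℝ)) (f := atBot (α := ℚ)) |>.sub h2'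
      simpa using this
  -- the kernel
  set SF : ℝ → StieltjesFunction ℝ := stieltjesOfMeasurableRat frat hfmeas with hSFdef
  have hSFeq : ∀ x : ℝ, IsRatStieltjesPoint frat x → ∀ t : ℝ,
      SF x t = ⨅ r : {r' : ℚ // t < (r' : ℝ)}, frat x r := by
    intro x hSPx t
    have h1 : SF x t = IsMeasurableRatCDF.stieltjesFunctionAux (toRatCDF frat) x t := rfl
    rw [h1, IsMeasurableRatCDF.stieltjesFunctionAux_def]
    refine iInf_congr fun r => ?_
    simp only [toRatCDF, if_pos hSPx]
  have hsub : ∀ t : ℝ, Nonempty {r' : ℚ // t < (r' : ℝ)} := by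
    intro t
    obtain ⟨r, hr⟩ := exists_rat_gt t
    exact ⟨⟨r, hr⟩⟩
  refine ⟨⟨fun x => (SF x).measure, measurable_measure_stieltjesOfMeasurableRat hfmeas⟩,
    ⟨fun x => instIsProbabilityMeasure_stieltjesOfMeasurableRat hfmeas x⟩, ?_, ?_⟩
  case _ =>
    filter_upwards [hae] with x hx
    have hinf : (⨅ q : ℚ, G q x) = 0 := by
      have h0 : ⨅ q : ℚ, (κ x) (Ioi (q:ℝ)) = 0 := by
        rw [← Directed.measure_iInter (fun q => measurableSet_Ioi.nullMeasurableSet)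
          directed_Ioi_rat ⟨0, measure_ne_top _ _⟩, iInter_Ioi_rat, measure_empty]
      rw [← h0]
      exact iInf_congr fun q => hx q
    have hsup : (⨆ q : ℚ, G q x) = 1 := by
      have h0 : ⨆ q : ℚ, (κ x) (Ioi (q:ℝ)) = 1 := by
        rw [← Directed.measure_iUnion directed_Ioi_rat', iUnion_Ioi_rat, measure_univ]
      rw [← h0]
      exact iSup_congr fun q => hx q
    have hSPx := hSP x hinf hsup
    show (SF x).measure = κ x
    haveI : Nonempty {r' : ℚ // (0:ℝ) < (r' : ℝ)} := hsub 0
    refine MeasureTheory.Measure.ext_of_Iic _ _ (fun t => ?_)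
    haveI : Nonempty {r' : ℚ // t < (r' : ℝ)} := hsub t
    rw [measure_stieltjesOfMeasurableRat_Iic hfmeas x t]
    have hterm : ∀ r : ℚ, ENNReal.ofReal (frat x r) = 1 - κ x (Ioi (r:ℝ)) := by
      intro r
      have h3 : frat x r = 1 - (G r x).toReal := rfl
      have h4 : G r x = κ x (Ioi (r:ℝ)) := hx r
      rw [h3, ENNReal.ofReal_sub _ ENNReal.toReal_nonneg, ENNReal.ofReal_one,
        ENNReal.ofReal_toReal (hGtop r x), h4]
    have h2 : (stieltjesOfMeasurableRat frat hfmeas x) t = SF x t := rfl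
    rw [h2, hSFeq x hSPx t, ENNReal.ofReal_iInf, measure_Iic_eq_iInf (κ x) t]
    refine iInf_congr fun r => ?_
    rw [hterm r, ← prob_compl_eq_one_sub measurableSet_Ioi, compl_Ioi]
  case _ =>
    have hinfsup : ∀ x : ℝ, ν (Iic x) ≠ 0 → ν (Ici x) ≠ 0 →
        (⨅ q : ℚ, G q x) = 0 ∧ (⨆ q : ℚ, G q x) = 1 := by
      intro x hIic hIci
      constructor
      · by_cases hIoi : ν (Ioi x) = 0
        · have hx0 : ν {x} ≠ 0 := by
            intro h0
            apply hIci
            have hIcieq : Ici x = {x} ∪ Ioi x := by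
              ext z
              simp only [mem_Ici, mem_union, mem_singleton_iff, mem_Ioi]
              constructor
              · intro h
                rcases eq_or_lt_of_le h with h | h
                · exact Or.inl h.symm
                · exact Or.inr h
              · rintro (rfl | h)
                · exact le_rfl
                · exact h.le
            rw [hIcieq]
            exact measure_union_null h0 hIoi
          refine iInf_eq_zero_of_div (hβiInf (Iic x) measurableSet_Iic) hx0
            (measure_ne_top _ _) (fun q => ?_)
          refine iSup₂_le fun a ha => ?_
          exact ENNReal.div_le_div (measure_mono Ioc_subset_Iic_self)
            (measure_mono (singleton_subset_iff.mpr ⟨ha, le_rfl⟩))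
        · have hex : ∃ n : ℕ, ν (Ioc x (x + (n+1))) ≠ 0 := by
            by_contra hall
            push_neg at hall
            apply hIoi
            have hU : Ioi x = ⋃ n : ℕ, Ioc x (x + (n+1)) := by
              ext z
              simp only [mem_Ioi, mem_iUnion, mem_Ioc]
              constructor
              · intro hz
                obtain ⟨n, hn⟩ := exists_nat_ge (z - x)
                exact ⟨n, hz, by linarith⟩
              · rintro ⟨n, hn, -⟩
                exact hn
            rw [hU]
            exact measure_iUnion_null hall
          obtain ⟨n, hn⟩ := hex
          refine iInf_eq_zero_of_div (hβiInf (Ioc x (x + (n+1))) measurableSet_Ioc) hn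
            (measure_ne_top _ _) (fun q => ?_)
          refine Gr_le_right (hleβ q) (hadjβ q) ?_ hn
          have : (0:ℝ) ≤ n := n.cast_nonneg
          linarith
      · have hex : ∃ n : ℕ, ν (Ioc (x - (n+1)) x) ≠ 0 := by
          by_contra hall
          push_neg at hall
          apply hIic
          have hU : Iic x = ⋃ n : ℕ, Ioc (x - (n+1)) x := by
            ext z
            simp only [mem_Iic, mem_iUnion, mem_Ioc]
            constructor
            · intro hz
              obtain ⟨n, hn⟩ := exists_nat_ge (x - z)
              exact ⟨n, by linarith, hz⟩
            · rintro ⟨n, -, hn⟩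
              exact hn
          rw [hU]
          exact measure_iUnion_null hall
        obtain ⟨n, hn⟩ := hex
        have haxn : x - (n+1) < x := by
          have : (0:ℝ) ≤ n := n.cast_nonneg
          linarith
        refine le_antisymm (iSup_le fun q => hG1 q x) ?_
        calc (1:ℝ≥0∞) = ν (Ioc (x-(n+1)) x) / ν (Ioc (x-(n+1)) x) :=
              (ENNReal.div_self hn (measure_ne_top _ _)).symm
          _ = (⨆ q : ℚ, βq q (Ioc (x-(n+1)) x)) / ν (Ioc (x-(n+1)) x) := by
              rw [hβiSup _ measurableSet_Ioc]
          _ = ⨆ q : ℚ, βq q (Ioc (x-(n+1)) x) / ν (Ioc (x-(n+1)) x) :=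
              ENNReal.iSup_div _ _
          _ ≤ ⨆ q : ℚ, G q x := iSup_mono fun q => ratio_le_Gr haxn
    intro x₁ x₂ h1a h1b h2a h2b h12
    obtain ⟨hi1, hs1⟩ := hinfsup x₁ h1a h1b
    obtain ⟨hi2, hs2⟩ := hinfsup x₂ h2a h2b
    have hSP1 := hSP x₁ hi1 hs1
    have hSP2 := hSP x₂ hi2 hs2
    intro t
    show (SF x₂).measure (Iic t) ≤ (SF x₁).measure (Iic t)
    rw [measure_stieltjesOfMeasurableRat_Iic hfmeas x₁ t,
      measure_stieltjesOfMeasurableRat_Iic hfmeas x₂ t]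
    apply ENNReal.ofReal_le_ofReal
    have e1 : (stieltjesOfMeasurableRat frat hfmeas x₁) t = SF x₁ t := rfl
    have e2 : (stieltjesOfMeasurableRat frat hfmeas x₂) t = SF x₂ t := rfl
    rw [e1, e2, hSFeq x₁ hSP1 t, hSFeq x₂ hSP2 t]
    haveI : Nonempty {r' : ℚ // t < (r' : ℝ)} := hsub t
    have hbdd : BddBelow (range fun r : {r' : ℚ // t < (r' : ℝ)} => frat x₂ r) := by
      refine ⟨0, ?_⟩
      rintro _ ⟨r, rfl⟩
      exact hfrat0 x₂ r
    refine le_ciInf fun r => (ciInf_le hbdd r).trans ?_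
    have : (G r x₁ : ℝ≥0∞).toReal ≤ (G r x₂).toReal :=
      ENNReal.toReal_mono (hGtop r x₂) (hGx r h12.le)
    show (1:ℝ) - (G r x₂).toReal ≤ 1 - (G r x₁).toReal
    linarith

end main2to3


section wrappers

open ProbabilityTheory

variable {Ω : Type*} [MeasurableSpace Ω] (μ : Measure Ω) [IsProbabilityMeasure μ]
  (X Y : Ω → ℝ) (hX : Measurable X) (hY : Measurable Y)

include hX hY in
theorem two_to_three
    (h2 : ∀ x₀ x₁ x₂ : ℝ, x₀ < x₁ → x₁ < x₂ → ∀ y : ℝ,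
      μ {ω | X ω ∈ Ioc x₀ x₁ ∧ y < Y ω} * μ {ω | X ω ∈ Ioc x₁ x₂} ≤
        μ {ω | X ω ∈ Ioc x₀ x₁} * μ {ω | X ω ∈ Ioc x₁ x₂ ∧ y < Y ω}) :
    ∃ K : Kernel ℝ ℝ, IsMarkovKernel K ∧
      (∀ A B : Set ℝ, MeasurableSet A → MeasurableSet B →
        μ {ω | X ω ∈ A ∧ Y ω ∈ B} = ∫⁻ x in A, K x B ∂(μ.map X)) ∧
      ∀ x₁ x₂ : ℝ,
        (0 < μ {ω | X ω ≤ x₁} ∧ 0 < μ {ω | x₁ ≤ X ω}) →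
        (0 < μ {ω | X ω ≤ x₂} ∧ 0 < μ {ω | x₂ ≤ X ω}) →
        x₁ < x₂ → IsST (K x₁) (K x₂) := by
  classical
  set ν : Measure ℝ := μ.map X with hνdef
  set ρ : Measure (ℝ × ℝ) := μ.map (fun ω => (X ω, Y ω)) with hρdef
  haveI : IsProbabilityMeasure ρ := Measure.isProbabilityMeasure_map (hX.prodMk hY).aemeasurable
  haveI : IsProbabilityMeasure ν := Measure.isProbabilityMeasure_map hX.aemeasurable
  have hfst : ρ.fst = ν := Measure.fst_map_prodMk₀ hY.aemeasurable
  set κ : Kernel ℝ ℝ := ρ.condKernel with hκdef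
  have hνA : ∀ A : Set ℝ, MeasurableSet A → ν A = μ {ω | X ω ∈ A} := fun A hA => by
    rw [hνdef, Measure.map_apply hX hA]; rfl
  have hρAB : ∀ A B : Set ℝ, MeasurableSet A → MeasurableSet B →
      ρ (A ×ˢ B) = μ {ω | X ω ∈ A ∧ Y ω ∈ B} := fun A B hA hB => by
    rw [hρdef, Measure.map_apply (hX.prodMk hY) (hA.prod hB)]
    rfl
  have hint : ∀ A B : Set ℝ, MeasurableSet A → MeasurableSet B →
      ρ (A ×ˢ B) = ∫⁻ x in A, κ x B ∂ν := fun A B hA hB => by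
    rw [← hfst]
    exact (Measure.setLIntegral_condKernel_eq_measure_prod hA hB).symm
  have hYq : ∀ q : ℚ, MeasurableSet {ω | (q:ℝ) < Y ω} := fun q =>
    measurableSet_lt measurable_const hY
  have hYmono : ∀ ⦃q q' : ℚ⦄, q ≤ q' → {ω | (q':ℝ) < Y ω} ⊆ {ω | (q:ℝ) < Y ω} :=
    fun q q' h ω hω => lt_of_le_of_lt (show ((q:ℝ)) ≤ (q':ℝ) by exact_mod_cast h) hω
  set βq : ℚ → Measure ℝ := fun q => (μ.restrict {ω | (q:ℝ) < Y ω}).map X with hβdef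
  haveI hβfin : ∀ q, IsFiniteMeasure (βq q) := fun q => by
    constructor
    rw [hβdef, Measure.map_apply hX MeasurableSet.univ]
    exact lt_of_le_of_lt (Measure.le_iff'.mp Measure.restrict_le_self _) (measure_lt_top μ _)
  have hβA : ∀ (q : ℚ) (A : Set ℝ), MeasurableSet A →
      βq q A = μ (X ⁻¹' A ∩ {ω | (q:ℝ) < Y ω}) := fun q A hA => by
    rw [hβdef, Measure.map_apply hX hA, Measure.restrict_apply (hX hA)]
  have hβA' : ∀ (q : ℚ) (A : Set ℝ), MeasurableSet A →
      βq q A = μ {ω | X ω ∈ A ∧ (q:ℝ) < Y ω} := fun q A hA => by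
    rw [hβA q A hA]
    rfl
  have hβρ : ∀ (q : ℚ) (A : Set ℝ), MeasurableSet A →
      βq q A = ρ (A ×ˢ Ioi (q:ℝ)) := fun q A hA => by
    rw [hβA' q A hA, hρAB A _ hA measurableSet_Ioi]
    congr 1
  have hleβ : ∀ q, ∀ s, βq q s ≤ ν s := fun q =>
    Measure.le_iff'.mp (Measure.map_mono Measure.restrict_le_self hX)
  have hadjβ : ∀ q : ℚ, ∀ ⦃a b c : ℝ⦄, a < b → b < c →
      βq q (Ioc a b) * ν (Ioc b c) ≤ ν (Ioc a b) * βq q (Ioc b c) := by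
    intro q a b c hab hbc
    rw [hβA' q _ measurableSet_Ioc, hβA' q _ measurableSet_Ioc,
      hνA _ measurableSet_Ioc, hνA _ measurableSet_Ioc]
    exact h2 a b c hab hbc q
  have hβh : ∀ (q : ℚ) (A : Set ℝ), MeasurableSet A →
      βq q A = ∫⁻ x in A, κ x (Ioi (q:ℝ)) ∂ν := fun q A hA => by
    rw [hβρ q A hA, hint A _ hA measurableSet_Ioi]
  have hβmono : ∀ ⦃q q' : ℚ⦄, q ≤ q' → ∀ s, βq q' s ≤ βq q s := by
    intro q q' hqq'
    exact Measure.le_iff'.mp (Measure.map_mono (Measure.restrict_mono (hYmono hqq') le_rfl) hX)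
  have hβsup : ∀ (q : ℚ) (A : Set ℝ), MeasurableSet A →
      βq q A = ⨆ r : {r' : ℚ // q < r'}, βq r A := by
    intro q A hA
    have h1 : ∀ r : {r' : ℚ // q < r'}, βq r A
        = μ (X ⁻¹' A ∩ {ω | ((r : ℚ) : ℝ) < Y ω}) := fun r => hβA r A hA
    rw [hβA q A hA]
    simp_rw [h1]
    have hU : X ⁻¹' A ∩ {ω | (q:ℝ) < Y ω}
        = ⋃ r : {r' : ℚ // q < r'}, (X ⁻¹' A ∩ {ω | ((r : ℚ) : ℝ) < Y ω}) := by
      ext ω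
      simp only [mem_inter_iff, mem_preimage, mem_setOf_eq, mem_iUnion]
      constructor
      · rintro ⟨h1', h2'⟩
        obtain ⟨r, hr1, hr2⟩ := exists_rat_btwn h2'
        exact ⟨⟨r, by exact_mod_cast hr1⟩, h1', hr2⟩
      · rintro ⟨r, h1', h2'⟩
        exact ⟨h1', lt_trans (by exact_mod_cast r.2) h2'⟩
    rw [hU]
    refine Directed.measure_iUnion ?_
    intro r r'
    rcases le_total r.1 r'.1 with h | h
    · exact ⟨r, le_rfl, inter_subset_inter_right _ (hYmono h)⟩
    · exact ⟨r', inter_subset_inter_right _ (hYmono h), le_rfl⟩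
  have hβiInf : ∀ A : Set ℝ, MeasurableSet A → ⨅ q : ℚ, βq q A = 0 := by
    intro A hA
    have h1 : ∀ q : ℚ, βq q A = μ (X ⁻¹' A ∩ {ω | (q:ℝ) < Y ω}) := fun q => hβA q A hA
    simp_rw [h1]
    have hI : ⋂ q : ℚ, (X ⁻¹' A ∩ {ω | (q:ℝ) < Y ω}) = ∅ := by
      ext ω
      simp only [mem_iInter, mem_inter_iff, mem_preimage, mem_setOf_eq,
        mem_empty_iff_false, iff_false, not_forall]
      obtain ⟨q, hq⟩ := exists_rat_gt (Y ω)
      exact ⟨q, fun h => absurd h.2 (not_lt.mpr hq.le)⟩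
    rw [← measure_empty (μ := μ), ← hI]
    refine (Directed.measure_iInter (s := fun q : ℚ => X ⁻¹' A ∩ {ω | (q:ℝ) < Y ω})
      (fun q => ((hX hA).inter (hYq q)).nullMeasurableSet)
      ?_ ⟨0, measure_ne_top _ _⟩).symm
    intro q q'
    exact ⟨max q q', inter_subset_inter_right _ (hYmono (le_max_left q q')),
      inter_subset_inter_right _ (hYmono (le_max_right q q'))⟩
  have hβiSup : ∀ A : Set ℝ, MeasurableSet A → ⨆ q : ℚ, βq q A = ν A := by
    intro A hA
    have h1 : ∀ q : ℚ, βq q A = μ (X ⁻¹' A ∩ {ω | (q:ℝ) < Y ω}) := fun q => hβA q A hA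
    simp_rw [h1]
    have hU : ⋃ q : ℚ, (X ⁻¹' A ∩ {ω | (q:ℝ) < Y ω}) = X ⁻¹' A := by
      ext ω
      simp only [mem_iUnion, mem_inter_iff, mem_preimage, mem_setOf_eq]
      constructor
      · rintro ⟨q, h, -⟩
        exact h
      · intro h
        obtain ⟨q, hq⟩ := exists_rat_lt (Y ω)
        exact ⟨q, h, hq⟩
    calc ⨆ q : ℚ, μ (X ⁻¹' A ∩ {ω | (q:ℝ) < Y ω})
        = μ (⋃ q : ℚ, (X ⁻¹' A ∩ {ω | (q:ℝ) < Y ω})) := by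
          refine (Directed.measure_iUnion
            (s := fun q : ℚ => X ⁻¹' A ∩ {ω | (q:ℝ) < Y ω}) ?_).symm
          intro q q'
          exact ⟨min q q', inter_subset_inter_right _ (hYmono (min_le_left q q')),
            inter_subset_inter_right _ (hYmono (min_le_right q q'))⟩
      _ = μ (X ⁻¹' A) := by rw [hU]
      _ = ν A := by rw [hνdef, Measure.map_apply hX hA]
  obtain ⟨K, hKmk, hKae, hKst⟩ := construct_kernel ν κ βq hleβ hadjβ hβh hβmono hβsup
    hβiInf hβiSup
  refine ⟨K, hKmk, ?_, ?_⟩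
  · intro A B hA hB
    have h1 : μ {ω | X ω ∈ A ∧ Y ω ∈ B} = ∫⁻ x in A, κ x B ∂ν := by
      rw [← hρAB A B hA hB, hint A B hA hB]
    rw [h1]
    refine lintegral_congr_ae ?_
    exact ae_restrict_of_ae (hKae.mono fun x hx =>
      congrArg (fun m : Measure ℝ => m B) hx.symm)
  · intro x₁ x₂ hx₁ hx₂ h12
    have hIic : ∀ x : ℝ, μ {ω | X ω ≤ x} = ν (Iic x) := fun x =>
      (hνA _ measurableSet_Iic).symm
    have hIci : ∀ x : ℝ, μ {ω | x ≤ X ω} = ν (Ici x) := fun x => by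
      rw [hνA _ measurableSet_Ici]
      rfl
    refine hKst x₁ x₂ ?_ ?_ ?_ ?_ h12
    · rw [← hIic]; exact hx₁.1.ne'
    · rw [← hIci]; exact hx₁.2.ne'
    · rw [← hIic]; exact hx₂.1.ne'
    · rw [← hIci]; exact hx₂.2.ne'

include hX hY in
theorem three_to_one
    (h3 : ∃ K : Kernel ℝ ℝ, IsMarkovKernel K ∧
      (∀ A B : Set ℝ, MeasurableSet A → MeasurableSet B →
        μ {ω | X ω ∈ A ∧ Y ω ∈ B} = ∫⁻ x in A, K x B ∂(μ.map X)) ∧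
      ∀ x₁ x₂ : ℝ,
        (0 < μ {ω | X ω ≤ x₁} ∧ 0 < μ {ω | x₁ ≤ X ω}) →
        (0 < μ {ω | X ω ≤ x₂} ∧ 0 < μ {ω | x₂ ≤ X ω}) →
        x₁ < x₂ → IsST (K x₁) (K x₂)) :
    ∀ A₁ A₂ : Set ℝ, MeasurableSet A₁ → MeasurableSet A₂ →
      (∀ a₁ ∈ A₁, ∀ a₂ ∈ A₂, a₁ < a₂) → ∀ y : ℝ,
      μ {ω | X ω ∈ A₁ ∧ y < Y ω} * μ {ω | X ω ∈ A₂} ≤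
        μ {ω | X ω ∈ A₁} * μ {ω | X ω ∈ A₂ ∧ y < Y ω} := by
  classical
  obtain ⟨K, hKmk, hKint, hKst⟩ := h3
  intro A₁ A₂ hA₁ hA₂ hlt y
  set ν : Measure ℝ := μ.map X with hνdef
  haveI : IsProbabilityMeasure ν := Measure.isProbabilityMeasure_map hX.aemeasurable
  have hνA : ∀ A : Set ℝ, MeasurableSet A → ν A = μ {ω | X ω ∈ A} := fun A hA => by
    rw [hνdef, Measure.map_apply hX hA]; rfl
  have hIic : ∀ x : ℝ, μ {ω | X ω ≤ x} = ν (Iic x) := fun x =>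
    (hνA _ measurableSet_Iic).symm
  have hIci : ∀ x : ℝ, μ {ω | x ≤ X ω} = ν (Ici x) := fun x => by
    rw [hνA _ measurableSet_Ici]; rfl
  have hgood : ∀ᵐ x ∂ν, (0 < μ {ω | X ω ≤ x} ∧ 0 < μ {ω | x ≤ X ω}) := by
    have h1 : ∀ᵐ x ∂ν, ν (Iic x) ≠ 0 := by
      rw [ae_iff]
      refine measure_mono_null ?_ (null_IicZero ν)
      intro x hx
      simpa using hx
    have h2 : ∀ᵐ x ∂ν, ν (Ici x) ≠ 0 := by
      rw [ae_iff]
      refine measure_mono_null ?_ (null_IciZero ν)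
      intro x hx
      simpa using hx
    filter_upwards [h1, h2] with x hx1 hx2
    rw [hIic, hIci]
    exact ⟨pos_iff_ne_zero.mpr hx1, pos_iff_ne_zero.mpr hx2⟩
  set g : ℝ → ℝ≥0∞ := fun x => K x (Ioi y) with hgdef
  have hgm : Measurable g := K.measurable_coe measurableSet_Ioi
  have e1 : ∀ A : Set ℝ, MeasurableSet A →
      μ {ω | X ω ∈ A ∧ y < Y ω} = ∫⁻ x in A, g x ∂ν := by
    intro A hA
    rw [← hKint A (Ioi y) hA measurableSet_Ioi]
    rfl
  have hgle : ∀ x, g x ≤ 1 := fun x => by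
    haveI := hKmk.isProbabilityMeasure x
    exact prob_le_one
  rw [e1 A₁ hA₁, e1 A₂ hA₂, ← hνA A₁ hA₁, ← hνA A₂ hA₂]
  have hd1 : (∫⁻ x in A₁, g x ∂ν) * ν A₂ = ∫⁻ x₁ in A₁, ∫⁻ _ in A₂, g x₁ ∂ν ∂ν := by
    have : ∀ x₁ : ℝ, ∫⁻ _ in A₂, g x₁ ∂ν = g x₁ * ν A₂ := fun x₁ => setLIntegral_const _ _
    simp_rw [this]
    rw [lintegral_mul_const _ hgm]
  have hd2 : ν A₁ * (∫⁻ x in A₂, g x ∂ν) = ∫⁻ _ in A₁, ∫⁻ x₂ in A₂, g x₂ ∂ν ∂ν := by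
    rw [setLIntegral_const, mul_comm]
  rw [hd1, hd2]
  refine lintegral_mono_ae ?_
  rw [ae_restrict_iff' hA₁]
  filter_upwards [hgood] with x₁ hx₁ hx₁A
  refine lintegral_mono_ae ?_
  rw [ae_restrict_iff' hA₂]
  filter_upwards [hgood] with x₂ hx₂ hx₂A
  have h12 : x₁ < x₂ := hlt x₁ hx₁A x₂ hx₂A
  have hst := hKst x₁ x₂ hx₁ hx₂ h12
  have hk : ∀ x : ℝ, K x (Ioi y) = 1 - K x (Iic y) := fun x => by
    haveI := hKmk.isProbabilityMeasure x
    rw [← compl_Iic, prob_compl_eq_one_sub measurableSet_Iic]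
  show g x₁ ≤ g x₂
  rw [hgdef]
  simp only
  rw [hk x₁, hk x₂]
  exact tsub_le_tsub_left (hst y) 1

end wrappers

end Stmt7

end Stmt7Aux

set_option maxHeartbeats 1000000 in
/-- **Theorem (stochastic order for conditional distributions).** For a random
pair `(X,Y)`, the following are equivalent: (i) the TP2-type inequality for
upper sets `{Y > y}` over Borel sets `A₁ < A₂`; (ii) the same for adjacent
intervals; (iii) there is a Markov kernel `K` giving the conditional
distribution of `Y` given `X` with `K(x₁,·) ≤st K(x₂,·)` for `x₁ < x₂` in the
range `𝒳` of `X`. -/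
theorem stmt7 {Ω : Type*} [MeasurableSpace Ω] (μ : Measure Ω) [IsProbabilityMeasure μ]
    (X Y : Ω → ℝ) (hX : Measurable X) (hY : Measurable Y) :
    List.TFAE
      [ ∀ A₁ A₂ : Set ℝ, MeasurableSet A₁ → MeasurableSet A₂ →
          (∀ a₁ ∈ A₁, ∀ a₂ ∈ A₂, a₁ < a₂) → ∀ y : ℝ,
          μ {ω | X ω ∈ A₁ ∧ y < Y ω} * μ {ω | X ω ∈ A₂} ≤
            μ {ω | X ω ∈ A₁} * μ {ω | X ω ∈ A₂ ∧ y < Y ω},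
        ∀ x₀ x₁ x₂ : ℝ, x₀ < x₁ → x₁ < x₂ → ∀ y : ℝ,
          μ {ω | X ω ∈ Ioc x₀ x₁ ∧ y < Y ω} * μ {ω | X ω ∈ Ioc x₁ x₂} ≤
            μ {ω | X ω ∈ Ioc x₀ x₁} * μ {ω | X ω ∈ Ioc x₁ x₂ ∧ y < Y ω},
        ∃ K : ProbabilityTheory.Kernel ℝ ℝ, ProbabilityTheory.IsMarkovKernel K ∧
          (∀ A B : Set ℝ, MeasurableSet A → MeasurableSet B →
            μ {ω | X ω ∈ A ∧ Y ω ∈ B} = ∫⁻ x in A, K x B ∂(μ.map X)) ∧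
          ∀ x₁ x₂ : ℝ,
            (0 < μ {ω | X ω ≤ x₁} ∧ 0 < μ {ω | x₁ ≤ X ω}) →
            (0 < μ {ω | X ω ≤ x₂} ∧ 0 < μ {ω | x₂ ≤ X ω}) →
            x₁ < x₂ → IsST (K x₁) (K x₂) ] := by
  tfae_have 1 → 2 := by
    intro h1 x₀ x₁ x₂ h01 h12 y
    exact h1 (Ioc x₀ x₁) (Ioc x₁ x₂) measurableSet_Ioc measurableSet_Ioc
      (fun a₁ ha₁ a₂ ha₂ => lt_of_le_of_lt ha₁.2 ha₂.1) y
  tfae_have 2 → 3 := Stmt7.two_to_three μ X Y hX hY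
  tfae_have 3 → 1 := Stmt7.three_to_one μ X Y hX hY
  tfae_finish
end

section
/- Suppose the random pair (X,Y) in ℝ² has a discrete distribution with probability mass function h(x,y) = P(X = x, Y = y), and let K be a stochastic kernel representing the conditional distribution of Y given X. Then the following two conditions are equivalent: (i) for arbitrary real numbers x₁ < x₂ with P(X = x₁) > 0 and P(X = x₂) > 0, K(x₁,·) ≤lr K(x₂,·), where K(x,B) = P(Y ∈ B | X = x); (ii) the function h is totally positive of order two, i.e. h(x₂,y₁)·h(x₁,y₂) ≤ h(x₁,y₁)·h(x₂,y₂) for all x₁ < x₂ and y₁ < y₂. -/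
open MeasureTheory Set
open scoped ENNReal

/-- **Corollary (discrete case).** If the pair `(X,Y)` has a discrete
(countably supported) distribution with probability mass function
`h(x,y) = P(X = x, Y = y)`, then the conditional distributions
`K(x,·) = L(Y | X = x)` are isotonic in `x` (over atoms of `X`) with respect
to the likelihood ratio order iff `h` is totally positive of order two. -/
theorem stmt9 {Ω : Type*} [MeasurableSpace Ω] (μ : Measure Ω) [IsProbabilityMeasure μ]
    (X Y : Ω → ℝ) (hX : Measurable X) (hY : Measurable Y)
    (S : Set (ℝ × ℝ)) (hS : S.Countable) (hsupp : μ {ω | (X ω, Y ω) ∈ S} = 1) :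
    (∀ x₁ x₂ : ℝ, x₁ < x₂ → 0 < μ {ω | X ω = x₁} → 0 < μ {ω | X ω = x₂} →
      IsLR ((μ {ω | X ω = x₁})⁻¹ • (μ.restrict {ω | X ω = x₁}).map Y)
           ((μ {ω | X ω = x₂})⁻¹ • (μ.restrict {ω | X ω = x₂}).map Y)) ↔
    (∀ x₁ x₂ y₁ y₂ : ℝ, x₁ < x₂ → y₁ < y₂ →
      μ {ω | X ω = x₂ ∧ Y ω = y₁} * μ {ω | X ω = x₁ ∧ Y ω = y₂} ≤
        μ {ω | X ω = x₁ ∧ Y ω = y₁} * μ {ω | X ω = x₂ ∧ Y ω = y₂}) := by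
  have hXset : ∀ x : ℝ, MeasurableSet {ω | X ω = x} := fun x =>
    hX (measurableSet_singleton x)
  have hXY : ∀ (x y : ℝ), MeasurableSet {ω | X ω = x ∧ Y ω = y} := fun x y =>
    (hX (measurableSet_singleton x)).inter (hY (measurableSet_singleton y))
  -- countable support on the `Y` side
  set T : Set ℝ := Prod.snd '' S with hT
  have hTc : T.Countable := hS.image _
  have hTnull : μ {ω | Y ω ∉ T} = 0 := by
    have h1 : MeasurableSet {ω | (X ω, Y ω) ∈ S} :=
      hS.measurableSet.preimage (hX.prodMk hY)
    have h2 : μ {ω | (X ω, Y ω) ∈ S}ᶜ = 0 := by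
      have := measure_compl h1 (measure_ne_top μ _)
      rw [hsupp, measure_univ] at this
      simpa using this
    refine measure_mono_null ?_ h2
    intro ω hω hmem
    exact hω ⟨(X ω, Y ω), hmem, rfl⟩
  have key : ∀ (x : ℝ) (E : Set ℝ),
      μ {ω | X ω = x ∧ Y ω ∈ E} = ∑' y : ↥(E ∩ T), μ {ω | X ω = x ∧ Y ω = (y : ℝ)} := by
    intro x E
    have h1 : μ {ω | X ω = x ∧ Y ω ∈ E} = μ {ω | X ω = x ∧ Y ω ∈ E ∩ T} := by
      apply le_antisymm
      · calc μ {ω | X ω = x ∧ Y ω ∈ E}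
            ≤ μ ({ω | X ω = x ∧ Y ω ∈ E ∩ T} ∪ {ω | Y ω ∉ T}) := by
              apply measure_mono
              rintro ω ⟨ha, hb⟩
              by_cases hy : Y ω ∈ T
              · exact Or.inl ⟨ha, hb, hy⟩
              · exact Or.inr hy
          _ ≤ μ {ω | X ω = x ∧ Y ω ∈ E ∩ T} + μ {ω | Y ω ∉ T} := measure_union_le _ _
          _ = μ {ω | X ω = x ∧ Y ω ∈ E ∩ T} := by rw [hTnull, add_zero]
      · exact measure_mono (fun ω hω => ⟨hω.1, hω.2.1⟩)
    have h2 : {ω | X ω = x ∧ Y ω ∈ E ∩ T} = ⋃ y ∈ E ∩ T, {ω | X ω = x ∧ Y ω = y} := by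
      ext ω
      simp only [mem_setOf_eq, mem_iUnion, exists_prop]
      constructor
      · rintro ⟨hx, hy⟩; exact ⟨Y ω, hy, hx, rfl⟩
      · rintro ⟨y, hy, hx, hyy⟩; exact ⟨hx, hyy ▸ hy⟩
    rw [h1, h2, measure_biUnion (hTc.mono inter_subset_right) ?_ (fun y _ => hXY x y)]
    intro a _ b _ hab
    simp only [Function.onFun]
    rw [Set.disjoint_left]
    rintro ω ⟨_, ha⟩ ⟨_, hb⟩
    exact hab (ha ▸ hb ▸ rfl)
  have hprod : ∀ a b c d e f : ℝ≥0∞, (a * b) * (c * d) = (a * c) * (b * d) := by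
    intros; ring
  constructor
  · -- LR order implies TP2
    intro hLR x₁ x₂ y₁ y₂ hx hy
    by_cases h1 : μ {ω | X ω = x₁} = 0
    · have : μ {ω | X ω = x₁ ∧ Y ω = y₂} = 0 :=
        measure_mono_null (fun ω hω => hω.1) h1
      simp [this]
    by_cases h2 : μ {ω | X ω = x₂} = 0
    · have : μ {ω | X ω = x₂ ∧ Y ω = y₁} = 0 :=
        measure_mono_null (fun ω hω => hω.1) h2
      simp [this]
    have hp1 : 0 < μ {ω | X ω = x₁} := pos_iff_ne_zero.mpr h1
    have hp2 : 0 < μ {ω | X ω = x₂} := pos_iff_ne_zero.mpr h2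
    have hkey := hLR x₁ x₂ hx hp1 hp2 {y₁} {y₂} (measurableSet_singleton _)
      (measurableSet_singleton _) (by
        intro a ha b hb
        rw [mem_singleton_iff] at ha hb
        subst ha; subst hb; exact hy.le)
    have hpre : ∀ (x y : ℝ), Y ⁻¹' {y} ∩ {ω | X ω = x} = {ω | X ω = x ∧ Y ω = y} := by
      intro x y; ext ω; simp [mem_preimage, and_comm]
    simp only [Measure.smul_apply, smul_eq_mul,
      Measure.map_apply hY (measurableSet_singleton _),
      Measure.restrict_apply (hY (measurableSet_singleton _)), hpre] at hkey
    have hne : (μ {ω | X ω = x₁})⁻¹ * (μ {ω | X ω = x₂})⁻¹ ≠ 0 := by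
      simp [ENNReal.inv_ne_zero, measure_ne_top]
    have hnt : (μ {ω | X ω = x₁})⁻¹ * (μ {ω | X ω = x₂})⁻¹ ≠ ∞ :=
      ENNReal.mul_ne_top (ENNReal.inv_ne_top.2 h1) (ENNReal.inv_ne_top.2 h2)
    have hkey2 : (μ {ω | X ω = x₁})⁻¹ * (μ {ω | X ω = x₂})⁻¹ *
          (μ {ω | X ω = x₂ ∧ Y ω = y₁} * μ {ω | X ω = x₁ ∧ Y ω = y₂}) ≤
        (μ {ω | X ω = x₁})⁻¹ * (μ {ω | X ω = x₂})⁻¹ *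
          (μ {ω | X ω = x₁ ∧ Y ω = y₁} * μ {ω | X ω = x₂ ∧ Y ω = y₂}) := by
      calc (μ {ω | X ω = x₁})⁻¹ * (μ {ω | X ω = x₂})⁻¹ *
            (μ {ω | X ω = x₂ ∧ Y ω = y₁} * μ {ω | X ω = x₁ ∧ Y ω = y₂})
          = (μ {ω | X ω = x₁})⁻¹ * μ {ω | X ω = x₁ ∧ Y ω = y₂} *
            ((μ {ω | X ω = x₂})⁻¹ * μ {ω | X ω = x₂ ∧ Y ω = y₁}) := by ring
        _ ≤ (μ {ω | X ω = x₁})⁻¹ * μ {ω | X ω = x₁ ∧ Y ω = y₁} *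
            ((μ {ω | X ω = x₂})⁻¹ * μ {ω | X ω = x₂ ∧ Y ω = y₂}) := hkey
        _ = _ := by ring
    exact (ENNReal.mul_le_mul_iff_right hne hnt).mp hkey2
  · -- TP2 implies LR order
    intro hTP x₁ x₂ hx _ _ A B hA hB hAB
    have hpre : ∀ (x : ℝ) (E : Set ℝ), Y ⁻¹' E ∩ {ω | X ω = x} = {ω | X ω = x ∧ Y ω ∈ E} := by
      intro x E; ext ω; simp [mem_preimage, and_comm]
    simp only [Measure.smul_apply, smul_eq_mul, Measure.map_apply hY hA,
      Measure.map_apply hY hB, Measure.restrict_apply (hY hA),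
      Measure.restrict_apply (hY hB), hpre]
    have core : μ {ω | X ω = x₁ ∧ Y ω ∈ B} * μ {ω | X ω = x₂ ∧ Y ω ∈ A} ≤
        μ {ω | X ω = x₁ ∧ Y ω ∈ A} * μ {ω | X ω = x₂ ∧ Y ω ∈ B} := by
      rw [key x₁ B, key x₂ A, key x₁ A, key x₂ B]
      calc (∑' b : ↥(B ∩ T), μ {ω | X ω = x₁ ∧ Y ω = (b : ℝ)}) *
            (∑' a : ↥(A ∩ T), μ {ω | X ω = x₂ ∧ Y ω = (a : ℝ)})
          = ∑' (b : ↥(B ∩ T)) (a : ↥(A ∩ T)),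
              μ {ω | X ω = x₁ ∧ Y ω = (b : ℝ)} * μ {ω | X ω = x₂ ∧ Y ω = (a : ℝ)} := by
            rw [← ENNReal.tsum_mul_right]
            exact tsum_congr fun b => (ENNReal.tsum_mul_left).symm
        _ = ∑' (a : ↥(A ∩ T)) (b : ↥(B ∩ T)),
              μ {ω | X ω = x₁ ∧ Y ω = (b : ℝ)} * μ {ω | X ω = x₂ ∧ Y ω = (a : ℝ)} :=
            ENNReal.tsum_comm
        _ ≤ ∑' (a : ↥(A ∩ T)) (b : ↥(B ∩ T)),
              μ {ω | X ω = x₁ ∧ Y ω = (a : ℝ)} * μ {ω | X ω = x₂ ∧ Y ω = (b : ℝ)} := by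
            refine ENNReal.tsum_le_tsum fun a => ENNReal.tsum_le_tsum fun b => ?_
            have hab : (a : ℝ) ≤ (b : ℝ) := hAB a a.2.1 b b.2.1
            rcases hab.lt_or_eq with hlt | heq
            · have h := hTP x₁ x₂ a b hx hlt
              calc μ {ω | X ω = x₁ ∧ Y ω = (b : ℝ)} * μ {ω | X ω = x₂ ∧ Y ω = (a : ℝ)}
                  = μ {ω | X ω = x₂ ∧ Y ω = (a : ℝ)} * μ {ω | X ω = x₁ ∧ Y ω = (b : ℝ)} :=
                    mul_comm _ _
                _ ≤ _ := h
            · rw [heq, mul_comm]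
        _ = _ := by
            rw [← ENNReal.tsum_mul_right]
            exact tsum_congr fun a => ENNReal.tsum_mul_left
    calc (μ {ω | X ω = x₁})⁻¹ * μ {ω | X ω = x₁ ∧ Y ω ∈ B} *
          ((μ {ω | X ω = x₂})⁻¹ * μ {ω | X ω = x₂ ∧ Y ω ∈ A})
        = (μ {ω | X ω = x₁})⁻¹ * (μ {ω | X ω = x₂})⁻¹ *
          (μ {ω | X ω = x₁ ∧ Y ω ∈ B} * μ {ω | X ω = x₂ ∧ Y ω ∈ A}) := by ring
      _ ≤ (μ {ω | X ω = x₁})⁻¹ * (μ {ω | X ω = x₂})⁻¹ *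
          (μ {ω | X ω = x₁ ∧ Y ω ∈ A} * μ {ω | X ω = x₂ ∧ Y ω ∈ B}) := mul_le_mul_right core _
      _ = _ := by ring
end
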